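/- arXiv:2206.08860 — 11 statements merged into one kernel-verified Lean document; each statement's English description precedes it below -/
import Mathlib

section
/- Let G be a finite simple graph and let x, y be vertices of G at graph distance d such that there is exactly one path of length d in G joining x and y. Then q(G) ≥ d + 1. -/
open Matrix

/-- `SOfGraph G` is the set of real symmetric matrices whose off-diagonal zero
pattern is described by the graph `G` (diagonal entries unrestricted). -/
def SOfGraph {V : Type*} [Fintype V] [DecidableEq V] (G : SimpleGraph V) :
    Set (Matrix V V ℝ) :=
  {A | A.IsSymm ∧ ∀ i j : V, i ≠ j → (A i j ≠ 0 ↔ G.Adj i j)}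

/-- `qGraph G` is the minimum number of distinct eigenvalues over matrices in `SOfGraph G`. -/
noncomputable def qGraph {V : Type*} [Fintype V] [DecidableEq V] (G : SimpleGraph V) : ℕ :=
  sInf ((fun A => (spectrum ℝ A).ncard) '' SOfGraph G)

/-- Eccentricity of a vertex: maximum graph distance to any vertex. -/
noncomputable def graphEccent {V : Type*} [Fintype V] (G : SimpleGraph V) (v : V) : ℕ :=
  Finset.univ.sup fun w => G.dist v w

/-- Double-ended candle `G_k` on `2k` vertices: vertex `i` lies in level `(i+1)/2`,
so level `0` and level `k` have one vertex each and intermediate levels have two;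
two vertices are adjacent iff they lie in consecutive levels. -/
def doubleCandle (k : ℕ) : SimpleGraph (Fin (2 * k)) :=
  SimpleGraph.fromRel fun a b => (a.val + 1) / 2 + 1 = (b.val + 1) / 2

/-- Single-ended candle `G'_k` on `2k+1` vertices: vertex `i` lies in level `(i+1)/2`,
so level `0` has one vertex and levels `1,…,k` have two vertices each; two distinct
vertices are adjacent iff they lie in consecutive levels or both lie in level `k`. -/
def singleCandle (k : ℕ) : SimpleGraph (Fin (2 * k + 1)) :=
  SimpleGraph.fromRel fun a b =>
    (a.val + 1) / 2 + 1 = (b.val + 1) / 2 ∨ ((a.val + 1) / 2 = k ∧ (b.val + 1) / 2 = k)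

open Polynomial in
private lemma card_spectrum_of_pow_entries {V : Type*} [Fintype V] [DecidableEq V]
    (A : Matrix V V ℝ) (hH : A.IsHermitian) {d : ℕ} (x y : V)
    (hzero : ∀ k < d, (A ^ k) x y = 0) (hne : (A ^ d) x y ≠ 0) :
    d + 1 ≤ (spectrum ℝ A).ncard := by
  by_contra hlt
  push_neg at hlt
  have hfin : (spectrum ℝ A).Finite := Matrix.finite_spectrum A
  set t : Finset ℝ := hfin.toFinset with ht
  have htcard : t.card ≤ d := by
    have h := Set.ncard_eq_toFinset_card _ hfin
    rw [← ht] at h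
    omega
  set p : ℝ[X] := ∏ μ ∈ t, (X - C μ) with hp
  have hmonic : p.Monic := monic_prod_of_monic _ _ fun μ _ => monic_X_sub_C μ
  have hdeg : p.natDegree = t.card := by
    rw [hp, natDegree_prod_of_monic _ _ fun μ _ => monic_X_sub_C μ]
    simp
  set U : Matrix V V ℝ := (hH.eigenvectorUnitary : Matrix V V ℝ) with hUdef
  have hU1 : star U * U = 1 := Matrix.mem_unitaryGroup_iff'.mp hH.eigenvectorUnitary.2
  have hU2 : U * star U = 1 := Matrix.mem_unitaryGroup_iff.mp hH.eigenvectorUnitary.2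
  let f : Matrix V V ℝ →ₐ[ℝ] Matrix V V ℝ :=
  { toFun := fun M => star U * M * U
    map_one' := by show star U * 1 * U = 1; rw [mul_one, hU1]
    map_mul' := fun M N => by
      show star U * (M * N) * U = star U * M * U * (star U * N * U)
      rw [show star U * M * U * (star U * N * U) = star U * (M * (U * star U) * N) * U by
        noncomm_ring, hU2, mul_one]
    map_zero' := by simp
    map_add' := fun M N => by
      show star U * (M + N) * U = star U * M * U + star U * N * U
      noncomm_ring
    commutes' := fun r => by
      show star U * algebraMap ℝ _ r * U = algebraMap ℝ _ r
      simp only [Algebra.algebraMap_eq_smul_one]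
      rw [mul_smul_comm, mul_one, smul_mul_assoc, hU1] }
  have hfA : f A = Matrix.diagonal hH.eigenvalues := by
    show star U * A * U = _
    have hcd := hH.conjStarAlgAut_star_eigenvectorUnitary
    rw [Unitary.conjStarAlgAut_star_apply] at hcd
    rw [hUdef, hcd]
    simp [RCLike.ofReal_real_eq_id, Function.comp_def]
  have hvp : Polynomial.aeval (hH.eigenvalues : V → ℝ) p = 0 := by
    funext i
    have h1 : Polynomial.aeval (hH.eigenvalues : V → ℝ) p i
        = Polynomial.aeval (hH.eigenvalues i) p :=
      (aeval_algHom_apply (Pi.evalAlgHom ℝ (fun _ => ℝ) i) _ p).symm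
    rw [Pi.zero_apply, h1, Polynomial.coe_aeval_eq_eval, hp, Polynomial.eval_prod]
    refine Finset.prod_eq_zero (i := hH.eigenvalues i) ?_ (by simp)
    exact hfin.mem_toFinset.mpr (hH.eigenvalues_mem_spectrum_real i)
  have hannD : Polynomial.aeval (f A) p = 0 := by
    rw [hfA, show Matrix.diagonal hH.eigenvalues = Matrix.diagonalAlgHom ℝ hH.eigenvalues from rfl,
      aeval_algHom_apply, hvp, map_zero]
  have hann : Polynomial.aeval A p = 0 := by
    have h0 : f (Polynomial.aeval A p) = 0 := by
      rw [← aeval_algHom_apply]; exact hannD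
    have h1 : Polynomial.aeval A p = U * (f (Polynomial.aeval A p)) * star U := by
      show Polynomial.aeval A p = U * (star U * Polynomial.aeval A p * U) * star U
      rw [show U * (star U * Polynomial.aeval A p * U) * star U
          = (U * star U) * Polynomial.aeval A p * (U * star U) by noncomm_ring,
        hU2, one_mul, mul_one]
    rw [h0, mul_zero, zero_mul] at h1
    exact h1
  set r : ℝ[X] := (X : ℝ[X]) ^ d %ₘ p with hr
  have hAd : A ^ d = Polynomial.aeval A r := by
    conv_lhs => rw [show A ^ d = Polynomial.aeval A ((X : ℝ[X]) ^ d) by simp]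
    conv_lhs => rw [← modByMonic_add_div ((X : ℝ[X]) ^ d) p]
    rw [map_add, _root_.map_mul, hann, zero_mul, add_zero]
  have hentry : (Polynomial.aeval A r) x y = 0 := by
    rcases eq_or_ne r 0 with h0 | h0
    · simp [h0]
    have hrd : r.natDegree < d := by
      have h1 := Polynomial.degree_modByMonic_lt ((X : ℝ[X]) ^ d) hmonic
      have h2 : r.natDegree < p.natDegree := Polynomial.natDegree_lt_natDegree h0 h1
      omega
    rw [Polynomial.aeval_eq_sum_range (x := A), Matrix.sum_apply]
    apply Finset.sum_eq_zero
    intro i hi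
    rw [Matrix.smul_apply, hzero i (by simp at hi; omega), smul_zero]
  exact hne (hAd ▸ hentry)

section GraphLemmas

variable {V : Type*} (G : SimpleGraph V)

/-- If every walk from `x` to `y` has length greater than `k`, then the `(x,y)` entry of
`A ^ k` vanishes, for any matrix `A` whose off-diagonal support is contained in `G`. -/
lemma pow_apply_eq_zero_of_no_short_walk [Fintype V] [DecidableEq V]
    (A : Matrix V V ℝ) (hA : ∀ i j : V, i ≠ j → A i j ≠ 0 → G.Adj i j) :
    ∀ (k : ℕ) (x y : V), (∀ w : G.Walk x y, k < w.length) → (A ^ k) x y = 0 := by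
  intro k
  induction k with
  | zero =>
    intro x y h
    have hxy : x ≠ y := by
      rintro rfl
      simpa using h SimpleGraph.Walk.nil
    simp [Matrix.one_apply_ne hxy]
  | succ k ih =>
    intro x y h
    rw [pow_succ', Matrix.mul_apply]
    apply Finset.sum_eq_zero
    intro z _
    by_cases hz : A x z = 0
    · simp [hz]
    by_cases hzx : z = x
    · subst hzx
      rw [ih z y (fun w => Nat.lt_of_succ_lt (h w)), mul_zero]
    · have hadj : G.Adj x z := hA x z (fun he => hzx he.symm) hz
      have : ∀ w : G.Walk z y, k < w.length := by
        intro w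
        have := h (SimpleGraph.Walk.cons hadj w)
        simpa [Nat.succ_lt_succ_iff] using this
      rw [ih z y this, mul_zero]

/-- A walk whose length equals the distance between its endpoints is a path. -/
lemma isPath_of_length_eq_dist [DecidableEq V] {x y : V} (w : G.Walk x y) (h : w.length = G.dist x y) :
    w.IsPath := by
  induction w with
  | nil => exact SimpleGraph.Walk.IsPath.nil
  | @cons u v z h' p ih =>
    rw [SimpleGraph.Walk.length_cons] at h
    have hreach : G.Reachable v z := ⟨p⟩
    have hdle : G.dist v z ≤ p.length := SimpleGraph.dist_le p
    have h1 : G.dist u z ≤ G.dist v z + 1 := by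
      obtain ⟨q, hq⟩ := hreach.exists_walk_length_eq_dist
      simpa [hq] using SimpleGraph.dist_le (SimpleGraph.Walk.cons h' q)
    have hp : p.length = G.dist v z := by omega
    have hppath := ih hp
    have hu : u ∉ p.support := by
      intro hu
      have h2 := SimpleGraph.Walk.length_dropUntil_le p hu
      have h3 := SimpleGraph.dist_le (p.dropUntil u hu)
      omega
    exact hppath.cons hu

/-- If `x, y` are at distance `d` and there is a unique path of length `d` from `x` to `y`,
then the `(x,y)` entry of `A ^ d` does not vanish for `A ∈ S(G)`. -/
lemma pow_apply_ne_zero_of_unique_path [Fintype V] [DecidableEq V]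
    (A : Matrix V V ℝ) (hA : ∀ i j : V, i ≠ j → (A i j ≠ 0 ↔ G.Adj i j)) :
    ∀ (d : ℕ) (x y : V), G.dist x y = d →
      (∃! p : G.Walk x y, p.IsPath ∧ p.length = d) → (A ^ d) x y ≠ 0 := by
  have hA' : ∀ i j : V, i ≠ j → A i j ≠ 0 → G.Adj i j := fun i j hij => (hA i j hij).mp
  intro d
  induction d with
  | zero =>
    intro x y _ huniq
    obtain ⟨w, ⟨_, hlen⟩, _⟩ := huniq
    have : x = y := SimpleGraph.Walk.eq_of_length_eq_zero hlen
    subst this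
    simp
  | succ d ih =>
    intro x y hdist huniq
    obtain ⟨w0, ⟨hp0, hl0⟩, hu0⟩ := huniq
    cases w0 with
    | nil => simp at hl0
    | @cons _ u _ hxu p =>
      rw [SimpleGraph.Walk.length_cons] at hl0
      have hplen : p.length = d := by omega
      have hppath : p.IsPath := hp0.of_cons
      have hreach : G.Reachable u y := ⟨p⟩
      have hdu : G.dist u y = d := by
        have h1 : G.dist u y ≤ p.length := SimpleGraph.dist_le p
        have h2 : G.dist x y ≤ G.dist u y + 1 := by
          obtain ⟨q, hq⟩ := hreach.exists_walk_length_eq_dist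
          simpa [hq] using SimpleGraph.dist_le (SimpleGraph.Walk.cons hxu q)
        omega
      -- uniqueness of the path of length d from u to y
      have huuniq : ∃! q : G.Walk u y, q.IsPath ∧ q.length = d := by
        refine ⟨p, ⟨hppath, hplen⟩, ?_⟩
        intro q ⟨hqpath, hqlen⟩
        have hxq : x ∉ q.support := by
          intro hx
          have h2 := SimpleGraph.Walk.length_dropUntil_le q hx
          have h3 := SimpleGraph.dist_le (q.dropUntil x hx)
          omega
        have hcons : SimpleGraph.Walk.cons hxu q = SimpleGraph.Walk.cons hxu p :=
          hu0 _ ⟨hqpath.cons hxq, by simp [hqlen]⟩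
        simpa using hcons
      have ihu : (A ^ d) u y ≠ 0 := ih u y hdu huuniq
      have hAxu : A x u ≠ 0 := (hA x u (G.ne_of_adj hxu)).mpr hxu
      rw [pow_succ', Matrix.mul_apply]
      rw [Finset.sum_eq_single u ?h1 (by simp)]
      · exact mul_ne_zero hAxu ihu
      intro z _ hzu
      by_cases hz : A x z = 0
      · simp [hz]
      by_cases hzx : z = x
      · subst hzx
        rw [pow_apply_eq_zero_of_no_short_walk G A hA' d z y
          (fun w => by have := SimpleGraph.dist_le w; omega), mul_zero]
      · have hadj : G.Adj x z := hA' x z (fun he => hzx he.symm) hz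
        rw [pow_apply_eq_zero_of_no_short_walk G A hA' d z y ?hw, mul_zero]
        intro w
        by_contra hw
        push_neg at hw
        have hdz1 : G.dist z y ≤ w.length := SimpleGraph.dist_le w
        have hrz : G.Reachable z y := ⟨w⟩
        have hdz2 : G.dist x y ≤ G.dist z y + 1 := by
          obtain ⟨q, hq⟩ := hrz.exists_walk_length_eq_dist
          simpa [hq] using SimpleGraph.dist_le (SimpleGraph.Walk.cons hadj q)
        have hdz : G.dist z y = d := by omega
        obtain ⟨q, hq⟩ := hrz.exists_walk_length_eq_dist
        rw [hdz] at hq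
        have hcq : (SimpleGraph.Walk.cons hadj q).IsPath := by
          apply isPath_of_length_eq_dist
          simp [hq, hdist]
        have heq : SimpleGraph.Walk.cons hadj q = SimpleGraph.Walk.cons hxu p :=
          hu0 _ ⟨hcq, by simp [hq]⟩
        have hsup := congrArg SimpleGraph.Walk.support heq
        rw [SimpleGraph.Walk.support_cons, SimpleGraph.Walk.support_cons] at hsup
        have : q.support = p.support := by simpa using hsup
        have : z = u := by
          have h1 := SimpleGraph.Walk.support_eq_cons q
          have h2 := SimpleGraph.Walk.support_eq_cons p
          rw [this, h2] at h1
          exact (List.cons.injEq _ _ _ _ ▸ h1).1.symm ▸ rfl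
        exact hzu this

end GraphLemmas

/-- If vertices `x, y` of a graph `G` are at distance `d`, and there is exactly one
path of length `d` between `x` and `y`, then `q(G) ≥ d + 1`. -/
theorem stmt0 {V : Type*} [Fintype V] [DecidableEq V] (G : SimpleGraph V)
    (x y : V) (d : ℕ) (hdist : G.dist x y = d)
    (huniq : ∃! p : G.Walk x y, p.IsPath ∧ p.length = d) :
    d + 1 ≤ qGraph G := by
  classical
  have key : ∀ A ∈ SOfGraph G, d + 1 ≤ (spectrum ℝ A).ncard := by
    rintro A ⟨hsymm, hadj⟩
    have hH : A.IsHermitian := by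
      rw [Matrix.IsHermitian, Matrix.conjTranspose_eq_transpose_of_trivial]
      exact hsymm
    refine card_spectrum_of_pow_entries A hH x y ?_ ?_
    · intro k hk
      refine pow_apply_eq_zero_of_no_short_walk G A
        (fun i j hij h => (hadj i j hij).mp h) k x y ?_
      intro w
      have := SimpleGraph.dist_le w
      omega
    · exact pow_apply_ne_zero_of_unique_path G A hadj d x y hdist huniq
  rw [qGraph]
  apply le_csInf
  · refine Set.Nonempty.image _ ⟨Matrix.of fun i j => if G.Adj i j then (1 : ℝ) else 0, ?_, ?_⟩
    · rw [Matrix.IsSymm]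
      ext i j
      simp only [Matrix.transpose_apply, Matrix.of_apply]
      rw [SimpleGraph.adj_comm]
    · intro i j hij
      by_cases h : G.Adj i j <;> simp [h]
  · rintro n ⟨A, hA, rfl⟩
    exact key A hA
end

section
/- Let G be a finite simple graph with q(G) = 2. If x, u, y are vertices with x adjacent to u and u adjacent to y and x ≠ y, then either x is adjacent to y, or there exists a vertex v ≠ u with x adjacent to v and v adjacent to y. -/
open Matrix

/-- If `q(G) = 2` and `x u y` is a path of length `2` with `x ≠ y`, then either `x`
and `y` are adjacent, or there is another path `x v y` with `v ≠ u`. -/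
theorem stmt1 {V : Type*} [Fintype V] [DecidableEq V] (G : SimpleGraph V)
    (hq : qGraph G = 2) (x u y : V) (hxu : G.Adj x u) (huy : G.Adj u y) (hxy : x ≠ y) :
    G.Adj x y ∨ ∃ v, v ≠ u ∧ G.Adj x v ∧ G.Adj v y := by
  by_contra hcon
  push_neg at hcon
  obtain ⟨hnxy, hno⟩ := hcon
  -- extract a matrix achieving q(G) = 2
  have hne : ((fun A => (spectrum ℝ A).ncard) '' SOfGraph G).Nonempty := by
    by_contra h
    rw [Set.not_nonempty_iff_eq_empty] at h
    rw [qGraph, h, Nat.sInf_empty] at hq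
    exact two_ne_zero hq.symm
  have hmem := Nat.sInf_mem hne
  rw [qGraph] at hq
  rw [hq] at hmem
  obtain ⟨A, ⟨hsymm, hadj⟩, hcard⟩ := hmem
  have hH : A.IsHermitian := by
    rw [Matrix.IsHermitian, Matrix.conjTranspose_eq_transpose_of_trivial]; exact hsymm
  obtain ⟨lam, mu, hlm, hspec⟩ := Set.ncard_eq_two.mp hcard
  have hzero : ∀ i, (hH.eigenvalues i - lam) * (hH.eigenvalues i - mu) = 0 := by
    intro i
    have h := hH.eigenvalues_mem_spectrum_real i
    rw [hspec, Set.mem_insert_iff, Set.mem_singleton_iff] at h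
    rcases h with h | h <;> simp [h]
  -- key identity: (A - λ·1)(A - μ·1) = 0
  set U : Matrix V V ℝ := (hH.eigenvectorUnitary : Matrix V V ℝ) with hUdef
  have hU1 : U * star U = 1 := Matrix.mem_unitaryGroup_iff.mp hH.eigenvectorUnitary.2
  have hU2 : star U * U = 1 := Matrix.mem_unitaryGroup_iff'.mp hH.eigenvectorUnitary.2
  set D : Matrix V V ℝ := Matrix.diagonal (RCLike.ofReal ∘ hH.eigenvalues) with hDdef
  have hst : A = U * D * star U := hH.spectral_theorem
  have hUc : ∀ c : ℝ, U * (c • (1 : Matrix V V ℝ)) * star U = c • 1 := by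
    intro c
    rw [Matrix.mul_smul, mul_one, Matrix.smul_mul, hU1]
  have hfac : ∀ c : ℝ, A - c • 1 = U * (D - c • 1) * star U := by
    intro c
    rw [Matrix.mul_sub, Matrix.sub_mul, ← hst, hUc]
  have hDz : (D - lam • 1) * (D - mu • 1) = 0 := by
    rw [hDdef, Matrix.smul_one_eq_diagonal, Matrix.smul_one_eq_diagonal,
      Matrix.diagonal_sub, Matrix.diagonal_sub, Matrix.diagonal_mul_diagonal]
    have hfun : (fun i => ((RCLike.ofReal ∘ hH.eigenvalues) i - lam) *
        ((RCLike.ofReal ∘ hH.eigenvalues) i - mu)) = fun _ => (0 : ℝ) := by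
      funext i; simpa using hzero i
    rw [hfun]
    simp [Matrix.diagonal_zero]
  have key : (A - lam • 1) * (A - mu • 1) = 0 := by
    rw [hfac lam, hfac mu]
    calc U * (D - lam • 1) * star U * (U * (D - mu • 1) * star U)
        = U * (D - lam • 1) * (star U * U) * (D - mu • 1) * star U := by
          simp only [Matrix.mul_assoc]
      _ = U * ((D - lam • 1) * (D - mu • 1)) * star U := by
          rw [hU2, mul_one]; simp only [Matrix.mul_assoc]
      _ = 0 := by rw [hDz, mul_zero, zero_mul]
  -- entry (x, y) of the key identity
  have hent : ∑ v, (A - lam • 1) x v * (A - mu • 1) v y = 0 := by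
    have := congrFun (congrFun key x) y
    rwa [Matrix.mul_apply] at this
  have hAxy : A x y = 0 := by
    by_contra h
    exact hnxy ((hadj x y hxy).mp h)
  have hxu' : x ≠ u := hxu.ne
  have huy' : u ≠ y := huy.ne
  have hsingle : ∀ v ∈ Finset.univ, v ≠ u → (A - lam • 1) x v * (A - mu • 1) v y = 0 := by
    intro v _ hvu
    by_cases hvx : v = x
    · subst hvx
      have : (A - mu • 1) v y = A v y := by
        simp [Matrix.sub_apply, Matrix.one_apply_ne hxy]
      rw [this, hAxy, mul_zero]
    · by_cases hvy : v = y
      · subst hvy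
        have : (A - lam • 1) x v = A x v := by
          simp [Matrix.sub_apply, Matrix.one_apply_ne hxy]
        rw [this, hAxy, zero_mul]
      · have h1 : (A - lam • 1) x v = A x v := by
          simp [Matrix.sub_apply, Matrix.one_apply_ne (Ne.symm hvx)]
        have h2 : (A - mu • 1) v y = A v y := by
          simp [Matrix.sub_apply, Matrix.one_apply_ne hvy]
        rw [h1, h2]
        by_cases hx : A x v = 0
        · rw [hx, zero_mul]
        · by_cases hy : A v y = 0
          · rw [hy, mul_zero]
          · exact absurd ((hadj v y hvy).mp hy)
              (hno v hvu ((hadj x v (Ne.symm hvx)).mp hx))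
  have hsum := Finset.sum_eq_single_of_mem u (Finset.mem_univ u) hsingle
  rw [hsum] at hent
  have h1 : (A - lam • 1) x u = A x u := by
    simp [Matrix.sub_apply, Matrix.one_apply_ne hxu']
  have h2 : (A - mu • 1) u y = A u y := by
    simp [Matrix.sub_apply, Matrix.one_apply_ne huy']
  rw [h1, h2] at hent
  have hAxu : A x u ≠ 0 := (hadj x u hxu').mpr hxu
  have hAuy : A u y ≠ 0 := (hadj u y huy').mpr huy
  exact (mul_ne_zero hAxu hAuy) hent
end

section
/- If G is a connected finite simple graph on at least 3 vertices with q(G) = 2, then G is 2-connected (i.e., G has no cut vertex: deleting any single vertex leaves a connected graph on at least 2 vertices). -/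
open Matrix

/-- A symmetric real matrix with exactly two distinct eigenvalues satisfies a quadratic
matrix equation, so off-diagonal entries of `A * A` are proportional to those of `A`. -/
private lemma matrix_key {V : Type*} [Fintype V] [DecidableEq V] (A : Matrix V V ℝ)
    (hA : A.IsHermitian) (h2 : (spectrum ℝ A).ncard = 2) :
    ∃ c : ℝ, ∀ i j : V, i ≠ j → (A * A) i j = c * A i j := by
  obtain ⟨l₁, l₂, hne, hs⟩ := Set.ncard_eq_two.mp h2
  set U : Matrix V V ℝ := (hA.eigenvectorUnitary : Matrix V V ℝ) with hUdef
  set d : V → ℝ := RCLike.ofReal ∘ hA.eigenvalues with hddef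
  have hUU : U * star U = 1 := Matrix.mem_unitaryGroup_iff.mp hA.eigenvectorUnitary.2
  have hUU' : star U * U = 1 := Matrix.mem_unitaryGroup_iff'.mp hA.eigenvectorUnitary.2
  have hspec : A = U * diagonal d * star U := hA.spectral_theorem
  have hdiag : ∀ i, (d i - l₁) * (d i - l₂) = 0 := by
    intro i
    have : hA.eigenvalues i ∈ spectrum ℝ A := hA.eigenvalues_mem_spectrum_real i
    rw [hs] at this
    have hd : d i = hA.eigenvalues i := by simp [hddef, RCLike.ofReal_real_eq_id]
    rcases this with h | h <;> rw [hd, h] <;> ring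
  have hAl : ∀ l : ℝ, A - l • 1 = U * (diagonal d - l • 1) * star U := by
    intro l
    rw [mul_sub, sub_mul, Matrix.mul_smul, mul_one, Matrix.smul_mul, hUU, ← hspec]
  have key : (A - l₁ • 1) * (A - l₂ • 1) = 0 := by
    rw [hAl, hAl]
    calc U * (diagonal d - l₁ • 1) * star U * (U * (diagonal d - l₂ • 1) * star U)
        = U * ((diagonal d - l₁ • 1) * (star U * U) * (diagonal d - l₂ • 1)) * star U := by
          noncomm_ring
      _ = 0 := by
          rw [hUU', mul_one]
          have : (diagonal d - l₁ • 1) * (diagonal d - l₂ • 1) = 0 := by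
            rw [Matrix.smul_one_eq_diagonal, Matrix.smul_one_eq_diagonal, Matrix.diagonal_sub,
              Matrix.diagonal_sub, Matrix.diagonal_mul_diagonal]
            rw [show (fun i => (d i - l₁) * (d i - l₂)) = fun _ => (0:ℝ) from funext hdiag]
            exact Matrix.diagonal_zero
          rw [this, mul_zero, zero_mul]
  have key2 : A * A = (l₁ + l₂) • A - (l₁ * l₂) • 1 := by
    have expand : (A - l₁ • 1) * (A - l₂ • 1)
        = A * A - (l₁ + l₂) • A + (l₁ * l₂) • 1 := by
      simp only [sub_mul, mul_sub, Matrix.smul_mul, Matrix.mul_smul, one_mul, mul_one,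
        smul_smul, add_smul, mul_comm l₂ l₁]
      abel
    rw [expand] at key
    linear_combination (norm := abel) key
  refine ⟨l₁ + l₂, fun i j hij => ?_⟩
  rw [key2]
  simp [Matrix.sub_apply, Matrix.one_apply_ne hij]

/-- From any walk to `v` starting at `a ≠ v` one can extract a neighbour `i` of `v`
which is reachable from `a` in the graph induced on the complement of `v`. -/
private lemma reach_nbr {V : Type*} [Fintype V] [DecidableEq V] (G : SimpleGraph V) (v : V) :
    ∀ {a b : V} (_ : G.Walk a b), b = v → ∀ ha : a ∈ {w : V | w ≠ v},
      ∃ i, ∃ hi : i ∈ {w : V | w ≠ v},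
      G.Adj i v ∧ (G.induce {w : V | w ≠ v}).Reachable ⟨a, ha⟩ ⟨i, hi⟩ := by
  intro a b p
  induction p with
  | nil => intro hb ha; exact absurd hb ha
  | @cons a c _ h q ih =>
    intro hb ha
    by_cases hc : c = v
    · subst hc; subst hb
      exact ⟨a, ha, h, SimpleGraph.Reachable.refl _⟩
    · obtain ⟨i, hi, hadj, hreach⟩ := ih hb hc
      refine ⟨i, hi, hadj, SimpleGraph.Adj.reachable ?_ |>.trans hreach⟩
      simp only [SimpleGraph.comap_adj, Function.Embedding.coe_subtype]
      exact h

/-- A connected graph on at least `3` vertices with `q(G) = 2` is `2`-connected: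
deleting any single vertex leaves a connected graph on at least `2` vertices. -/
theorem stmt2 {V : Type*} [Fintype V] [DecidableEq V] (G : SimpleGraph V)
    (hconn : G.Connected) (hn : 3 ≤ Fintype.card V) (hq : qGraph G = 2) :
    ∀ v : V, (G.induce {w : V | w ≠ v}).Connected ∧ 2 ≤ Fintype.card {w : V | w ≠ v} := by
  classical
  have hSne : (SOfGraph G).Nonempty := by
    refine ⟨fun i j => if G.Adj i j then 1 else 0, ?_, ?_⟩
    · show Matrix.transpose _ = _
      ext i j
      show (if G.Adj j i then (1:ℝ) else 0) = if G.Adj i j then 1 else 0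
      rw [SimpleGraph.adj_comm]
    · intro i j hij
      by_cases h : G.Adj i j <;> simp [h]
  have h2mem : 2 ∈ (fun A => (spectrum ℝ A).ncard) '' SOfGraph G := by
    rw [← hq]; exact Nat.sInf_mem (hSne.image _)
  obtain ⟨A, ⟨hsymm, hpat⟩, hcard⟩ := h2mem
  have hherm : A.IsHermitian := by
    rw [Matrix.IsHermitian, Matrix.conjTranspose_eq_transpose_of_trivial]; exact hsymm
  obtain ⟨c, hc⟩ := matrix_key A hherm hcard
  intro v
  have hcard2 : 2 ≤ Fintype.card {w : V | w ≠ v} := by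
    have e : Fintype.card {w : V | w ≠ v} = Fintype.card {x : V // ¬ x = v} :=
      Fintype.card_congr (Equiv.refl _)
    rw [e, Fintype.card_subtype_compl, Fintype.card_subtype_eq]
    omega
  refine ⟨?_, hcard2⟩
  have hne' : Nonempty {w : V | w ≠ v} := by
    rw [← Fintype.card_pos_iff]; omega
  rw [SimpleGraph.connected_iff]
  refine ⟨fun x y => ?_, hne'⟩
  by_contra hxy
  obtain ⟨p⟩ := hconn.preconnected x.1 v
  obtain ⟨i, hi, hiadj, hir⟩ := reach_nbr G v p rfl x.2
  obtain ⟨q⟩ := hconn.preconnected y.1 v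
  obtain ⟨j, hj, hjadj, hjr⟩ := reach_nbr G v q rfl y.2
  have hxi : (G.induce {w : V | w ≠ v}).Reachable x ⟨i, hi⟩ := hir
  have hyj : (G.induce {w : V | w ≠ v}).Reachable y ⟨j, hj⟩ := hjr
  have hij : i ≠ j := by
    rintro rfl
    exact hxy (hxi.trans hyj.symm)
  have hreach2 : ∀ k, k ≠ v → G.Adj i k → G.Adj k j → False := by
    intro k hk h1 h2
    have a1 : (G.induce {w : V | w ≠ v}).Adj ⟨i, hi⟩ ⟨k, hk⟩ := by
      simp only [SimpleGraph.comap_adj, Function.Embedding.coe_subtype]; exact h1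
    have a2 : (G.induce {w : V | w ≠ v}).Adj ⟨k, hk⟩ ⟨j, hj⟩ := by
      simp only [SimpleGraph.comap_adj, Function.Embedding.coe_subtype]; exact h2
    exact hxy (hxi.trans (a1.reachable.trans (a2.reachable.trans hyj.symm)))
  have hnadj : ¬ G.Adj i j := by
    intro h
    have a1 : (G.induce {w : V | w ≠ v}).Adj ⟨i, hi⟩ ⟨j, hj⟩ := by
      simp only [SimpleGraph.comap_adj, Function.Embedding.coe_subtype]; exact h
    exact hxy (hxi.trans (a1.reachable.trans hyj.symm))
  have hAij : A i j = 0 := by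
    by_contra h0
    exact hnadj ((hpat i j hij).mp h0)
  have hsum : (A * A) i j = A i v * A v j := by
    rw [Matrix.mul_apply]
    apply Finset.sum_eq_single
    · intro k _ hkv
      by_cases hki : k = i
      · subst hki; rw [hAij, mul_zero]
      by_cases hkj : k = j
      · subst hkj; rw [hAij, zero_mul]
      by_contra hne0
      obtain ⟨h1, h2⟩ := mul_ne_zero_iff.mp hne0
      exact hreach2 k hkv ((hpat i k (Ne.symm hki)).mp h1) ((hpat k j hkj).mp h2)
    · intro h; exact absurd (Finset.mem_univ v) h
  have hAiv : A i v ≠ 0 := (hpat i v hi).mpr hiadj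
  have hAvj : A v j ≠ 0 := (hpat v j (Ne.symm hj)).mpr hjadj.symm
  have hfinal : (A * A) i j = c * A i j := hc i j hij
  rw [hsum, hAij, mul_zero] at hfinal
  exact mul_ne_zero hAiv hAvj hfinal
end

section
/- Let G be a connected finite simple graph on n vertices with q(G) = 2. If S is an independent set of vertices of G (no two vertices of S are adjacent), then |S| ≤ ⌊n/2⌋. -/
open Matrix

/-- In a connected graph on `n` vertices with `q(G) = 2`, every independent set has
at most `⌊n/2⌋` vertices. -/
theorem stmt3 {V : Type*} [Fintype V] [DecidableEq V] (G : SimpleGraph V)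
    (hconn : G.Connected) (hq : qGraph G = 2)
    (S : Set V) (hS : ∀ x ∈ S, ∀ y ∈ S, x ≠ y → ¬ G.Adj x y) :
    S.ncard ≤ Fintype.card V / 2 := by
  classical
  -- extract a matrix achieving two distinct eigenvalues
  have hne : ((fun A : Matrix V V ℝ => (spectrum ℝ A).ncard) '' SOfGraph G).Nonempty := by
    by_contra h
    rw [Set.not_nonempty_iff_eq_empty] at h
    have h0 : qGraph G = 0 := by rw [qGraph, h]; simp
    omega
  have h2 : (2 : ℕ) ∈ (fun A : Matrix V V ℝ => (spectrum ℝ A).ncard) '' SOfGraph G := by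
    rw [← hq]; exact Nat.sInf_mem hne
  obtain ⟨A, hAmem, hcard⟩ := h2
  obtain ⟨hsym, hpat⟩ := hAmem
  simp only at hcard
  obtain ⟨l, m, hlm, hspec⟩ := Set.ncard_eq_two.mp hcard
  have hH : A.IsHermitian := by
    ext i j
    rw [Matrix.conjTranspose_apply, star_trivial]
    exact hsym.apply i j
  have hrange : spectrum ℝ A = Set.range hH.eigenvalues :=
    hH.spectrum_real_eq_range_eigenvalues
  -- the graph has at least two vertices
  have hcardV : 2 ≤ Fintype.card V := by
    have h1 : (spectrum ℝ A).ncard ≤ Fintype.card V := by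
      rw [hrange, ← Set.image_univ]
      calc (hH.eigenvalues '' Set.univ).ncard ≤ Set.univ.ncard :=
            Set.ncard_image_le Set.finite_univ
        _ = Fintype.card V := by rw [Set.ncard_univ, Nat.card_eq_fintype_card]
    omega
  -- every vertex has a neighbor
  have hnbr : ∀ v : V, ∃ w, G.Adj v w := by
    intro v
    obtain ⟨w, hw⟩ := Fintype.exists_ne_of_one_lt_card (by omega) v
    obtain ⟨p⟩ := hconn.preconnected v w
    cases p with
    | nil => exact absurd rfl hw
    | cons h q => exact ⟨_, h⟩
  -- eigenvalues are l or m
  set e := hH.eigenvalues with he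
  have hevals : ∀ i, e i = l ∨ e i = m := by
    intro i
    have h := hH.eigenvalues_mem_spectrum_real i
    rw [hspec] at h
    simpa using h
  set U : Matrix V V ℝ := (hH.eigenvectorUnitary : Matrix V V ℝ) with hUdef
  have hU1 : U * star U = 1 := Matrix.mem_unitaryGroup_iff.mp hH.eigenvectorUnitary.2
  have hU2 : star U * U = 1 := Matrix.mem_unitaryGroup_iff'.mp hH.eigenvectorUnitary.2
  have hdiagA : A = U * Matrix.diagonal e * star U := by
    have := hH.spectral_theorem
    rw [Unitary.conjStarAlgAut_apply] at this
    convert this using 3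
    all_goals rfl
  have hconj : ∀ c : ℝ, A - c • 1 = U * Matrix.diagonal (fun i => e i - c) * star U := by
    intro c
    have h1 : Matrix.diagonal (fun i => e i - c) =
        Matrix.diagonal e - c • (1 : Matrix V V ℝ) := by
      rw [Matrix.smul_one_eq_diagonal, ← Matrix.diagonal_sub]
    rw [h1, Matrix.mul_sub, Matrix.sub_mul, ← hdiagA, Matrix.mul_smul, Matrix.mul_one,
      Matrix.smul_mul, hU1]
  have key : (A - l • 1) * (A - m • (1 : Matrix V V ℝ)) = 0 := by
    rw [hconj l, hconj m]
    have hassoc : ∀ D1 D2 : Matrix V V ℝ,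
        (U * D1 * star U) * (U * D2 * star U) = U * (D1 * D2) * star U := by
      intro D1 D2
      rw [Matrix.mul_assoc (U * D1) (star U), ← Matrix.mul_assoc (star U) (U * D2),
        ← Matrix.mul_assoc (star U) U, hU2, Matrix.one_mul,
        ← Matrix.mul_assoc, Matrix.mul_assoc U D1 D2]
    rw [hassoc, Matrix.diagonal_mul_diagonal]
    have hz : (fun i => (e i - l) * (e i - m)) = fun _ => (0 : ℝ) := by
      funext i
      rcases hevals i with h | h <;> rw [h] <;> ring
    rw [hz, Matrix.diagonal_zero, Matrix.mul_zero, Matrix.zero_mul]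
  have hAA : A * A = (l + m) • A - (l * m) • (1 : Matrix V V ℝ) := by
    have h := key
    simp only [sub_mul, mul_sub, Matrix.mul_smul, Matrix.smul_mul, Matrix.mul_one,
      Matrix.one_mul, smul_smul] at h
    rw [sub_eq_zero] at h
    rw [sub_eq_iff_eq_add] at h
    rw [h]
    module
  -- A i j = 0 for i,j in S distinct
  have hzero : ∀ i ∈ S, ∀ j ∈ S, i ≠ j → A i j = 0 := by
    intro i hi j hj hij
    by_contra h
    exact hS i hi j hj hij ((hpat i j hij).mp h)
  -- entrywise identity off-diagonal in S
  have hsum0 : ∀ i ∈ S, ∀ j ∈ S, i ≠ j → ∑ k : V, A i k * A k j = 0 := by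
    intro i hi j hj hij
    have h : (A * A) i j = ((l + m) • A - (l * m) • (1 : Matrix V V ℝ)) i j := by
      rw [hAA]
    rw [Matrix.mul_apply] at h
    rw [h, Matrix.sub_apply, Matrix.smul_apply, Matrix.smul_apply,
      Matrix.one_apply_ne hij, hzero i hi j hj hij]
    simp
  haveI : Fintype ↥S := Fintype.ofFinite _
  haveI : Fintype ↥(Sᶜ) := Fintype.ofFinite _
  set M : Matrix ↥S ↥(Sᶜ) ℝ := Matrix.of (fun i k => A i.1 k.1) with hM
  -- off-diagonal entries of M * Mᵀ vanish
  have hoff : ∀ i j : ↥S, i ≠ j → (M * Mᵀ) i j = 0 := by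
    intro i j hij
    have hij' : (i : V) ≠ (j : V) := Subtype.coe_ne_coe.mpr hij
    have hsub := Finset.sum_subtype (p := fun x => x ∈ Sᶜ) (F := ‹Fintype ↥(Sᶜ)›)
      (Finset.univ.filter (fun x => x ∈ Sᶜ)) (fun x => by simp)
      (fun k => A i.1 k * A k j.1)
    have htot := Finset.sum_filter_add_sum_filter_not Finset.univ (fun x => x ∈ Sᶜ)
      (fun k => A i.1 k * A k j.1)
    have hrest : ∑ k ∈ Finset.univ.filter (fun x => ¬ x ∈ Sᶜ), A i.1 k * A k j.1 = 0 := by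
      apply Finset.sum_eq_zero
      intro k hk
      simp only [Finset.mem_filter, Set.mem_compl_iff, not_not] at hk
      by_cases hkj : k = j.1
      · subst hkj; rw [hzero i.1 i.2 j.1 j.2 hij', zero_mul]
      · rw [hzero k hk.2 j.1 j.2 hkj, mul_zero]
    have htotal := hsum0 i.1 i.2 j.1 j.2 hij'
    rw [Matrix.mul_apply]
    simp only [hM, Matrix.of_apply, Matrix.transpose_apply]
    calc ∑ k : ↥(Sᶜ), A i.1 k.1 * A j.1 k.1
        = ∑ k : ↥(Sᶜ), A i.1 k.1 * A k.1 j.1 :=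
          Finset.sum_congr rfl (fun k _ => by rw [hsym.apply k.1 j.1])
      _ = 0 := by rw [← hsub]; linarith
  -- diagonal entries of M * Mᵀ are nonzero
  have hdiagne : ∀ i : ↥S, (M * Mᵀ) i i ≠ 0 := by
    intro i
    obtain ⟨w, hw⟩ := hnbr i.1
    have hwS : w ∉ S := by
      intro hwm
      exact hS i.1 i.2 w hwm (G.ne_of_adj hw) hw
    have hAiw : A i.1 w ≠ 0 := (hpat i.1 w (G.ne_of_adj hw)).mpr hw
    have hpos : 0 < ∑ k : ↥(Sᶜ), A i.1 k.1 * A i.1 k.1 := by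
      apply Finset.sum_pos'
      · intro k _; exact mul_self_nonneg _
      · exact ⟨⟨w, hwS⟩, Finset.mem_univ _, mul_self_pos.mpr hAiw⟩
    rw [Matrix.mul_apply]
    simp only [hM, Matrix.of_apply, Matrix.transpose_apply]
    exact ne_of_gt hpos
  -- M * Mᵀ is an invertible diagonal matrix
  have hdiagM : M * Mᵀ = Matrix.diagonal (fun i => (M * Mᵀ) i i) := by
    ext i j
    by_cases h : i = j
    · subst h; rw [Matrix.diagonal_apply_eq]
    · rw [Matrix.diagonal_apply_ne _ h, hoff i j h]
  have hunit : IsUnit (M * Mᵀ) := by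
    rw [Matrix.isUnit_iff_isUnit_det, hdiagM, Matrix.det_diagonal, isUnit_iff_ne_zero]
    exact Finset.prod_ne_zero_iff.mpr (fun i _ => hdiagne i)
  have h1 : Fintype.card ↥S = (M * Mᵀ).rank := (Matrix.rank_of_isUnit _ hunit).symm
  have h2 : (M * Mᵀ).rank ≤ M.rank := Matrix.rank_mul_le_left M Mᵀ
  have h3 : M.rank ≤ Fintype.card ↥(Sᶜ) := Matrix.rank_le_card_width M
  have h4 : Fintype.card ↥(Sᶜ) = Fintype.card V - Fintype.card ↥S :=
    Fintype.card_compl_set S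
  have h6 : S.ncard = Fintype.card ↥S := by
    rw [← Nat.card_coe_set_eq, Nat.card_eq_fintype_card]
  omega
end

section
/- Let G be a connected finite simple graph on n ≥ 3 vertices with q(G) = 2, and let u_1, u_2, …, u_k be distinct vertices forming an independent set such that for every i ∈ {1, …, k} there exists j ≠ i with N(u_i) ∩ N(u_j) ≠ ∅. Then the union over all pairs i ≠ j of the sets N(u_i) ∩ N(u_j) has cardinality at least k. -/
open Matrix

lemma herm_quad {n : Type*} [Fintype n] [DecidableEq n] {A : Matrix n n ℝ}
    (hA : A.IsHermitian) {l m : ℝ}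
    (h : ∀ i, hA.eigenvalues i = l ∨ hA.eigenvalues i = m) :
    (A - l • 1) * (A - m • 1) = 0 := by
  set U : Matrix n n ℝ := (hA.eigenvectorUnitary : Matrix n n ℝ) with hU
  have hU1 : U * star U = 1 := Matrix.mem_unitaryGroup_iff.mp hA.eigenvectorUnitary.2
  have hU2 : star U * U = 1 := Matrix.mem_unitaryGroup_iff'.mp hA.eigenvectorUnitary.2
  have hst : A = U * Matrix.diagonal hA.eigenvalues * star U := by
    have := hA.spectral_theorem
    rwa [RCLike.ofReal_real_eq_id, Function.id_comp] at this
  have hsm : ∀ c : ℝ, c • (1 : Matrix n n ℝ) = Matrix.diagonal (fun _ => c) := by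
    intro c
    ext i j
    by_cases hij : i = j <;> simp [Matrix.one_apply, Matrix.diagonal_apply, hij]
  have conj : ∀ D1 D2 : Matrix n n ℝ,
      (U * D1 * star U) * (U * D2 * star U) = U * (D1 * D2) * star U := by
    intro D1 D2
    calc (U * D1 * star U) * (U * D2 * star U)
        = U * D1 * (star U * U) * D2 * star U := by simp only [Matrix.mul_assoc]
      _ = U * (D1 * D2) * star U := by
          rw [hU2, Matrix.mul_one, Matrix.mul_assoc U D1 D2]
  have h1 : ∀ c : ℝ, A - c • 1 =
      U * Matrix.diagonal (fun i => hA.eigenvalues i - c) * star U := by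
    intro c
    have hc : c • (1 : Matrix n n ℝ) = U * Matrix.diagonal (fun _ => c) * star U := by
      calc c • (1 : Matrix n n ℝ) = c • (U * star U) := by rw [hU1]
        _ = U * (c • (1 : Matrix n n ℝ)) * star U := by
            rw [Matrix.mul_smul, Matrix.mul_one, Matrix.smul_mul]
        _ = U * Matrix.diagonal (fun _ => c) * star U := by rw [hsm]
    conv_lhs => rw [hst, hc]
    rw [← Matrix.sub_mul, ← Matrix.mul_sub, Matrix.diagonal_sub]
  rw [h1 l, h1 m, conj, Matrix.diagonal_mul_diagonal]
  have : (fun i => (hA.eigenvalues i - l) * (hA.eigenvalues i - m)) = fun _ => (0:ℝ) := by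
    funext i
    rcases h i with h' | h' <;> rw [h'] <;> ring
  rw [this, Matrix.diagonal_zero, Matrix.mul_zero, Matrix.zero_mul]

/-- If `G` is connected on `n ≥ 3` vertices with `q(G) = 2` and `u_1, …, u_k` is an
independent set of distinct vertices such that each `u_i` shares a common neighbor
with some `u_j`, `j ≠ i`, then the union of all pairwise common neighborhoods has
at least `k` elements. -/
theorem stmt4 {V : Type*} [Fintype V] [DecidableEq V] (G : SimpleGraph V)
    (hconn : G.Connected) (hn : 3 ≤ Fintype.card V) (hq : qGraph G = 2)
    (k : ℕ) (u : Fin k → V) (hinj : Function.Injective u)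
    (hindep : ∀ i j : Fin k, i ≠ j → ¬ G.Adj (u i) (u j))
    (hcommon : ∀ i : Fin k, ∃ j : Fin k, j ≠ i ∧
      (G.neighborSet (u i) ∩ G.neighborSet (u j)).Nonempty) :
    k ≤ (⋃ (i : Fin k) (j : Fin k) (_ : i ≠ j),
      G.neighborSet (u i) ∩ G.neighborSet (u j)).ncard := by
  classical
  have hne : ((fun A => (spectrum ℝ A).ncard) '' SOfGraph G).Nonempty := by
    by_contra hcon
    rw [Set.not_nonempty_iff_eq_empty] at hcon
    have h0 : qGraph G = 0 := by unfold qGraph; rw [hcon, Nat.sInf_empty]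
    omega
  have hmem : (2 : ℕ) ∈ ((fun A => (spectrum ℝ A).ncard) '' SOfGraph G) := by
    have h2 : sInf ((fun A => (spectrum ℝ A).ncard) '' SOfGraph G) = 2 := hq
    exact h2 ▸ Nat.sInf_mem hne
  obtain ⟨A, hASG, hcA⟩ := hmem
  obtain ⟨hsym, hpat⟩ := hASG
  have hH : A.IsHermitian := by
    rw [Matrix.IsHermitian, Matrix.conjTranspose_eq_transpose_of_trivial]; exact hsym
  obtain ⟨l, m, hlm, hspec⟩ := Set.ncard_eq_two.mp hcA
  have hev : ∀ i, hH.eigenvalues i = l ∨ hH.eigenvalues i = m := by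
    intro i
    have h' := hH.eigenvalues_mem_spectrum_real i
    rw [hspec] at h'
    simpa using h'
  have hquad := herm_quad hH hev
  have hsymm : ∀ x y : V, A x y = A y x := by
    intro x y
    have := congrFun (congrFun hsym y) x
    rw [Matrix.transpose_apply] at this
    exact this
  have hAA0 : ∀ x y : V, x ≠ y → A x y = 0 → (A * A) x y = 0 := by
    intro x y hxy hxy0
    have h0 := hquad
    simp only [Matrix.sub_mul, Matrix.mul_sub, Matrix.smul_mul, Matrix.mul_smul,
      Matrix.one_mul, Matrix.mul_one, smul_smul] at h0
    have h2 := congrFun (congrFun h0 x) y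
    simpa [Matrix.sub_apply, Matrix.smul_apply, Matrix.one_apply_ne hxy, hxy0] using h2
  set S : Set V := ⋃ (i : Fin k) (j : Fin k) (_ : i ≠ j),
      G.neighborSet (u i) ∩ G.neighborSet (u j) with hSdef
  have hSfin : S.Finite := Set.toFinite S
  set T : Finset V := hSfin.toFinset with hT
  have hmemS : ∀ ⦃i j : Fin k⦄ ⦃v : V⦄, i ≠ j → G.Adj (u i) v → G.Adj (u j) v → v ∈ T := by
    intro i j v hij h1 h2
    exact hSfin.mem_toFinset.mpr
      (Set.mem_iUnion.mpr ⟨i, Set.mem_iUnion.mpr ⟨j, Set.mem_iUnion.mpr ⟨hij, ⟨h1, h2⟩⟩⟩⟩)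
  have horth : ∀ i j : Fin k, i ≠ j → ∑ v ∈ T, A (u i) v * A (u j) v = 0 := by
    intro i j hij
    have huij : u i ≠ u j := fun h => hij (hinj h)
    have hAij : A (u i) (u j) = 0 := by
      by_contra h0
      exact hindep i j hij ((hpat _ _ huij).mp h0)
    have hext : ∑ v ∈ T, A (u i) v * A (u j) v
        = ∑ v ∈ Finset.univ, A (u i) v * A (u j) v := by
      apply Finset.sum_subset (Finset.subset_univ T)
      intro v _ hvT
      by_contra h0
      obtain ⟨h1, h2⟩ := mul_ne_zero_iff.mp h0
      have hvi : v ≠ u i := by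
        rintro rfl
        exact hindep j i (Ne.symm hij) ((hpat _ _ (Ne.symm huij)).mp h2)
      have hvj : v ≠ u j := by
        rintro rfl
        exact hindep i j hij ((hpat _ _ huij).mp h1)
      exact hvT (hmemS hij ((hpat _ _ (Ne.symm hvi)).mp h1) ((hpat _ _ (Ne.symm hvj)).mp h2))
    have hmul : ∑ v, A (u i) v * A (u j) v = (A * A) (u i) (u j) := by
      rw [Matrix.mul_apply]
      exact Finset.sum_congr rfl fun v _ => by rw [hsymm (u j) v]
    rw [hext, hmul]
    exact hAA0 _ _ huij hAij
  have hpos : ∀ i : Fin k, 0 < ∑ v ∈ T, A (u i) v * A (u i) v := by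
    intro i
    obtain ⟨j, hji, w, hw⟩ := hcommon i
    obtain ⟨hw1, hw2⟩ := hw
    have hadj : G.Adj (u i) w := hw1
    have hwT : w ∈ T := hmemS (Ne.symm hji) hadj hw2
    refine Finset.sum_pos' (fun v _ => mul_self_nonneg _) ⟨w, hwT, ?_⟩
    exact mul_self_pos.mpr ((hpat _ _ hadj.ne).mpr hadj)
  have hli : LinearIndependent ℝ (fun (i : Fin k) (v : ↥T) => A (u i) v.1) := by
    rw [linearIndependent_iff']
    intro s g hsum j hj
    have hsv : ∀ v : ↥T, ∑ i ∈ s, g i * A (u i) v.1 = 0 := by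
      intro v
      have := congrFun hsum v
      simpa [Finset.sum_apply] using this
    have key : ∑ i ∈ s, g i * ∑ v ∈ T, A (u i) v * A (u j) v = 0 := by
      calc ∑ i ∈ s, g i * ∑ v ∈ T, A (u i) v * A (u j) v
          = ∑ i ∈ s, ∑ v ∈ T, g i * (A (u i) v * A (u j) v) := by
            simp_rw [Finset.mul_sum]
        _ = ∑ v ∈ T, ∑ i ∈ s, g i * (A (u i) v * A (u j) v) := Finset.sum_comm
        _ = ∑ v ∈ T, (∑ i ∈ s, g i * A (u i) v) * A (u j) v := by
            refine Finset.sum_congr rfl fun v _ => ?_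
            rw [Finset.sum_mul]
            exact Finset.sum_congr rfl fun i _ => by ring
        _ = ∑ v : ↥T, (∑ i ∈ s, g i * A (u i) v.1) * A (u j) v.1 :=
            (Finset.sum_coe_sort T fun v => (∑ i ∈ s, g i * A (u i) v) * A (u j) v).symm
        _ = 0 := by
            refine Finset.sum_eq_zero fun v _ => ?_
            rw [hsv v, zero_mul]
    have hcol : ∑ i ∈ s, g i * ∑ v ∈ T, A (u i) v * A (u j) v
        = g j * ∑ v ∈ T, A (u j) v * A (u j) v := by
      apply Finset.sum_eq_single_of_mem j hj
      intro i _ hij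
      rw [horth i j hij, mul_zero]
    rw [hcol] at key
    exact (mul_eq_zero.mp key).resolve_right (hpos j).ne'
  have hcard := hli.fintype_card_le_finrank
  rw [Module.finrank_fintype_fun_eq_card, Fintype.card_fin, Fintype.card_coe] at hcard
  calc k ≤ T.card := hcard
    _ = S.ncard := (Set.ncard_eq_toFinset_card S hSfin).symm
end

section
/- For every k ≥ 2, the double-ended candle G_k satisfies q(G_k) = 2. -/
open Matrix

namespace CandleAux

noncomputable def cc : ℝ := Real.sqrt 2 / 2

lemma cc_pos : 0 < cc := by unfold cc; positivity

lemma cc_ne : cc ≠ 0 := ne_of_gt cc_pos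

lemma cc_sq : cc * cc = 1 / 2 := by
  have h : Real.sqrt 2 * Real.sqrt 2 = 2 := Real.mul_self_sqrt (by norm_num)
  unfold cc; nlinarith

def lev (n : ℕ) : ℕ := (n + 1) / 2

lemma lev_eq (n : ℕ) : lev n = (n + 1) / 2 := rfl

noncomputable def fv (n : ℕ) : ℝ :=
  if n = 0 then 1 else if n % 2 = 1 then cc else -cc

noncomputable def gv (k n : ℕ) : ℝ := if n = 2 * k - 1 then 1 else cc

lemma fv_ne (n : ℕ) : fv n ≠ 0 := by
  unfold fv; split_ifs <;> simp [cc_ne]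

lemma gv_ne (k n : ℕ) : gv k n ≠ 0 := by
  unfold gv; split_ifs <;> simp [cc_ne]

lemma gv_cc {k n : ℕ} (h : n ≠ 2 * k - 1) : gv k n = cc := if_neg h

lemma gv_one {k n : ℕ} (h : n = 2 * k - 1) : gv k n = 1 := if_pos h

lemma fv_zero : fv 0 = 1 := if_pos rfl

lemma fv_odd {n : ℕ} (h : n % 2 = 1) : fv n = cc := by
  unfold fv; rw [if_neg (by omega), if_pos h]

lemma fv_even {n : ℕ} (h0 : n ≠ 0) (h : n % 2 = 0) : fv n = -cc := by
  unfold fv; rw [if_neg h0, if_neg (by omega)]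

lemma fv_sq {n : ℕ} (h : n ≠ 0) : fv n * fv n = 1 / 2 := by
  rcases Nat.mod_two_eq_zero_or_one n with h2 | h2
  · rw [fv_even h h2, neg_mul_neg, cc_sq]
  · rw [fv_odd h2, cc_sq]

lemma fv_prod {t i j : ℕ} (ht : 1 ≤ t) (hi : i = 2 * t - 1 ∨ i = 2 * t)
    (hj : j = 2 * t - 1 ∨ j = 2 * t) :
    fv i * fv j = if i = j then 1 / 2 else -(1 / 2) := by
  have h1 : fv (2 * t - 1) = cc := fv_odd (n := 2 * t - 1) (by omega)
  have h2 : fv (2 * t) = -cc := fv_even (n := 2 * t) (by omega) (by omega)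
  rcases hi with hi | hi <;> rcases hj with hj | hj <;> subst hi <;> subst hj
  · rw [if_pos rfl]; exact fv_sq (by omega)
  · rw [if_neg (by omega), h1, h2, mul_neg, cc_sq]
  · rw [if_neg (by omega), h1, h2, neg_mul, mul_comm, cc_sq]
  · rw [if_pos rfl]; exact fv_sq (by omega)

noncomputable def qe (k i j : ℕ) : ℝ :=
  if lev i + 1 = lev j then fv i * gv k j
  else if lev j + 1 = lev i then fv j * gv k i
  else 0

lemma qe_symm (k i j : ℕ) : qe k i j = qe k j i := by
  unfold qe
  by_cases h1 : lev i + 1 = lev j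
  · have h2 : ¬ lev j + 1 = lev i := by omega
    simp [h1, h2]
  · by_cases h2 : lev j + 1 = lev i <;> simp [h1, h2]

lemma qe_up {k i j : ℕ} (h : lev i + 1 = lev j) : qe k i j = fv i * gv k j := by
  unfold qe; rw [if_pos h]

lemma qe_down {k i j : ℕ} (h : lev j + 1 = lev i) : qe k i j = fv j * gv k i := by
  unfold qe; rw [if_neg (by omega), if_pos h]

lemma qe_zero {k i j : ℕ} (h1 : lev i + 1 ≠ lev j) (h2 : lev j + 1 ≠ lev i) :
    qe k i j = 0 := by
  unfold qe; rw [if_neg h1, if_neg h2]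

lemma qe_ne_zero_iff (k i j : ℕ) :
    qe k i j ≠ 0 ↔ (lev i + 1 = lev j ∨ lev j + 1 = lev i) := by
  constructor
  · intro h
    by_contra hc
    push_neg at hc
    exact h (qe_zero hc.1 hc.2)
  · rintro (h | h)
    · rw [qe_up h]; exact mul_ne_zero (fv_ne _) (gv_ne _ _)
    · rw [qe_down h]; exact mul_ne_zero (fv_ne _) (gv_ne _ _)

lemma sum_support (n : ℕ) (F : ℕ → ℝ) (S : Finset ℕ) (hS : S ⊆ Finset.range n)
    (h : ∀ m, m < n → m ∉ S → F m = 0) :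
    ∑ m ∈ Finset.range n, F m = ∑ m ∈ S, F m :=
  (Finset.sum_subset hS fun x hx hxs => h x (Finset.mem_range.mp hx) hxs).symm

lemma qsum_cross (k i j : ℕ) (hi : i < 2 * k) (hj : j < 2 * k)
    (h : lev i + 2 = lev j) :
    ∑ m ∈ Finset.range (2 * k), qe k i m * qe k m j = 0 := by
  obtain ⟨t, ht⟩ : ∃ t, lev i = t := ⟨_, rfl⟩
  have hb : t + 2 ≤ k := by simp only [lev_eq] at ht h ⊢; omega
  rw [sum_support (2 * k) _ {2 * t + 1, 2 * t + 2}
      (by intro x hx; simp only [Finset.mem_insert, Finset.mem_singleton] at hx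
          simp only [Finset.mem_range]; omega)
      (by intro m hm hmS
          simp only [Finset.mem_insert, Finset.mem_singleton] at hmS
          by_cases hA : lev i + 1 = lev m ∨ lev m + 1 = lev i
          · have : qe k m j = 0 := by
              apply qe_zero <;> simp only [lev_eq] at * <;> omega
            rw [this, mul_zero]
          · push_neg at hA
            rw [qe_zero hA.1 hA.2, zero_mul])]
  rw [Finset.sum_pair (by omega)]
  have e1 : qe k i (2 * t + 1) = fv i * cc := by
    rw [qe_up (k := k) (i := i) (j := 2 * t + 1) (by simp only [lev_eq] at *; omega),
        gv_cc (k := k) (n := 2 * t + 1) (by omega)]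
  have e2 : qe k i (2 * t + 2) = fv i * cc := by
    rw [qe_up (k := k) (i := i) (j := 2 * t + 2) (by simp only [lev_eq] at *; omega),
        gv_cc (k := k) (n := 2 * t + 2) (by omega)]
  have e3 : qe k (2 * t + 1) j = cc * gv k j := by
    rw [qe_up (k := k) (i := 2 * t + 1) (j := j) (by simp only [lev_eq] at *; omega),
        fv_odd (n := 2 * t + 1) (by omega)]
  have e4 : qe k (2 * t + 2) j = -cc * gv k j := by
    rw [qe_up (k := k) (i := 2 * t + 2) (j := j) (by simp only [lev_eq] at *; omega),
        fv_even (n := 2 * t + 2) (by omega) (by omega)]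
  rw [e1, e2, e3, e4]
  ring


lemma qsum (k : ℕ) (hk : 2 ≤ k) (i j : ℕ) (hi : i < 2 * k) (hj : j < 2 * k) :
    ∑ m ∈ Finset.range (2 * k), qe k i m * qe k m j = if i = j then 1 else 0 := by
  by_cases hc1 : lev i + 2 = lev j
  · rw [qsum_cross k i j hi hj hc1, if_neg (by simp only [lev_eq] at hc1; omega)]
  by_cases hc2 : lev j + 2 = lev i
  · have hsw : ∀ m, qe k i m * qe k m j = qe k j m * qe k m i := by
      intro m; rw [qe_symm k i m, qe_symm k m j]; ring
    rw [Finset.sum_congr rfl (fun m _ => hsw m), qsum_cross k j i hj hi hc2,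
        if_neg (by simp only [lev_eq] at hc2; omega)]
  by_cases hc3 : lev i = lev j
  swap
  · -- levels far apart: every term vanishes
    rw [if_neg (fun he => hc3 (by rw [he]))]
    apply Finset.sum_eq_zero
    intro m _
    by_cases hA : lev i + 1 = lev m ∨ lev m + 1 = lev i
    · rw [qe_zero (k := k) (i := m) (j := j) (by omega) (by omega), mul_zero]
    · push_neg at hA
      rw [qe_zero hA.1 hA.2, zero_mul]
  -- same level
  obtain ⟨t, ht⟩ : ∃ t, (i + 1) / 2 = t := ⟨_, rfl⟩
  have htj : (j + 1) / 2 = t := by simp only [lev_eq] at hc3; omega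
  have htk : t ≤ k := by omega
  by_cases h0 : t = 0
  · -- bottom vertex: i = j = 0
    obtain ⟨rfl, rfl⟩ : i = 0 ∧ j = 0 := by omega
    rw [if_pos rfl]
    rw [sum_support (2 * k) _ {1, 2}
        (by intro x hx
            simp only [Finset.mem_insert, Finset.mem_singleton] at hx
            simp only [Finset.mem_range]; omega)
        (by intro m hm hmS
            simp only [Finset.mem_insert, Finset.mem_singleton] at hmS
            by_contra hne
            have hne := mul_ne_zero_iff.mp hne
            have h1 := (qe_ne_zero_iff k 0 m).mp hne.1
            simp only [lev_eq] at h1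
            omega)]
    rw [Finset.sum_pair (by omega)]
    have e1 : qe k 0 1 = cc := by
      rw [qe_up (k := k) (i := 0) (j := 1) (by simp only [lev_eq] <;> omega), fv_zero,
          gv_cc (k := k) (n := 1) (by omega), one_mul]
    have e1' : qe k 1 0 = cc := by
      rw [qe_down (k := k) (i := 1) (j := 0) (by simp only [lev_eq] <;> omega), fv_zero,
          gv_cc (k := k) (n := 1) (by omega), one_mul]
    have e2 : qe k 0 2 = cc := by
      rw [qe_up (k := k) (i := 0) (j := 2) (by simp only [lev_eq] <;> omega), fv_zero,
          gv_cc (k := k) (n := 2) (by omega), one_mul]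
    have e2' : qe k 2 0 = cc := by
      rw [qe_down (k := k) (i := 2) (j := 0) (by simp only [lev_eq] <;> omega), fv_zero,
          gv_cc (k := k) (n := 2) (by omega), one_mul]
    rw [e1, e1', e2, e2']
    linear_combination 2 * cc_sq
  by_cases hK : t = k
  · -- top vertex: i = j = 2k - 1
    obtain ⟨rfl, rfl⟩ : i = 2 * k - 1 ∧ j = 2 * k - 1 := by omega
    rw [if_pos rfl]
    rw [sum_support (2 * k) _ {2 * k - 3, 2 * k - 2}
        (by intro x hx
            simp only [Finset.mem_insert, Finset.mem_singleton] at hx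
            simp only [Finset.mem_range]; omega)
        (by intro m hm hmS
            simp only [Finset.mem_insert, Finset.mem_singleton] at hmS
            by_contra hne
            have hne := mul_ne_zero_iff.mp hne
            have h1 := (qe_ne_zero_iff k (2 * k - 1) m).mp hne.1
            simp only [lev_eq] at h1
            omega)]
    rw [Finset.sum_pair (by omega)]
    have e1 : qe k (2 * k - 1) (2 * k - 3) = cc := by
      rw [qe_down (k := k) (i := 2 * k - 1) (j := 2 * k - 3)
            (by simp only [lev_eq] <;> omega),
          fv_odd (n := 2 * k - 3) (by omega), gv_one (k := k) (n := 2 * k - 1) rfl, mul_one]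
    have e1' : qe k (2 * k - 3) (2 * k - 1) = cc := by
      rw [qe_up (k := k) (i := 2 * k - 3) (j := 2 * k - 1)
            (by simp only [lev_eq] <;> omega),
          fv_odd (n := 2 * k - 3) (by omega), gv_one (k := k) (n := 2 * k - 1) rfl, mul_one]
    have e2 : qe k (2 * k - 1) (2 * k - 2) = -cc := by
      rw [qe_down (k := k) (i := 2 * k - 1) (j := 2 * k - 2)
            (by simp only [lev_eq] <;> omega),
          fv_even (n := 2 * k - 2) (by omega) (by omega),
          gv_one (k := k) (n := 2 * k - 1) rfl, mul_one]
    have e2' : qe k (2 * k - 2) (2 * k - 1) = -cc := by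
      rw [qe_up (k := k) (i := 2 * k - 2) (j := 2 * k - 1)
            (by simp only [lev_eq] <;> omega),
          fv_even (n := 2 * k - 2) (by omega) (by omega),
          gv_one (k := k) (n := 2 * k - 1) rfl, mul_one]
    rw [e1, e1', e2, e2']
    linear_combination 2 * cc_sq
  -- middle level: 1 ≤ t ≤ k - 1
  have hi' : i = 2 * t - 1 ∨ i = 2 * t := by omega
  have hj' : j = 2 * t - 1 ∨ j = 2 * t := by omega
  have hfp := fv_prod (t := t) (by omega) hi' hj'
  have hgi : gv k i = cc := gv_cc (by omega)
  have hgj : gv k j = cc := gv_cc (by omega)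
  by_cases ht1 : t = 1 <;> by_cases htk1 : t = k - 1
  · -- combo A : k = 2, S = {0, 2k-1}
    rw [sum_support (2 * k) _ {0, 2 * k - 1}
        (by intro x hx
            simp only [Finset.mem_insert, Finset.mem_singleton] at hx
            simp only [Finset.mem_range]; omega)
        (by intro m hm hmS
            simp only [Finset.mem_insert, Finset.mem_singleton] at hmS
            by_contra hne
            have hne := mul_ne_zero_iff.mp hne
            have h1 := (qe_ne_zero_iff k i m).mp hne.1
            simp only [lev_eq] at h1
            omega)]
    rw [Finset.sum_pair (by omega)]
    have e1 : qe k i 0 = cc := by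
      rw [qe_down (k := k) (i := i) (j := 0) (by simp only [lev_eq] <;> omega), fv_zero,
          one_mul, hgi]
    have e1' : qe k 0 j = cc := by
      rw [qe_up (k := k) (i := 0) (j := j) (by simp only [lev_eq] <;> omega), fv_zero,
          one_mul, hgj]
    have e2 : qe k i (2 * k - 1) = fv i := by
      rw [qe_up (k := k) (i := i) (j := 2 * k - 1) (by simp only [lev_eq] <;> omega),
          gv_one (k := k) (n := 2 * k - 1) rfl, mul_one]
    have e2' : qe k (2 * k - 1) j = fv j := by
      rw [qe_down (k := k) (i := 2 * k - 1) (j := j) (by simp only [lev_eq] <;> omega),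
          gv_one (k := k) (n := 2 * k - 1) rfl, mul_one]
    rw [e1, e1', e2, e2']
    split_ifs at hfp ⊢ with hij <;> linear_combination cc_sq + hfp
  · -- combo B : t = 1 < k - 1, S = {0, 2t+1, 2t+2}
    rw [sum_support (2 * k) _ {0, 2 * t + 1, 2 * t + 2}
        (by intro x hx
            simp only [Finset.mem_insert, Finset.mem_singleton] at hx
            simp only [Finset.mem_range]; omega)
        (by intro m hm hmS
            simp only [Finset.mem_insert, Finset.mem_singleton] at hmS
            by_contra hne
            have hne := mul_ne_zero_iff.mp hne
            have h1 := (qe_ne_zero_iff k i m).mp hne.1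
            simp only [lev_eq] at h1
            omega)]
    rw [Finset.sum_insert (by simp only [Finset.mem_insert, Finset.mem_singleton]; omega),
        Finset.sum_pair (by omega)]
    have e1 : qe k i 0 = cc := by
      rw [qe_down (k := k) (i := i) (j := 0) (by simp only [lev_eq] <;> omega), fv_zero,
          one_mul, hgi]
    have e1' : qe k 0 j = cc := by
      rw [qe_up (k := k) (i := 0) (j := j) (by simp only [lev_eq] <;> omega), fv_zero,
          one_mul, hgj]
    have e2 : qe k i (2 * t + 1) = fv i * cc := by
      rw [qe_up (k := k) (i := i) (j := 2 * t + 1) (by simp only [lev_eq] <;> omega),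
          gv_cc (k := k) (n := 2 * t + 1) (by omega)]
    have e2' : qe k (2 * t + 1) j = fv j * cc := by
      rw [qe_down (k := k) (i := 2 * t + 1) (j := j) (by simp only [lev_eq] <;> omega),
          gv_cc (k := k) (n := 2 * t + 1) (by omega)]
    have e3 : qe k i (2 * t + 2) = fv i * cc := by
      rw [qe_up (k := k) (i := i) (j := 2 * t + 2) (by simp only [lev_eq] <;> omega),
          gv_cc (k := k) (n := 2 * t + 2) (by omega)]
    have e3' : qe k (2 * t + 2) j = fv j * cc := by
      rw [qe_down (k := k) (i := 2 * t + 2) (j := j) (by simp only [lev_eq] <;> omega),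
          gv_cc (k := k) (n := 2 * t + 2) (by omega)]
    rw [e1, e1', e2, e2', e3, e3']
    split_ifs at hfp ⊢ with hij <;>
      linear_combination (1 + 2 * (fv i * fv j)) * cc_sq + hfp
  · -- combo C : 2 ≤ t = k - 1, S = {2t-3, 2t-2, 2k-1}
    rw [sum_support (2 * k) _ {2 * t - 3, 2 * t - 2, 2 * k - 1}
        (by intro x hx
            simp only [Finset.mem_insert, Finset.mem_singleton] at hx
            simp only [Finset.mem_range]; omega)
        (by intro m hm hmS
            simp only [Finset.mem_insert, Finset.mem_singleton] at hmS
            by_contra hne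
            have hne := mul_ne_zero_iff.mp hne
            have h1 := (qe_ne_zero_iff k i m).mp hne.1
            simp only [lev_eq] at h1
            omega)]
    rw [Finset.sum_insert (by simp only [Finset.mem_insert, Finset.mem_singleton]; omega),
        Finset.sum_pair (by omega)]
    have e1 : qe k i (2 * t - 3) = cc * cc := by
      rw [qe_down (k := k) (i := i) (j := 2 * t - 3) (by simp only [lev_eq] <;> omega),
          fv_odd (n := 2 * t - 3) (by omega), hgi]
    have e1' : qe k (2 * t - 3) j = cc * cc := by
      rw [qe_up (k := k) (i := 2 * t - 3) (j := j) (by simp only [lev_eq] <;> omega),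
          fv_odd (n := 2 * t - 3) (by omega), hgj]
    have e2 : qe k i (2 * t - 2) = -cc * cc := by
      rw [qe_down (k := k) (i := i) (j := 2 * t - 2) (by simp only [lev_eq] <;> omega),
          fv_even (n := 2 * t - 2) (by omega) (by omega), hgi, neg_mul]
    have e2' : qe k (2 * t - 2) j = -cc * cc := by
      rw [qe_up (k := k) (i := 2 * t - 2) (j := j) (by simp only [lev_eq] <;> omega),
          fv_even (n := 2 * t - 2) (by omega) (by omega), hgj, neg_mul]
    have e3 : qe k i (2 * k - 1) = fv i := by
      rw [qe_up (k := k) (i := i) (j := 2 * k - 1) (by simp only [lev_eq] <;> omega),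
          gv_one (k := k) (n := 2 * k - 1) rfl, mul_one]
    have e3' : qe k (2 * k - 1) j = fv j := by
      rw [qe_down (k := k) (i := 2 * k - 1) (j := j) (by simp only [lev_eq] <;> omega),
          gv_one (k := k) (n := 2 * k - 1) rfl, mul_one]
    rw [e1, e1', e2, e2', e3, e3']
    split_ifs at hfp ⊢ with hij <;>
      linear_combination (2 * (cc * cc) + 1) * cc_sq + hfp
  · -- combo D : 2 ≤ t ≤ k - 2, S = {2t-3, 2t-2, 2t+1, 2t+2}
    rw [sum_support (2 * k) _ {2 * t - 3, 2 * t - 2, 2 * t + 1, 2 * t + 2}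
        (by intro x hx
            simp only [Finset.mem_insert, Finset.mem_singleton] at hx
            simp only [Finset.mem_range]; omega)
        (by intro m hm hmS
            simp only [Finset.mem_insert, Finset.mem_singleton] at hmS
            by_contra hne
            have hne := mul_ne_zero_iff.mp hne
            have h1 := (qe_ne_zero_iff k i m).mp hne.1
            simp only [lev_eq] at h1
            omega)]
    rw [Finset.sum_insert (by simp only [Finset.mem_insert, Finset.mem_singleton]; omega),
        Finset.sum_insert (by simp only [Finset.mem_insert, Finset.mem_singleton]; omega),
        Finset.sum_pair (by omega)]
    have e1 : qe k i (2 * t - 3) = cc * cc := by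
      rw [qe_down (k := k) (i := i) (j := 2 * t - 3) (by simp only [lev_eq] <;> omega),
          fv_odd (n := 2 * t - 3) (by omega), hgi]
    have e1' : qe k (2 * t - 3) j = cc * cc := by
      rw [qe_up (k := k) (i := 2 * t - 3) (j := j) (by simp only [lev_eq] <;> omega),
          fv_odd (n := 2 * t - 3) (by omega), hgj]
    have e2 : qe k i (2 * t - 2) = -cc * cc := by
      rw [qe_down (k := k) (i := i) (j := 2 * t - 2) (by simp only [lev_eq] <;> omega),
          fv_even (n := 2 * t - 2) (by omega) (by omega), hgi, neg_mul]
    have e2' : qe k (2 * t - 2) j = -cc * cc := by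
      rw [qe_up (k := k) (i := 2 * t - 2) (j := j) (by simp only [lev_eq] <;> omega),
          fv_even (n := 2 * t - 2) (by omega) (by omega), hgj, neg_mul]
    have e3 : qe k i (2 * t + 1) = fv i * cc := by
      rw [qe_up (k := k) (i := i) (j := 2 * t + 1) (by simp only [lev_eq] <;> omega),
          gv_cc (k := k) (n := 2 * t + 1) (by omega)]
    have e3' : qe k (2 * t + 1) j = fv j * cc := by
      rw [qe_down (k := k) (i := 2 * t + 1) (j := j) (by simp only [lev_eq] <;> omega),
          gv_cc (k := k) (n := 2 * t + 1) (by omega)]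
    have e4 : qe k i (2 * t + 2) = fv i * cc := by
      rw [qe_up (k := k) (i := i) (j := 2 * t + 2) (by simp only [lev_eq] <;> omega),
          gv_cc (k := k) (n := 2 * t + 2) (by omega)]
    have e4' : qe k (2 * t + 2) j = fv j * cc := by
      rw [qe_down (k := k) (i := 2 * t + 2) (j := j) (by simp only [lev_eq] <;> omega),
          gv_cc (k := k) (n := 2 * t + 2) (by omega)]
    rw [e1, e1', e2, e2', e3, e3', e4, e4']
    split_ifs at hfp ⊢ with hij <;>
      linear_combination (2 * (cc * cc) + 1 + 2 * (fv i * fv j)) * cc_sq + hfp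


noncomputable def Qm (k : ℕ) : Matrix (Fin (2 * k)) (Fin (2 * k)) ℝ :=
  Matrix.of fun i j => qe k i.val j.val

lemma Qm_isSymm (k : ℕ) : (Qm k).IsSymm := by
  ext i j
  exact qe_symm k j.val i.val

lemma Qm_mul_self (k : ℕ) (hk : 2 ≤ k) : Qm k * Qm k = 1 := by
  ext i j
  rw [Matrix.mul_apply, Matrix.one_apply]
  have hcal : ∑ m : Fin (2 * k), Qm k i m * Qm k m j
      = ∑ m ∈ Finset.range (2 * k), qe k i.val m * qe k m j.val :=
    Fin.sum_univ_eq_sum_range (fun m => qe k i.val m * qe k m j.val) (2 * k)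
  rw [hcal, qsum k hk i.val j.val i.isLt j.isLt]
  by_cases h : i = j
  · rw [if_pos h, if_pos (by rw [h])]
  · rw [if_neg h, if_neg (fun hc => h (Fin.ext hc))]

lemma Qm_01 (k : ℕ) (hk : 2 ≤ k) :
    Qm k ⟨0, by omega⟩ ⟨1, by omega⟩ = cc := by
  have h1 : qe k 0 1 = cc := by
    rw [qe_up (k := k) (i := 0) (j := 1) (by simp only [lev_eq] <;> omega), fv_zero,
        gv_cc (k := k) (n := 1) (by omega), one_mul]
  simpa only [Qm, Matrix.of_apply] using h1

lemma Qm_spectrum (k : ℕ) (hk : 2 ≤ k) : spectrum ℝ (Qm k) = {1, -1} := by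
  have hQ2 := Qm_mul_self k hk
  set M := Matrix (Fin (2 * k)) (Fin (2 * k)) ℝ
  have key : ∀ x : ℝ,
      (algebraMap ℝ M x - Qm k) * (algebraMap ℝ M x + Qm k) = (x ^ 2 - 1) • (1 : M) ∧
      (algebraMap ℝ M x + Qm k) * (algebraMap ℝ M x - Qm k) = (x ^ 2 - 1) • (1 : M) := by
    intro x
    have hcom : Qm k * algebraMap ℝ M x = algebraMap ℝ M x * Qm k :=
      (Algebra.commutes x (Qm k)).symm
    have hXX : algebraMap ℝ M x * algebraMap ℝ M x = (x ^ 2) • (1 : M) := by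
      rw [← _root_.map_mul, Algebra.algebraMap_eq_smul_one, sq]
    constructor
    · rw [sub_mul, mul_add, mul_add, hQ2, hcom, hXX, sub_smul, one_smul]
      abel
    · rw [add_mul, mul_sub, mul_sub, hQ2, hcom, hXX, sub_smul, one_smul]
      abel
  have hne01 : (⟨0, by omega⟩ : Fin (2 * k)) ≠ ⟨1, by omega⟩ := by
    simp [Fin.ext_iff]
  ext x
  simp only [spectrum.mem_iff, Set.mem_insert_iff, Set.mem_singleton_iff]
  constructor
  · intro h
    by_contra hc
    push_neg at hc
    obtain ⟨hc1, hc2⟩ := hc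
    have hd : x ^ 2 - 1 ≠ 0 := by
      intro h0
      have hfac : (x - 1) * (x + 1) = 0 := by linear_combination h0
      rcases mul_eq_zero.mp hfac with h | h
      · exact hc1 (by linarith)
      · exact hc2 (by linarith)
    exact h ⟨⟨algebraMap ℝ M x - Qm k, (x ^ 2 - 1)⁻¹ • (algebraMap ℝ M x + Qm k),
      by rw [Matrix.mul_smul, (key x).1, smul_smul, inv_mul_cancel₀ hd, one_smul],
      by rw [Matrix.smul_mul, (key x).2, smul_smul, inv_mul_cancel₀ hd, one_smul]⟩, rfl⟩
  · intro hx h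
    have hx2 : x ^ 2 - 1 = 0 := by rcases hx with rfl | rfl <;> norm_num
    have h0 : (algebraMap ℝ M x - Qm k) * (algebraMap ℝ M x + Qm k)
        = (algebraMap ℝ M x - Qm k) * 0 := by
      rw [(key x).1, hx2, zero_smul, mul_zero]
    have hz : algebraMap ℝ M x + Qm k = 0 := h.mul_left_cancel h0
    have he : (algebraMap ℝ M x + Qm k) (⟨0, by omega⟩ : Fin (2 * k)) ⟨1, by omega⟩ = 0 := by
      rw [hz]; rfl
    rw [Matrix.add_apply, Matrix.algebraMap_matrix_apply, if_neg hne01, Qm_01 k hk,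
        zero_add] at he
    exact cc_ne he

lemma Qm_mem (k : ℕ) (hk : 2 ≤ k) : Qm k ∈ SOfGraph (doubleCandle k) := by
  refine ⟨Qm_isSymm k, ?_⟩
  intro i j hij
  have hadj : (doubleCandle k).Adj i j ↔
      (lev i.val + 1 = lev j.val ∨ lev j.val + 1 = lev i.val) := by
    rw [doubleCandle, SimpleGraph.fromRel_adj]
    simp only [lev_eq]
    exact ⟨fun hp => hp.2, fun hp => ⟨hij, hp⟩⟩
  rw [hadj]
  exact qe_ne_zero_iff k i.val j.val

lemma lower_bound (k : ℕ) (hk : 2 ≤ k) (A : Matrix (Fin (2 * k)) (Fin (2 * k)) ℝ)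
    (hA : A ∈ SOfGraph (doubleCandle k)) : 2 ≤ (spectrum ℝ A).ncard := by
  obtain ⟨hsym, hpat⟩ := hA
  have hherm : A.IsHermitian := by
    rw [Matrix.IsHermitian, Matrix.conjTranspose_eq_transpose_of_trivial]
    exact hsym
  have hne01 : (⟨0, by omega⟩ : Fin (2 * k)) ≠ ⟨1, by omega⟩ := by
    simp [Fin.ext_iff]
  have hadj : (doubleCandle k).Adj ⟨0, by omega⟩ ⟨1, by omega⟩ := by
    rw [doubleCandle, SimpleGraph.fromRel_adj]
    exact ⟨hne01, Or.inl (by norm_num)⟩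
  have hA01 : A ⟨0, by omega⟩ ⟨1, by omega⟩ ≠ 0 := (hpat _ _ hne01).mpr hadj
  by_cases hcon : ∀ i, hherm.eigenvalues i = hherm.eigenvalues ⟨0, by omega⟩
  · exfalso
    set lam := hherm.eigenvalues ⟨0, by omega⟩ with hlam
    have hdiag : Matrix.diagonal (RCLike.ofReal ∘ hherm.eigenvalues)
        = lam • (1 : Matrix (Fin (2 * k)) (Fin (2 * k)) ℝ) := by
      ext a b
      rw [Matrix.smul_apply, Matrix.one_apply, Matrix.diagonal_apply]
      by_cases hab : a = b
      · rw [if_pos hab, if_pos hab, Function.comp_apply, hcon a, RCLike.ofReal_real_eq_id]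
        simp
      · rw [if_neg hab, if_neg hab, smul_zero]
    have hst := hherm.spectral_theorem
    rw [hdiag, _root_.map_smul, _root_.map_one] at hst
    apply hA01
    rw [hst, Matrix.smul_apply, Matrix.one_apply_ne hne01, smul_zero]
  · push_neg at hcon
    obtain ⟨i, hi⟩ := hcon
    have hsub : ({hherm.eigenvalues i, hherm.eigenvalues ⟨0, by omega⟩} : Set ℝ)
        ⊆ spectrum ℝ A := by
      intro x hx
      rcases hx with rfl | rfl
      · exact hherm.eigenvalues_mem_spectrum_real i
      · exact hherm.eigenvalues_mem_spectrum_real _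
    calc 2 = ({hherm.eigenvalues i, hherm.eigenvalues ⟨0, by omega⟩} : Set ℝ).ncard :=
        (Set.ncard_pair hi).symm
      _ ≤ (spectrum ℝ A).ncard := Set.ncard_le_ncard hsub (Matrix.finite_spectrum A)

end CandleAux

/-- For every `k ≥ 2`, the double-ended candle `G_k` satisfies `q(G_k) = 2`. -/


theorem stmt6 (k : ℕ) (hk : 2 ≤ k) : qGraph (doubleCandle k) = 2 := by
  have hmem : (2 : ℕ) ∈ (fun A => (spectrum ℝ A).ncard) '' SOfGraph (doubleCandle k) :=
    ⟨CandleAux.Qm k, CandleAux.Qm_mem k hk, by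
      show (spectrum ℝ (CandleAux.Qm k)).ncard = 2
      rw [CandleAux.Qm_spectrum k hk, Set.ncard_pair (by norm_num : (1 : ℝ) ≠ -1)]⟩
  refine le_antisymm (Nat.sInf_le hmem) (le_csInf ⟨2, hmem⟩ ?_)
  rintro n ⟨A, hA, rfl⟩
  exact CandleAux.lower_bound k hk A hA
end

section
/- Let G be a connected finite simple graph on n ≥ 3 vertices with q(G) = 2, let v be a vertex of G, and let u be a vertex with graph distance d(v, u) = i ≥ 2. Then u has at least two neighbors at distance i − 1 from v. -/
open Matrix

section Aux

variable {V : Type*} [Fintype V] [DecidableEq V] {G : SimpleGraph V}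

omit [Fintype V] [DecidableEq V] in
lemma myLengthDrop {u v : V} (p : G.Walk u v) (n : ℕ) :
    (p.drop n).length = p.length - n := by
  induction p generalizing n with
  | nil => cases n <;> simp [SimpleGraph.Walk.drop]
  | cons h q ih =>
    cases n with
    | zero => simp [SimpleGraph.Walk.drop]
    | succ n => simp [SimpleGraph.Walk.drop, ih]

lemma myQuad {A : Matrix V V ℝ} (hH : A.IsHermitian) {l m : ℝ}
    (heig : ∀ j, hH.eigenvalues j = l ∨ hH.eigenvalues j = m) :
    (A - l • 1) * (A - m • 1) = 0 := by
  have hUU : (hH.eigenvectorUnitary : Matrix V V ℝ) *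
      star (hH.eigenvectorUnitary : Matrix V V ℝ) = 1 :=
    Matrix.mem_unitaryGroup_iff.mp (hH.eigenvectorUnitary).2
  set U := (hH.eigenvectorUnitary : Matrix V V ℝ) with hU
  set D : Matrix V V ℝ := diagonal (RCLike.ofReal ∘ hH.eigenvalues) with hD
  have hA : A = U * D * star U := hH.spectral_theorem
  have h1 : ∀ c : ℝ, A - c • 1 = U * (D - c • 1) * star U := by
    intro c
    rw [hA, mul_sub, sub_mul, mul_smul_comm, mul_one, smul_mul_assoc, hUU]
  have hsUU : star U * U = 1 := Matrix.mem_unitaryGroup_iff'.mp (hH.eigenvectorUnitary).2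
  rw [h1 l, h1 m, mul_assoc (U * (D - l • 1)), ← mul_assoc (star U), ← mul_assoc (star U),
    hsUU, one_mul]
  have hzero : (D - l • 1) * (D - m • 1) = 0 := by
    rw [hD, smul_one_eq_diagonal, smul_one_eq_diagonal, diagonal_sub, diagonal_sub,
      diagonal_mul_diagonal]
    have hfun : ∀ j, ((RCLike.ofReal ∘ hH.eigenvalues) j - l) *
        ((RCLike.ofReal ∘ hH.eigenvalues) j - m) = 0 := by
      intro j
      rcases heig j with h | h <;> simp [Function.comp, h, RCLike.ofReal_real_eq_id]
    simp only [hfun]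
    exact diagonal_zero
  rw [← mul_assoc, mul_assoc U, hzero, mul_zero, zero_mul]

lemma mySum {A : Matrix V V ℝ} {l m : ℝ} (h0 : (A - l • 1) * (A - m • 1) = 0)
    {x y : V} (hxy : x ≠ y) (hxy0 : A x y = 0) : ∑ z, A x z * A z y = 0 := by
  have hexp : A * A - m • A - l • A + (l * m) • (1 : Matrix V V ℝ) = 0 := by
    rw [← h0]
    simp only [sub_mul, mul_sub, smul_mul_assoc, mul_smul_comm, one_mul, mul_one, smul_smul,
      smul_sub]
    module
  have h := congrArg (fun M : Matrix V V ℝ => M x y) hexp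
  simp only [Matrix.sub_apply, Matrix.add_apply, Matrix.smul_apply, Matrix.mul_apply,
    Matrix.one_apply_ne hxy, smul_eq_mul, mul_zero, Matrix.zero_apply, hxy0, add_zero,
    sub_zero] at h
  exact h

lemma myCN {A : Matrix V V ℝ} (hAadj : ∀ i j : V, i ≠ j → (A i j ≠ 0 ↔ G.Adj i j))
    (hsum : ∀ x y : V, x ≠ y → ¬ G.Adj x y → ∑ z, A x z * A z y = 0)
    (hconn : G.Connected) {x y : V} (h2 : G.dist x y = 2) :
    2 ≤ {z | G.Adj x z ∧ G.Adj z y}.ncard := by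
  have hne : x ≠ y := by rintro rfl; simp [SimpleGraph.dist_self] at h2
  have hnadj : ¬ G.Adj x y := by
    intro h
    have h1 := SimpleGraph.dist_le h.toWalk
    simp only [SimpleGraph.Adj.toWalk, SimpleGraph.Walk.length_cons,
      SimpleGraph.Walk.length_nil] at h1
    omega
  have hxy0 : A x y = 0 := by
    by_contra h
    exact hnadj ((hAadj x y hne).mp h)
  obtain ⟨p, hp⟩ := hconn.exists_walk_length_eq_dist x y
  rw [h2] at hp
  set z0 := p.getVert 1 with hz0
  have ha1 : G.Adj x z0 := by
    have h := p.adj_getVert_succ (i := 0) (by omega)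
    simpa [SimpleGraph.Walk.getVert_zero] using h
  have ha2 : G.Adj z0 y := by
    have h := p.adj_getVert_succ (i := 1) (by omega)
    have h2' : p.getVert 2 = y := by rw [← hp]; exact p.getVert_length
    rwa [show (1 + 1 : ℕ) = 2 from rfl, h2'] at h
  by_contra hlt
  push_neg at hlt
  have honly : ∀ z : V, z ≠ z0 → A x z * A z y = 0 := by
    intro z hz
    by_contra hnz
    have h1 : A x z ≠ 0 := fun h => hnz (by rw [h, zero_mul])
    have h2' : A z y ≠ 0 := fun h => hnz (by rw [h, mul_zero])
    have hzx : z ≠ x := by rintro rfl; exact h2' hxy0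
    have hzy : z ≠ y := by
      rintro rfl
      exact h1 hxy0
    have hmem : ({z0, z} : Set V) ⊆ {z | G.Adj x z ∧ G.Adj z y} := by
      intro t ht
      simp only [Set.mem_insert_iff, Set.mem_singleton_iff] at ht
      rcases ht with h | h <;> rw [h]
      · exact ⟨ha1, ha2⟩
      · exact ⟨(hAadj x z (Ne.symm hzx)).mp h1, (hAadj z y hzy).mp h2'⟩
    have := Set.ncard_le_ncard hmem (Set.toFinite _)
    rw [Set.ncard_pair (Ne.symm hz)] at this
    omega
  have hs := hsum x y hne hnadj
  rw [Finset.sum_eq_single_of_mem z0 (Finset.mem_univ z0) (fun b _ hb => honly b hb)] at hs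
  exact (mul_ne_zero ((hAadj x z0 ha1.ne).mpr ha1) ((hAadj z0 y ha2.ne).mpr ha2)) hs

end Aux

/-- In a connected graph on `n ≥ 3` vertices with `q(G) = 2`, every vertex `u` at
distance `i ≥ 2` from a vertex `v` has at least two neighbors at distance `i - 1`
from `v`. -/
theorem stmt8 {V : Type*} [Fintype V] [DecidableEq V] (G : SimpleGraph V)
    (hconn : G.Connected) (hn : 3 ≤ Fintype.card V) (hq : qGraph G = 2)
    (v u : V) (i : ℕ) (hi : 2 ≤ i) (hdist : G.dist v u = i) :
    2 ≤ {w : V | G.Adj u w ∧ G.dist v w = i - 1}.ncard := by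
  classical
  -- `SOfGraph G` is nonempty (it contains the adjacency matrix), so the infimum is attained.
  have hBmem : (Matrix.of fun x y : V => if G.Adj x y then (1 : ℝ) else 0) ∈ SOfGraph G := by
    constructor
    · ext x y
      simp [Matrix.transpose_apply, SimpleGraph.adj_comm]
    · intro x y _
      simp only [Matrix.of_apply]
      split_ifs with h <;> simp [h]
  have hnonempty : ((fun A : Matrix V V ℝ => (spectrum ℝ A).ncard) '' SOfGraph G).Nonempty :=
    ⟨_, ⟨_, hBmem, rfl⟩⟩
  have hmem : (2 : ℕ) ∈ (fun A : Matrix V V ℝ => (spectrum ℝ A).ncard) '' SOfGraph G := by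
    have h := Nat.sInf_mem hnonempty
    rwa [show sInf ((fun A : Matrix V V ℝ => (spectrum ℝ A).ncard) '' SOfGraph G) = qGraph G
      from rfl, hq] at h
  obtain ⟨A, ⟨hAs, hAadj⟩, hA2⟩ := hmem
  obtain ⟨l, m, hlm, hspec⟩ := Set.ncard_eq_two.mp hA2
  have hH : A.IsHermitian := by
    show Aᴴ = A
    rw [conjTranspose_eq_transpose_of_trivial]
    exact hAs
  have heig : ∀ j, hH.eigenvalues j = l ∨ hH.eigenvalues j = m := by
    intro j
    have h := hH.eigenvalues_mem_spectrum_real j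
    rw [hspec] at h
    simpa using h
  have hquad := myQuad hH heig
  have hkey : ∀ x y : V, x ≠ y → ¬ G.Adj x y → ∑ z, A x z * A z y = 0 := by
    intro x y hxy hnadj
    refine mySum hquad hxy ?_
    by_contra h
    exact hnadj ((hAadj x y hxy).mp h)
  -- walk bookkeeping
  obtain ⟨p, hp⟩ := hconn.exists_walk_length_eq_dist v u
  rw [hdist] at hp
  have hgv : ∀ k, k ≤ i → G.dist v (p.getVert k) = k := by
    intro k hk
    have hle1 : G.dist v (p.getVert k) ≤ k := by
      have h := SimpleGraph.dist_le (p.reverse.drop (i - k))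
      rw [myLengthDrop, SimpleGraph.Walk.length_reverse, SimpleGraph.Walk.getVert_reverse,
        hp, show i - (i - k) = k by omega] at h
      rwa [SimpleGraph.dist_comm] at h
    have hle2 : G.dist (p.getVert k) u ≤ i - k := by
      have h := SimpleGraph.dist_le (p.drop k)
      rwa [myLengthDrop, hp] at h
    have htri := hconn.dist_triangle (u := v) (v := p.getVert k) (w := u)
    rw [hdist] at htri
    omega
  set x := p.getVert (i - 2) with hxdef
  set w := p.getVert (i - 1) with hwdef
  have hxw : G.Adj x w := by
    have h := p.adj_getVert_succ (i := i - 2) (by omega)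
    rwa [show i - 2 + 1 = i - 1 by omega] at h
  have hwu : G.Adj w u := by
    have h := p.adj_getVert_succ (i := i - 1) (by omega)
    have h2 : p.getVert i = u := by rw [← hp]; exact p.getVert_length
    rwa [show i - 1 + 1 = i by omega, h2] at h
  have hdx : G.dist v x = i - 2 := hgv _ (by omega)
  have hdxu : G.dist x u = 2 := by
    have h1 : G.dist x u ≤ 2 := by
      have h := SimpleGraph.dist_le (SimpleGraph.Walk.cons hxw (SimpleGraph.Walk.cons hwu
        SimpleGraph.Walk.nil))
      simpa using h
    have htri := hconn.dist_triangle (u := v) (v := x) (w := u)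
    rw [hdist, hdx] at htri
    omega
  have hcn := myCN hAadj hkey hconn hdxu
  refine le_trans hcn (Set.ncard_le_ncard ?_ (Set.toFinite _))
  rintro z ⟨hxz, hzu⟩
  have hxz1 : G.dist x z ≤ 1 := by
    have h := SimpleGraph.dist_le hxz.toWalk
    simpa using h
  have hzu1 : G.dist z u ≤ 1 := by
    have h := SimpleGraph.dist_le hzu.toWalk
    simpa using h
  have hd1 : G.dist v z ≤ i - 1 := by
    have htri := hconn.dist_triangle (u := v) (v := x) (w := z)
    omega
  have hd2 : i - 1 ≤ G.dist v z := by
    have htri := hconn.dist_triangle (u := v) (v := z) (w := u)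
    rw [hdist] at htri
    omega
  exact ⟨hzu.symm, le_antisymm hd1 hd2⟩
end

section
/- If G is a connected finite simple graph on n ≥ 3 vertices with q(G) = 2, then G has at least 2n − 4 edges. -/
open Matrix

section Aux

lemma two_eig_quad {V : Type*} [Fintype V] [DecidableEq V] (A : Matrix V V ℝ) (hs : A.IsSymm)
    (l m : ℝ) (hlm : spectrum ℝ A = {l, m}) :
    (A - l • 1) * (A - m • 1) = 0 := by
  have hA : A.IsHermitian := by
    rw [Matrix.IsHermitian, Matrix.conjTranspose_eq_transpose_of_trivial]; exact hs
  have hev : ∀ i, hA.eigenvalues i = l ∨ hA.eigenvalues i = m := by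
    intro i
    have := hA.eigenvalues_mem_spectrum_real i
    rw [hlm] at this
    simpa using this
  set U := (hA.eigenvectorUnitary : Matrix V V ℝ) with hUdef
  have hU1 : U * star U = 1 := (Matrix.mem_unitaryGroup_iff).mp hA.eigenvectorUnitary.2
  have hU2 : star U * U = 1 := (Matrix.mem_unitaryGroup_iff').mp hA.eigenvectorUnitary.2
  have hspec : A = U * Matrix.diagonal hA.eigenvalues * star U := by
    simpa using hA.spectral_theorem
  have key : ∀ c : ℝ, A - c • 1 = U * (Matrix.diagonal hA.eigenvalues - c • 1) * star U := by
    intro c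
    rw [mul_sub, sub_mul, ← hspec]
    congr 1
    rw [Matrix.mul_smul, mul_one, Matrix.smul_mul, hU1]
  have cancel : ∀ Z : Matrix V V ℝ, star U * (U * Z) = Z := by
    intro Z; rw [← mul_assoc, hU2, one_mul]
  rw [key l, key m]
  simp only [mul_assoc, cancel]
  have : (Matrix.diagonal hA.eigenvalues - l • 1) * (Matrix.diagonal hA.eigenvalues - m • 1) = 0 := by
    have hd : ∀ c : ℝ, Matrix.diagonal hA.eigenvalues - c • 1 =
        Matrix.diagonal (fun i => hA.eigenvalues i - c) := by
      intro c; ext i j; by_cases h : i = j <;> simp [h, Matrix.diagonal_apply, Matrix.one_apply]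
    rw [hd l, hd m, Matrix.diagonal_mul_diagonal]
    ext i j
    by_cases h : i = j
    · subst h
      rcases hev i with h | h <;> simp [h, Matrix.diagonal_apply]
    · simp [Matrix.diagonal_apply, h]
  rw [show (Matrix.diagonal hA.eigenvalues - l • 1) *
      ((Matrix.diagonal hA.eigenvalues - m • 1) * star U) =
      ((Matrix.diagonal hA.eigenvalues - l • 1) *
      (Matrix.diagonal hA.eigenvalues - m • 1)) * star U from (mul_assoc _ _ _).symm, this]
  simp

lemma common_nbr {V : Type*} [Fintype V] [DecidableEq V] (G : SimpleGraph V) [DecidableRel G.Adj]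
    (A : Matrix V V ℝ) (hp : ∀ i j : V, i ≠ j → (A i j ≠ 0 ↔ G.Adj i j))
    (l m : ℝ) (hq : (A - l • 1) * (A - m • 1) = 0) :
    ∀ i j : V, i ≠ j → ¬ G.Adj i j →
      (Finset.univ.filter fun k => G.Adj i k ∧ G.Adj j k).card ≠ 1 := by
  have expand : (A - l • 1) * (A - m • 1) = A * A - (l + m) • A + (l * m) • 1 := by
    simp only [sub_mul, mul_sub, Matrix.mul_smul, Matrix.smul_mul, mul_one, one_mul,
      smul_smul, add_smul, mul_comm m l]
    abel
  rw [expand] at hq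
  intro i j hij hnadj hcard
  obtain ⟨k₀, hk₀⟩ := Finset.card_eq_one.mp hcard
  have hk₀mem : k₀ ∈ Finset.univ.filter fun k => G.Adj i k ∧ G.Adj j k := by
    rw [hk₀]; exact Finset.mem_singleton_self k₀
  rw [Finset.mem_filter] at hk₀mem
  obtain ⟨-, hik₀, hjk₀⟩ := hk₀mem
  have hAij : A i j = 0 := by
    by_contra h; exact hnadj ((hp i j hij).mp h)
  have h2 : ∑ k, A i k * A k j = 0 := by
    have := congrFun (congrFun hq i) j
    simp only [Matrix.add_apply, Matrix.sub_apply, Matrix.smul_apply, Matrix.one_apply,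
      Matrix.mul_apply, Matrix.zero_apply, if_neg hij, smul_eq_mul, mul_zero, hAij,
      sub_zero, add_zero] at this
    exact this
  have hsum : ∑ k, A i k * A k j = A i k₀ * A k₀ j := by
    apply Finset.sum_eq_single_of_mem k₀ (Finset.mem_univ k₀)
    intro k _ hk
    by_cases hki : k = i
    · subst hki; rw [hAij, mul_zero]
    by_cases hkj : k = j
    · subst hkj; rw [hAij, zero_mul]
    have : ¬ (G.Adj i k ∧ G.Adj j k) := by
      intro h
      apply hk
      have : k ∈ Finset.univ.filter fun k => G.Adj i k ∧ G.Adj j k :=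
        Finset.mem_filter.mpr ⟨Finset.mem_univ k, h⟩
      rw [hk₀] at this
      exact Finset.mem_singleton.mp this
    by_cases h1 : A i k = 0
    · rw [h1, zero_mul]
    by_cases h2 : A k j = 0
    · rw [h2, mul_zero]
    exact absurd ⟨(hp i k (Ne.symm hki)).mp h1, ((hp k j hkj).mp h2).symm⟩ this
  rw [hsum] at h2
  have h3 : A i k₀ ≠ 0 := (hp i k₀ (G.ne_of_adj hik₀)).mpr hik₀
  have h4 : A k₀ j ≠ 0 := (hp k₀ j (G.ne_of_adj hjk₀.symm)).mpr hjk₀.symm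
  exact mul_ne_zero h3 h4 h2

set_option linter.unusedSectionVars false

variable {V : Type*} [Fintype V] [DecidableEq V] (G : SimpleGraph V) [DecidableRel G.Adj]

/-- Back-neighbor set of `u` with respect to root `v`. -/
noncomputable def backSet (v u : V) : Finset V :=
  Finset.univ.filter fun w => G.Adj w u ∧ G.dist v w < G.dist v u

lemma dist_adj_le (hconn : G.Connected) {u w : V} (v : V) (h : G.Adj u w) :
    G.dist v w ≤ G.dist v u + 1 := by
  have h1 : G.dist u w ≤ 1 := by
    simpa using SimpleGraph.dist_le (SimpleGraph.Walk.cons h SimpleGraph.Walk.nil)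
  calc G.dist v w ≤ G.dist v u + G.dist u w := hconn.dist_triangle
    _ ≤ G.dist v u + 1 := by omega

lemma back_exists (hconn : G.Connected) {v u : V} (h : 1 ≤ G.dist v u) :
    ∃ w, G.Adj w u ∧ G.dist v w + 1 = G.dist v u := by
  obtain ⟨p, hp⟩ := hconn.exists_walk_length_eq_dist u v
  have hcomm : G.dist u v = G.dist v u := SimpleGraph.dist_comm
  cases p with
  | nil => rw [← hp] at h; rw [SimpleGraph.Walk.length_nil] at h; omega
  | cons hadj q =>
    rename_i b
    refine ⟨b, hadj.symm, ?_⟩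
    have hq : q.length + 1 = G.dist v u := by
      rw [SimpleGraph.Walk.length_cons] at hp; omega
    have h1 : G.dist v b ≤ q.length := by
      have := SimpleGraph.dist_le q.reverse
      rwa [SimpleGraph.Walk.length_reverse] at this
    have h2 : G.dist v u ≤ G.dist v b + 1 := dist_adj_le G hconn v hadj.symm
    omega

lemma back_two (hconn : G.Connected)
    (hP : ∀ i j : V, i ≠ j → ¬ G.Adj i j →
      (Finset.univ.filter fun k => G.Adj i k ∧ G.Adj j k).card ≠ 1)
    {v u : V} (h : 2 ≤ G.dist v u) : 2 ≤ (backSet G v u).card := by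
  obtain ⟨w, hwu, hw⟩ := back_exists G hconn (by omega : 1 ≤ G.dist v u)
  obtain ⟨x, hxw, hx⟩ := back_exists G hconn (by omega : 1 ≤ G.dist v w)
  have hxu : ¬ G.Adj x u := fun hadj => by
    have := dist_adj_le G hconn v hadj
    omega
  have hxune : x ≠ u := fun he => by rw [he] at hx; omega
  have hmem : ∀ k, G.Adj x k → G.Adj u k → k ∈ backSet G v u := by
    intro k h1 h2
    have hle : G.dist v k ≤ G.dist v x + 1 := dist_adj_le G hconn v h1
    have hge : G.dist v u ≤ G.dist v k + 1 := dist_adj_le G hconn v h2.symm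
    exact Finset.mem_filter.mpr ⟨Finset.mem_univ _, h2.symm, by omega⟩
  have hwmem : w ∈ Finset.univ.filter fun k => G.Adj x k ∧ G.Adj u k :=
    Finset.mem_filter.mpr ⟨Finset.mem_univ _, hxw, hwu.symm⟩
  have hcard : (Finset.univ.filter fun k => G.Adj x k ∧ G.Adj u k).card ≠ 1 :=
    hP x u hxune hxu
  have h2le : 2 ≤ (Finset.univ.filter fun k => G.Adj x k ∧ G.Adj u k).card := by
    have := Finset.card_pos.mpr ⟨w, hwmem⟩
    omega
  obtain ⟨a, ha, b, hb, hab⟩ := Finset.one_lt_card.mp h2le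
  rw [Finset.mem_filter] at ha hb
  have hamem := hmem a ha.2.1 ha.2.2
  have hbmem := hmem b hb.2.1 hb.2.2
  exact Finset.one_lt_card.mpr ⟨a, hamem, b, hbmem, hab⟩

lemma back_one (hconn : G.Connected) {v u : V} (h : 1 ≤ G.dist v u) :
    1 ≤ (backSet G v u).card := by
  obtain ⟨w, hwu, hw⟩ := back_exists G hconn h
  exact Finset.card_pos.mpr ⟨w, Finset.mem_filter.mpr ⟨Finset.mem_univ _, hwu, by omega⟩⟩

lemma sum_back_le (v : V) (T : Finset (Sym2 V))
    (hT : ∀ u w : V, G.Adj w u → G.dist v w < G.dist v u → s(u, w) ∈ T) :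
    ∑ u : V, (backSet G v u).card ≤ T.card := by
  rw [← Finset.card_sigma]
  apply Finset.card_le_card_of_injOn (fun p => s(p.1, p.2))
  · intro p hp
    rw [Finset.mem_coe, Finset.mem_sigma] at hp
    obtain ⟨-, hp2⟩ := hp
    rw [backSet, Finset.mem_filter] at hp2
    exact hT p.1 p.2 hp2.2.1 hp2.2.2
  · intro p hp q hq he
    rw [Finset.mem_coe, Finset.mem_sigma] at hp hq
    obtain ⟨u, w⟩ := p
    obtain ⟨u', w'⟩ := q
    simp only [backSet, Finset.mem_filter] at hp hq
    simp only [Sym2.eq_iff] at he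
    rcases he with ⟨h1, h2⟩ | ⟨h1, h2⟩
    · subst h1; subst h2; rfl
    · subst h1; subst h2
      exact absurd hq.2.2.2 (by omega)

lemma comb_main (hconn : G.Connected) (hn : 3 ≤ Fintype.card V)
    (hP : ∀ i j : V, i ≠ j → ¬ G.Adj i j →
      (Finset.univ.filter fun k => G.Adj i k ∧ G.Adj j k).card ≠ 1) :
    2 * Fintype.card V - 4 ≤ G.edgeFinset.card := by
  have huniv : (Finset.univ : Finset V).Nonempty := by
    rw [← Finset.card_pos, Finset.card_univ]; omega
  obtain ⟨v, -, hv⟩ := Finset.exists_min_image (α := ℕ) Finset.univ (fun u => G.degree u) huniv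
  have hvmin : ∀ u : V, G.degree v ≤ G.degree u := fun u => hv u (Finset.mem_univ u)
  have hsumdeg : ∑ u : V, G.degree u = 2 * G.edgeFinset.card :=
    SimpleGraph.sum_degrees_eq_twice_card_edges G
  have hdegsum : Fintype.card V * G.degree v ≤ 2 * G.edgeFinset.card := by
    rw [← hsumdeg]
    calc Fintype.card V * G.degree v = ∑ _u : V, G.degree v := by
          rw [Finset.sum_const, Finset.card_univ, smul_eq_mul, mul_comm]
      _ ≤ ∑ u : V, G.degree u := Finset.sum_le_sum fun u _ => hvmin u
  by_cases hδ4 : 4 ≤ G.degree v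
  · have : Fintype.card V * 4 ≤ Fintype.card V * G.degree v :=
      Nat.mul_le_mul_left _ hδ4
    omega
  -- δ ≤ 3
  set c : V → ℕ := fun u => if u = v then 0 else if G.Adj v u then 1 else 2 with hc
  have hc_le : ∀ u : V, c u ≤ (backSet G v u).card := by
    intro u
    by_cases h1 : u = v
    · simp [hc, h1]
    by_cases h2 : G.Adj v u
    · have : c u = 1 := by simp [hc, h1, h2]
      rw [this]
      apply back_one G hconn
      rw [SimpleGraph.dist_eq_one_iff_adj.mpr h2]
    · have : c u = 2 := by simp [hc, h1, h2]
      rw [this]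
      apply back_two G hconn hP
      have hpos : 0 < G.dist v u := hconn.pos_dist_of_ne (Ne.symm h1)
      have hne1 : G.dist v u ≠ 1 := fun he =>
        h2 (SimpleGraph.dist_eq_one_iff_adj.mp he)
      omega
  have hcsum : (∑ u : V, c u) + (G.degree v + 2) = 2 * Fintype.card V := by
    have h1 : ∀ u ∈ Finset.univ, c u + ((if G.Adj v u then 1 else 0)
        + (if u = v then 2 else 0)) = 2 := by
      intro u _
      by_cases ha : u = v
      · subst ha
        simp [hc, (G.irrefl : ¬ G.Adj u u)]
      by_cases hb : G.Adj v u <;> simp [hc, ha, hb]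
    have h2 : ∑ u : V, (if G.Adj v u then 1 else 0) = G.degree v := by
      rw [Finset.sum_boole]
      simp [SimpleGraph.degree, SimpleGraph.neighborFinset_eq_filter]
    have h3 : ∑ u : V, (if u = v then 2 else 0) = 2 := by
      simp
    calc (∑ u : V, c u) + (G.degree v + 2)
        = ∑ u : V, (c u + ((if G.Adj v u then 1 else 0) + (if u = v then 2 else 0))) := by
          rw [Finset.sum_add_distrib, Finset.sum_add_distrib, h2, h3]
      _ = ∑ _u : V, 2 := Finset.sum_congr rfl h1
      _ = 2 * Fintype.card V := by rw [Finset.sum_const, Finset.card_univ, smul_eq_mul, mul_comm]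
  by_cases hδ2 : G.degree v ≤ 2
  · -- e ≥ ∑ c = 2n - 2 - δ ≥ 2n - 4
    have h1 : ∑ u : V, c u ≤ ∑ u : V, (backSet G v u).card :=
      Finset.sum_le_sum fun u _ => hc_le u
    have h2 : ∑ u : V, (backSet G v u).card ≤ G.edgeFinset.card := by
      apply sum_back_le
      intro u w hadj _
      rw [SimpleGraph.mem_edgeFinset, SimpleGraph.mem_edgeSet]
      exact hadj.symm
    omega
  -- δ = 3
  have hδ3 : G.degree v = 3 := by omega
  by_cases hsame : ∃ x y : V, G.Adj x y ∧ G.dist v x = G.dist v y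
  · obtain ⟨x, y, hxy, hdxy⟩ := hsame
    have hmem : s(x, y) ∈ G.edgeFinset := by
      rw [SimpleGraph.mem_edgeFinset, SimpleGraph.mem_edgeSet]; exact hxy
    have h2 : ∑ u : V, (backSet G v u).card ≤ (G.edgeFinset.erase s(x, y)).card := by
      apply sum_back_le
      intro u w hadj hlt
      rw [Finset.mem_erase]
      constructor
      · intro he
        rw [Sym2.eq_iff] at he
        rcases he with ⟨h1, h2⟩ | ⟨h1, h2⟩ <;> subst h1 <;> subst h2 <;> omega
      · rw [SimpleGraph.mem_edgeFinset, SimpleGraph.mem_edgeSet]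
        exact hadj.symm
    have h3 : (G.edgeFinset.erase s(x, y)).card = G.edgeFinset.card - 1 :=
      Finset.card_erase_of_mem hmem
    have h4 : 1 ≤ G.edgeFinset.card := Finset.card_pos.mpr ⟨_, hmem⟩
    have h1 : ∑ u : V, c u ≤ ∑ u : V, (backSet G v u).card :=
      Finset.sum_le_sum fun u _ => hc_le u
    omega
  push_neg at hsame
  by_cases hfar : ∃ u : V, 2 ≤ G.dist v u
  · obtain ⟨u₁, hu₁⟩ := hfar
    obtain ⟨u₀, -, hu₀⟩ := Finset.exists_max_image (α := ℕ) Finset.univ (fun u => G.dist v u) huniv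
    have hmax : ∀ u : V, G.dist v u ≤ G.dist v u₀ := fun u => hu₀ u (Finset.mem_univ u)
    have h2d : 2 ≤ G.dist v u₀ := le_trans hu₁ (hmax u₁)
    have hnbr : G.neighborFinset u₀ ⊆ backSet G v u₀ := by
      intro w hw
      rw [SimpleGraph.mem_neighborFinset] at hw
      rw [backSet, Finset.mem_filter]
      refine ⟨Finset.mem_univ _, hw.symm, ?_⟩
      have := hmax w
      have := hsame u₀ w hw
      omega
    have hb3 : 3 ≤ (backSet G v u₀).card := by
      calc 3 = G.degree v := hδ3.symm
        _ ≤ G.degree u₀ := hvmin u₀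
        _ = (G.neighborFinset u₀).card := rfl
        _ ≤ (backSet G v u₀).card := Finset.card_le_card hnbr
    have hcu₀ : c u₀ = 2 := by
      have h1 : u₀ ≠ v := by
        intro he; rw [he] at h2d; rw [SimpleGraph.dist_self] at h2d; omega
      have h2 : ¬ G.Adj v u₀ := fun ha => by
        rw [← SimpleGraph.dist_eq_one_iff_adj] at ha; omega
      simp [hc, h1, h2]
    have hlt : ∑ u : V, c u < ∑ u : V, (backSet G v u).card := by
      apply Finset.sum_lt_sum (fun u _ => hc_le u)
      exact ⟨u₀, Finset.mem_univ _, by omega⟩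
    have h2 : ∑ u : V, (backSet G v u).card ≤ G.edgeFinset.card := by
      apply sum_back_le
      intro u w hadj _
      rw [SimpleGraph.mem_edgeFinset, SimpleGraph.mem_edgeSet]
      exact hadj.symm
    omega
  · push_neg at hfar
    have hsub : Finset.univ.erase v ⊆ G.neighborFinset v := by
      intro u hu
      rw [Finset.mem_erase] at hu
      rw [SimpleGraph.mem_neighborFinset]
      have hpos : 0 < G.dist v u := hconn.pos_dist_of_ne (Ne.symm hu.1)
      have := hfar u
      exact SimpleGraph.dist_eq_one_iff_adj.mp (by omega)
    have h1 : Fintype.card V - 1 ≤ 3 := by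
      calc Fintype.card V - 1 = (Finset.univ.erase v).card := by
            rw [Finset.card_erase_of_mem (Finset.mem_univ v), Finset.card_univ]
        _ ≤ (G.neighborFinset v).card := Finset.card_le_card hsub
        _ = G.degree v := rfl
        _ = 3 := hδ3
    -- n ≤ 4, so 2e ≥ 3n ≥ 4n - 8
    rw [hδ3] at hdegsum
    omega

end Aux

/-- A connected graph on `n ≥ 3` vertices with `q(G) = 2` has at least `2n - 4` edges. -/
theorem stmt9 {V : Type*} [Fintype V] [DecidableEq V] (G : SimpleGraph V)
    (hconn : G.Connected) (hn : 3 ≤ Fintype.card V) (hq : qGraph G = 2) :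
    2 * Fintype.card V - 4 ≤ G.edgeSet.ncard := by
  classical
  have hS : ((fun A => (spectrum ℝ A).ncard) '' SOfGraph G).Nonempty := by
    by_contra h
    rw [Set.not_nonempty_iff_eq_empty] at h
    rw [qGraph, h, Nat.sInf_empty] at hq
    omega
  have h2mem : 2 ∈ (fun A => (spectrum ℝ A).ncard) '' SOfGraph G := by
    rw [← hq]; exact Nat.sInf_mem hS
  obtain ⟨A, hA, hcard⟩ := h2mem
  obtain ⟨hsym, hp⟩ := hA
  obtain ⟨l, m, hlm, hspec⟩ := Set.ncard_eq_two.mp hcard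
  have hquad := two_eig_quad A hsym l m hspec
  have hP := common_nbr G A hp l m hquad
  have hcomb := comb_main G hconn hn hP
  rw [← SimpleGraph.coe_edgeFinset, Set.ncard_coe_finset]
  exact hcomb
end

section
/- Let G be a connected finite simple graph on n ≥ 3 vertices with q(G) = 2 and minimum degree at least 3, and let v be a vertex of G. Suppose that every vertex of N_i(v) for 2 ≤ i ≤ ε(v) − 1 has exactly two predecessors, and that each set N_i(v) for 1 ≤ i ≤ ε(v) − 1 is an independent set. Then |N_{j−1}(v)| ≤ |N_j(v)| for every 1 ≤ j ≤ ε(v) − 1. -/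
open Matrix

section Aux

variable {V : Type*} [Fintype V] [DecidableEq V]

private lemma ncard_eq_filter_card (p : V → Prop) [DecidablePred p] :
    {w : V | p w}.ncard = (Finset.univ.filter p).card := by
  rw [Set.ncard_eq_toFinset_card']
  simp [Set.toFinset_setOf]

private lemma quad_eq_zero {A : Matrix V V ℝ} (hA : A.IsHermitian) {l m : ℝ}
    (hev : ∀ i, hA.eigenvalues i = l ∨ hA.eigenvalues i = m) :
    (A - l • 1) * (A - m • 1) = 0 := by
  set U : Matrix V V ℝ := (hA.eigenvectorUnitary : Matrix V V ℝ) with hUdef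
  set D : Matrix V V ℝ := diagonal (RCLike.ofReal ∘ hA.eigenvalues) with hDdef
  have hU1 : U * star U = 1 := mem_unitaryGroup_iff.mp hA.eigenvectorUnitary.2
  have hU2 : star U * U = 1 := mem_unitaryGroup_iff'.mp hA.eigenvectorUnitary.2
  have hsd : A = U * D * star U := hA.spectral_theorem
  have h1 : ∀ c : ℝ, U * (D - c • 1) * star U = A - c • 1 := by
    intro c
    rw [Matrix.mul_sub, Matrix.mul_smul, Matrix.mul_one, Matrix.sub_mul, Matrix.smul_mul, hU1,
      ← hsd]
  have hsub : ∀ c : ℝ, D - c • 1 = diagonal (fun i => hA.eigenvalues i - c) := by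
    intro c
    ext i k
    rcases eq_or_ne i k with rfl | h
    · simp [hDdef, RCLike.ofReal_real_eq_id]
    · simp [hDdef, diagonal_apply_ne _ h, Matrix.one_apply_ne h]
  have hDD : (D - l • 1) * (D - m • 1) = 0 := by
    rw [hsub l, hsub m, diagonal_mul_diagonal]
    ext i k
    by_cases h : i = k
    · subst h
      simp only [diagonal_apply_eq, Pi.mul_apply, Matrix.zero_apply]
      rcases hev i with h | h <;> rw [h] <;> ring
    · simp [diagonal_apply_ne _ h, h]
  rw [← h1 l, ← h1 m]
  simp only [Matrix.mul_assoc]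
  rw [← Matrix.mul_assoc (star U) U, hU2, Matrix.one_mul,
    ← Matrix.mul_assoc (D - l • 1) (D - m • 1), hDD, Matrix.zero_mul, Matrix.mul_zero]

private lemma dist_le_of_adj {G : SimpleGraph V} (hconn : G.Connected) {v a b : V}
    (h : G.Adj a b) : G.dist v b ≤ G.dist v a + 1 := by
  have h1 : G.dist a b = 1 := SimpleGraph.dist_eq_one_iff_adj.mpr h
  have h2 := hconn.dist_triangle (u := v) (v := a) (w := b)
  omega

end Aux

/-- Let `G` be connected on `n ≥ 3` vertices with `q(G) = 2` and minimum degree at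
least `3`, and let `v` be a vertex. If every vertex of `N_i(v)` for
`2 ≤ i ≤ ε(v) - 1` has exactly two predecessors and each `N_i(v)` for
`1 ≤ i ≤ ε(v) - 1` is independent, then the truncated distance sequence of `v`
is nondecreasing. -/
theorem stmt11 {V : Type*} [Fintype V] [DecidableEq V] (G : SimpleGraph V)
    (hconn : G.Connected) (hn : 3 ≤ Fintype.card V) (hq : qGraph G = 2)
    (hdeg : ∀ w : V, 3 ≤ (G.neighborSet w).ncard)
    (v : V)
    (hpred : ∀ i : ℕ, 2 ≤ i → i ≤ graphEccent G v - 1 → ∀ u : V, G.dist v u = i →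
      {w : V | G.Adj u w ∧ G.dist v w = i - 1}.ncard = 2)
    (hind : ∀ i : ℕ, 1 ≤ i → i ≤ graphEccent G v - 1 →
      ∀ w₁ w₂ : V, G.dist v w₁ = i → G.dist v w₂ = i → ¬ G.Adj w₁ w₂) :
    ∀ j : ℕ, 1 ≤ j → j ≤ graphEccent G v - 1 →
      {w : V | G.dist v w = j - 1}.ncard ≤ {w : V | G.dist v w = j}.ncard := by
  classical
  -- Extract a matrix with exactly two distinct eigenvalues.
  have himg : 2 ∈ (fun A : Matrix V V ℝ => (spectrum ℝ A).ncard) '' SOfGraph G := by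
    have hne : ((fun A : Matrix V V ℝ => (spectrum ℝ A).ncard) '' SOfGraph G).Nonempty := by
      by_contra h
      rw [Set.not_nonempty_iff_eq_empty] at h
      rw [qGraph, h, Nat.sInf_empty] at hq
      omega
    have h2 := Nat.sInf_mem hne
    rwa [show sInf ((fun A : Matrix V V ℝ => (spectrum ℝ A).ncard) '' SOfGraph G) = 2 from hq]
      at h2
  obtain ⟨A, hAS, hA2⟩ := himg
  obtain ⟨hsym, hpat⟩ := hAS
  have hherm : A.IsHermitian := by
    rw [Matrix.IsHermitian, Matrix.conjTranspose_eq_transpose_of_trivial]; exact hsym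
  obtain ⟨l, m, hlm, hspec⟩ := Set.ncard_eq_two.mp hA2
  have hev : ∀ i, hherm.eigenvalues i = l ∨ hherm.eigenvalues i = m := by
    intro i
    have h := hherm.eigenvalues_mem_spectrum_real i
    rw [hspec] at h
    simpa using h
  have hquad := quad_eq_zero hherm hev
  -- key orthogonality relation
  have horth : ∀ u x : V, u ≠ x → ¬ G.Adj u x → ∑ y, A u y * A y x = 0 := by
    intro u x hux hnadj
    have hAux : A u x = 0 := by
      by_contra hne0; exact hnadj ((hpat u x hux).mp hne0)
    have h0 : ((A - l • 1) * (A - m • 1)) u x = 0 := by rw [hquad]; simp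
    rw [Matrix.mul_apply] at h0
    have hsplit : ∀ y : V, (A - l • (1 : Matrix V V ℝ)) u y * (A - m • 1) y x
        = A u y * A y x - m * (A u y * (1 : Matrix V V ℝ) y x)
          - l * ((1 : Matrix V V ℝ) u y * A y x)
          + l * m * ((1 : Matrix V V ℝ) u y * (1 : Matrix V V ℝ) y x) := by
      intro y
      simp only [Matrix.sub_apply, Matrix.smul_apply, smul_eq_mul]
      ring
    rw [Finset.sum_congr rfl (fun y _ => hsplit y)] at h0
    rw [Finset.sum_add_distrib, Finset.sum_sub_distrib, Finset.sum_sub_distrib,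
      ← Finset.mul_sum, ← Finset.mul_sum, ← Finset.mul_sum] at h0
    have e1 : ∑ y, A u y * (1 : Matrix V V ℝ) y x = A u x := by
      rw [← Matrix.mul_apply, Matrix.mul_one]
    have e2 : ∑ y, (1 : Matrix V V ℝ) u y * A y x = A u x := by
      rw [← Matrix.mul_apply, Matrix.one_mul]
    have e3 : ∑ y, (1 : Matrix V V ℝ) u y * (1 : Matrix V V ℝ) y x = 0 := by
      rw [← Matrix.mul_apply, Matrix.one_mul]
      exact Matrix.one_apply_ne hux
    rw [e1, e2, e3, hAux] at h0
    simpa using h0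
  -- degree in Finset form
  have hdeg' : ∀ w : V, 3 ≤ (Finset.univ.filter fun x => G.Adj w x).card := by
    intro w
    have h := hdeg w
    have h2 : (G.neighborSet w) = {x : V | G.Adj w x} := rfl
    rwa [h2, ncard_eq_filter_card] at h
  -- every vertex at level i-1 (2 ≤ i ≤ ε-1) has at least two successors
  have hsucc : ∀ i : ℕ, 2 ≤ i → i ≤ graphEccent G v - 1 → ∀ u : V, G.dist v u = i - 1 →
      2 ≤ (Finset.univ.filter fun w => G.Adj u w ∧ G.dist v w = i).card := by
    intro i hi2 hiE u hu
    have hadj_mem : ∀ w, G.Adj u w →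
        G.dist v w = i - 2 ∨ G.dist v w = i - 1 ∨ G.dist v w = i := by
      intro w hw
      have h1 := dist_le_of_adj hconn (v := v) hw
      have h2 := dist_le_of_adj hconn (v := v) hw.symm
      omega
    have hsame : ∀ w, G.Adj u w → G.dist v w ≠ i - 1 := by
      intro w hw hwd
      exact hind (i - 1) (by omega) (by omega) u w hu hwd hw
    have hcover : (Finset.univ.filter fun x => G.Adj u x) ⊆
        (Finset.univ.filter fun w => G.Adj u w ∧ G.dist v w = i - 2) ∪
        (Finset.univ.filter fun w => G.Adj u w ∧ G.dist v w = i) := by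
      intro w hw
      simp only [Finset.mem_filter, Finset.mem_union, Finset.mem_univ, true_and] at hw ⊢
      rcases hadj_mem w hw with h | h | h
      · exact Or.inl ⟨hw, h⟩
      · exact absurd h (hsame w hw)
      · exact Or.inr ⟨hw, h⟩
    have hb : 3 ≤ (Finset.univ.filter fun w => G.Adj u w ∧ G.dist v w = i - 2).card +
        (Finset.univ.filter fun w => G.Adj u w ∧ G.dist v w = i).card := by
      calc 3 ≤ (Finset.univ.filter fun x => G.Adj u x).card := hdeg' u
        _ ≤ ((Finset.univ.filter fun w => G.Adj u w ∧ G.dist v w = i - 2) ∪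
            (Finset.univ.filter fun w => G.Adj u w ∧ G.dist v w = i)).card :=
          Finset.card_le_card hcover
        _ ≤ _ := Finset.card_union_le _ _
    rcases Nat.lt_or_ge i 3 with h3 | h3
    · -- i = 2 : at most one predecessor, namely v
      have hi2' : i = 2 := by omega
      have hsub : (Finset.univ.filter fun w => G.Adj u w ∧ G.dist v w = i - 2) ⊆ {v} := by
        intro w hw
        simp only [Finset.mem_filter, Finset.mem_univ, true_and] at hw
        have h0 : G.dist v w = 0 := by omega
        rw [hconn.dist_eq_zero_iff] at h0
        simp [h0]
      have : (Finset.univ.filter fun w => G.Adj u w ∧ G.dist v w = i - 2).card ≤ 1 := by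
        calc _ ≤ ({v} : Finset V).card := Finset.card_le_card hsub
          _ = 1 := Finset.card_singleton v
      omega
    · -- i ≥ 3 : exactly two predecessors
      have hpc : (Finset.univ.filter fun w => G.Adj u w ∧ G.dist v w = i - 2).card = 2 := by
        have h := hpred (i - 1) (by omega) (by omega) u hu
        have he : i - 1 - 1 = i - 2 := by omega
        rw [he, ncard_eq_filter_card] at h
        exact h
      by_contra hcon
      push_neg at hcon
      have hs1 : (Finset.univ.filter fun w => G.Adj u w ∧ G.dist v w = i).card = 1 := by omega
      obtain ⟨s, hs⟩ := Finset.card_eq_one.mp hs1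
      have hsmem : G.Adj u s ∧ G.dist v s = i := by
        have : s ∈ (Finset.univ.filter fun w => G.Adj u w ∧ G.dist v w = i) := by
          rw [hs]; exact Finset.mem_singleton_self s
        simpa using this
      -- s has a successor x at level i+1
      have hs_adj_mem : ∀ x, G.Adj s x →
          G.dist v x = i - 1 ∨ G.dist v x = i ∨ G.dist v x = i + 1 := by
        intro x hx
        have h1 := dist_le_of_adj hconn (v := v) hx
        have h2 := dist_le_of_adj hconn (v := v) hx.symm
        rw [hsmem.2] at h1 h2
        omega
      have hs_same : ∀ x, G.Adj s x → G.dist v x ≠ i := by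
        intro x hx hxd
        exact hind i (by omega) hiE s x hsmem.2 hxd hx
      have hs_pred : (Finset.univ.filter fun x => G.Adj s x ∧ G.dist v x = i - 1).card = 2 := by
        have h := hpred i (by omega) hiE s hsmem.2
        rw [ncard_eq_filter_card] at h
        exact h
      have hs_cover : (Finset.univ.filter fun x => G.Adj s x) ⊆
          (Finset.univ.filter fun x => G.Adj s x ∧ G.dist v x = i - 1) ∪
          (Finset.univ.filter fun x => G.Adj s x ∧ G.dist v x = i + 1) := by
        intro x hx
        simp only [Finset.mem_filter, Finset.mem_union, Finset.mem_univ, true_and] at hx ⊢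
        rcases hs_adj_mem x hx with h | h | h
        · exact Or.inl ⟨hx, h⟩
        · exact absurd h (hs_same x hx)
        · exact Or.inr ⟨hx, h⟩
      have hs_succ : 1 ≤ (Finset.univ.filter fun x => G.Adj s x ∧ G.dist v x = i + 1).card := by
        have hb2 : 3 ≤ (Finset.univ.filter fun x => G.Adj s x ∧ G.dist v x = i - 1).card +
            (Finset.univ.filter fun x => G.Adj s x ∧ G.dist v x = i + 1).card := by
          calc 3 ≤ (Finset.univ.filter fun x => G.Adj s x).card := hdeg' s
            _ ≤ _ := Finset.card_le_card hs_cover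
            _ ≤ _ := Finset.card_union_le _ _
        omega
      obtain ⟨x, hx⟩ := Finset.card_pos.mp (by omega : 0 <
        (Finset.univ.filter fun x => G.Adj s x ∧ G.dist v x = i + 1).card)
      simp only [Finset.mem_filter, Finset.mem_univ, true_and] at hx
      obtain ⟨hsx, hxd⟩ := hx
      -- derive the contradiction via orthogonality
      have hux : u ≠ x := by
        intro h; rw [h, hxd] at hu; omega
      have hnadj : ¬ G.Adj u x := by
        intro h
        have := dist_le_of_adj hconn (v := v) h
        rw [hu, hxd] at this
        omega
      have h0 := horth u x hux hnadj
      have hone : ∑ y, A u y * A y x = A u s * A s x := by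
        apply Finset.sum_eq_single_of_mem s (Finset.mem_univ s)
        intro y _ hys
        by_cases hAy : A u y = 0
        · rw [hAy, zero_mul]
        · rcases eq_or_ne u y with rfl | huy
          · have : A u x = 0 := by
              by_contra hh; exact hnadj ((hpat u x hux).mp hh)
            rw [this, mul_zero]
          · have hadjy : G.Adj u y := (hpat u y huy).mp hAy
            have hyd : G.dist v y = i - 2 := by
              rcases hadj_mem y hadjy with h | h | h
              · exact h
              · exact absurd h (hsame y hadjy)
              · exfalso
                apply hys
                have : y ∈ (Finset.univ.filter fun w => G.Adj u w ∧ G.dist v w = i) := by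
                  simp [hadjy, h]
                rw [hs] at this
                simpa using this
            have hyx : y ≠ x := by
              intro h; rw [h, hxd] at hyd; omega
            have hnadjyx : ¬ G.Adj y x := by
              intro h
              have := dist_le_of_adj hconn (v := v) h
              rw [hyd, hxd] at this
              omega
            have : A y x = 0 := by
              by_contra hh; exact hnadjyx ((hpat y x hyx).mp hh)
            rw [this, mul_zero]
      rw [hone] at h0
      have hus : u ≠ s := by
        intro h; rw [h, hsmem.2] at hu; omega
      have hsxne : s ≠ x := by
        intro h; rw [h, hxd] at hsmem; omega
      have h1 : A u s ≠ 0 := (hpat u s hus).mpr hsmem.1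
      have h2 : A s x ≠ 0 := (hpat s x hsxne).mpr hsx
      exact absurd h0 (mul_ne_zero h1 h2)
  -- main conclusion
  intro j hj1 hjE
  rcases eq_or_lt_of_le hj1 with hj1' | hj2
  · -- j = 1
    have hj : j = 1 := hj1'.symm
    subst hj
    have hL0 : {w : V | G.dist v w = 1 - 1} = {v} := by
      ext w
      simp only [Set.mem_setOf_eq, Set.mem_singleton_iff]
      rw [show (1 : ℕ) - 1 = 0 from rfl, hconn.dist_eq_zero_iff]
      exact eq_comm
    rw [hL0, Set.ncard_singleton]
    obtain ⟨w, hw⟩ := Finset.card_pos.mp (by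
      have := hdeg' v; omega : 0 < (Finset.univ.filter fun x => G.Adj v x).card)
    simp only [Finset.mem_filter, Finset.mem_univ, true_and] at hw
    have hw1 : G.dist v w = 1 := SimpleGraph.dist_eq_one_iff_adj.mpr hw
    rw [ncard_eq_filter_card]
    have : 0 < (Finset.univ.filter fun w => G.dist v w = 1).card :=
      Finset.card_pos.mpr ⟨w, by simp only [Finset.mem_filter, Finset.mem_univ, true_and]; exact hw1⟩
    omega
  · -- 2 ≤ j
    have hj2' : 2 ≤ j := hj2
    rw [ncard_eq_filter_card, ncard_eq_filter_card]
    have hLHS : ∀ u ∈ (Finset.univ.filter fun w => G.dist v w = j - 1),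
        2 ≤ ∑ w ∈ (Finset.univ.filter fun w => G.dist v w = j),
          (if G.Adj u w then 1 else 0) := by
      intro u hu
      simp only [Finset.mem_filter, Finset.mem_univ, true_and] at hu
      have hfe : (Finset.univ.filter fun w => G.dist v w = j).filter (fun w => G.Adj u w)
          = Finset.univ.filter fun w => G.Adj u w ∧ G.dist v w = j := by
        ext w
        simp only [Finset.mem_filter, Finset.mem_univ, true_and]
        tauto
      calc 2 ≤ (Finset.univ.filter fun w => G.Adj u w ∧ G.dist v w = j).card :=
            hsucc j hj2' hjE u hu
        _ = ((Finset.univ.filter fun w => G.dist v w = j).filter (fun w => G.Adj u w)).card := by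
            rw [hfe]
        _ = _ := Finset.card_filter _ _
    have hRHS : ∀ w ∈ (Finset.univ.filter fun w => G.dist v w = j),
        ∑ u ∈ (Finset.univ.filter fun w => G.dist v w = j - 1),
          (if G.Adj u w then 1 else 0) = 2 := by
      intro w hw
      simp only [Finset.mem_filter, Finset.mem_univ, true_and] at hw
      have h := hpred j hj2' hjE w hw
      rw [ncard_eq_filter_card] at h
      have hfe : (Finset.univ.filter fun u => G.dist v u = j - 1).filter (fun u => G.Adj u w)
          = Finset.univ.filter fun u => G.Adj w u ∧ G.dist v u = j - 1 := by
        ext u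
        simp only [Finset.mem_filter, Finset.mem_univ, true_and]
        constructor
        · rintro ⟨h1, h2⟩; exact ⟨h2.symm, h1⟩
        · rintro ⟨h1, h2⟩; exact ⟨h2, h1.symm⟩
      calc ∑ u ∈ (Finset.univ.filter fun w => G.dist v w = j - 1),
            (if G.Adj u w then 1 else 0)
          = ((Finset.univ.filter fun u => G.dist v u = j - 1).filter
              (fun u => G.Adj u w)).card := (Finset.card_filter _ _).symm
        _ = (Finset.univ.filter fun u => G.Adj w u ∧ G.dist v u = j - 1).card := by rw [hfe]
        _ = 2 := h
    have hmain : 2 * (Finset.univ.filter fun w => G.dist v w = j - 1).card ≤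
        2 * (Finset.univ.filter fun w => G.dist v w = j).card := by
      calc 2 * (Finset.univ.filter fun w => G.dist v w = j - 1).card
          = ∑ _u ∈ (Finset.univ.filter fun w => G.dist v w = j - 1), 2 := by
            rw [Finset.sum_const, smul_eq_mul, mul_comm]
        _ ≤ ∑ u ∈ (Finset.univ.filter fun w => G.dist v w = j - 1),
              ∑ w ∈ (Finset.univ.filter fun w => G.dist v w = j),
                (if G.Adj u w then 1 else 0) := Finset.sum_le_sum hLHS
        _ = ∑ w ∈ (Finset.univ.filter fun w => G.dist v w = j),
              ∑ u ∈ (Finset.univ.filter fun w => G.dist v w = j - 1),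
                (if G.Adj u w then 1 else 0) := Finset.sum_comm
        _ = ∑ _w ∈ (Finset.univ.filter fun w => G.dist v w = j), 2 :=
            Finset.sum_congr rfl hRHS
        _ = 2 * (Finset.univ.filter fun w => G.dist v w = j).card := by
            rw [Finset.sum_const, smul_eq_mul, mul_comm]
    omega
end

section
/- Let G be a connected finite simple graph with minimum degree at least 3, and let v be a vertex of G. Suppose that every vertex of N_i(v) for 2 ≤ i ≤ ε(v) − 1 has exactly two predecessors, that each set N_i(v) is an independent set, and that |N_j(v)| = |N_{j−1}(v)| = |N_{j−2}(v)| = 3 for some index j with 3 ≤ j ≤ ε(v) − 1. Then q(G) ≥ 3. -/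
open Matrix

lemma pair_of_card_le_two {s : Finset ℝ} (h : s.card ≤ 2) :
    ∃ a b : ℝ, ∀ x ∈ s, x = a ∨ x = b := by
  rcases s.eq_empty_or_nonempty with he | ⟨a, ha⟩
  · exact ⟨0, 0, by simp [he]⟩
  rcases (s.erase a).eq_empty_or_nonempty with he | ⟨b, hb⟩
  · refine ⟨a, a, fun x hx => ?_⟩
    by_contra hxa
    push_neg at hxa
    have : x ∈ s.erase a := Finset.mem_erase.mpr ⟨hxa.1, hx⟩
    simp [he] at this
  · refine ⟨a, b, fun x hx => ?_⟩
    by_contra hxab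
    push_neg at hxab
    have hsub : ({x, b} : Finset ℝ) ⊆ s.erase a := by
      intro y hy
      rcases Finset.mem_insert.mp hy with rfl | hy
      · exact Finset.mem_erase.mpr ⟨hxab.1, hx⟩
      · rw [Finset.mem_singleton] at hy; exact hy ▸ hb
    have h2 : ({x, b} : Finset ℝ).card = 2 := by
      rw [Finset.card_insert_of_notMem (by simp [hxab.2]), Finset.card_singleton]
    have := Finset.card_le_card hsub
    rw [h2] at this
    have := Finset.card_erase_of_mem ha
    omega

lemma quad_zero {n : Type*} [Fintype n] [DecidableEq n] {A : Matrix n n ℝ}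
    (hA : A.IsHermitian) (a b : ℝ)
    (hev : ∀ i, hA.eigenvalues i = a ∨ hA.eigenvalues i = b) :
    (A - a • 1) * (A - b • 1) = 0 := by
  set U : Matrix n n ℝ := (hA.eigenvectorUnitary : Matrix n n ℝ)
  have hU1 : U * star U = 1 := (Matrix.mem_unitaryGroup_iff).mp hA.eigenvectorUnitary.2
  have hU2 : star U * U = 1 := (Matrix.mem_unitaryGroup_iff').mp hA.eigenvectorUnitary.2
  set D : Matrix n n ℝ := diagonal (RCLike.ofReal ∘ hA.eigenvalues)
  have hsp : A = U * D * star U := hA.spectral_theorem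
  have key : ∀ c : ℝ, A - c • 1 = U * (D - c • 1) * star U := by
    intro c
    rw [hsp, mul_sub, sub_mul, Matrix.mul_smul, mul_one, Matrix.smul_mul, hU1]
  rw [key a, key b]
  simp only [mul_assoc]
  rw [← mul_assoc (star U) U ((D - b • 1) * star U), hU2, one_mul]
  have hD : (D - a • 1) * (D - b • 1) = 0 := by
    rw [smul_one_eq_diagonal, smul_one_eq_diagonal]
    show (D - _) * (D - _) = _
    unfold D
    rw [diagonal_sub, diagonal_sub, diagonal_mul_diagonal]
    ext i k
    by_cases hik : i = k
    · subst hik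
      rcases hev i with h | h <;>
        simp [Matrix.diagonal_apply_eq, Function.comp, h]
    · simp [Matrix.diagonal_apply_ne _ hik]
  rw [← mul_assoc (D - a • 1) (D - b • 1), hD, zero_mul, mul_zero]

lemma ncard_filter_eq {V : Type*} [Fintype V] (p : V → Prop) [DecidablePred p] :
    {w | p w}.ncard = (Finset.univ.filter p).card := by
  rw [← Set.toFinset_setOf]
  exact Set.ncard_eq_toFinset_card' _

lemma exists_unique_common {V : Type*} [Fintype V] [DecidableEq V] (G : SimpleGraph V)
    (hconn : G.Connected)
    (hdeg : ∀ w : V, 3 ≤ (G.neighborSet w).ncard)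
    (v : V)
    (hpred : ∀ i : ℕ, 2 ≤ i → i ≤ graphEccent G v - 1 → ∀ u : V, G.dist v u = i →
      {w : V | G.Adj u w ∧ G.dist v w = i - 1}.ncard = 2)
    (hind : ∀ (i : ℕ) (w₁ w₂ : V), G.dist v w₁ = i → G.dist v w₂ = i → ¬ G.Adj w₁ w₂)
    (j : ℕ) (hj : 3 ≤ j) (hje : j ≤ graphEccent G v - 1)
    (h3 : {w : V | G.dist v w = j}.ncard = 3 ∧ {w : V | G.dist v w = j - 1}.ncard = 3 ∧
      {w : V | G.dist v w = j - 2}.ncard = 3) :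
    ∃ u w m0 : V, u ≠ w ∧ ¬ G.Adj u w ∧
      {m : V | G.Adj u m ∧ G.Adj w m} = {m0} := by
  classical
  obtain ⟨k, rfl⟩ : ∃ k, j = k + 3 := ⟨j - 3, by omega⟩
  obtain ⟨hc3, hc2, hc1⟩ := h3
  rw [ncard_filter_eq] at hc3 hc2 hc1
  have hs1 : k + 3 - 1 = k + 2 := by omega
  have hs2 : k + 3 - 2 = k + 1 := by omega
  rw [hs1] at hc2
  rw [hs2] at hc1
  -- distance facts
  have adj_dist : ∀ {x y : V}, G.Adj x y → G.dist v y ≤ G.dist v x + 1 := by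
    intro x y h
    have h1 : G.dist x y = 1 := SimpleGraph.dist_eq_one_iff_adj.mpr h
    calc G.dist v y ≤ G.dist v x + G.dist x y := hconn.dist_triangle
      _ = G.dist v x + 1 := by rw [h1]
  -- Nb x i : neighbors of x at level i
  have Nbcard2 : ∀ (i : ℕ), 2 ≤ i → i ≤ graphEccent G v - 1 → ∀ x : V, G.dist v x = i →
      (Finset.univ.filter (fun m => G.Adj x m ∧ G.dist v m = i - 1)).card = 2 := by
    intro i h2 hle x hx
    have := hpred i h2 hle x hx
    rwa [ncard_filter_eq] at this
  -- successor existence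
  have succ_ne : ∀ (i : ℕ) (x : V), G.dist v x = i + 1 →
      (Finset.univ.filter (fun m => G.Adj x m ∧ G.dist v m = i)).card ≤ 2 →
      (Finset.univ.filter (fun m => G.Adj x m ∧ G.dist v m = i + 2)).Nonempty := by
    intro i x hx hple
    have hdegx : 3 ≤ (Finset.univ.filter (fun y => G.Adj x y)).card := by
      have h := hdeg x
      rw [show G.neighborSet x = {y | G.Adj x y} from rfl, ncard_filter_eq] at h
      exact h
    have hsub : Finset.univ.filter (fun y => G.Adj x y) ⊆
        Finset.univ.filter (fun m => G.Adj x m ∧ G.dist v m = i) ∪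
        Finset.univ.filter (fun m => G.Adj x m ∧ G.dist v m = i + 2) := by
      intro y hy
      rw [Finset.mem_filter] at hy
      have hadj := hy.2
      have h1 : G.dist v y ≤ i + 2 := by
        have := adj_dist hadj; omega
      have h2 : i ≤ G.dist v y := by
        have := adj_dist hadj.symm; omega
      have h3 : G.dist v y ≠ i + 1 := fun h => hind (i + 1) x y hx h hadj
      have : G.dist v y = i ∨ G.dist v y = i + 2 := by omega
      rcases this with h | h
      · exact Finset.mem_union_left _ (Finset.mem_filter.mpr ⟨Finset.mem_univ _, hadj, h⟩)
      · exact Finset.mem_union_right _ (Finset.mem_filter.mpr ⟨Finset.mem_univ _, hadj, h⟩)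
    rw [← Finset.card_pos]
    have := Finset.card_le_card hsub
    have := Finset.card_union_le
      (Finset.univ.filter (fun m => G.Adj x m ∧ G.dist v m = i))
      (Finset.univ.filter (fun m => G.Adj x m ∧ G.dist v m = i + 2))
    omega
  -- predecessor card ≤ 2 for level k+1
  have pred_le2 : ∀ w : V, G.dist v w = k + 1 →
      (Finset.univ.filter (fun m => G.Adj w m ∧ G.dist v m = k)).card ≤ 2 := by
    intro w hw
    rcases Nat.eq_zero_or_pos k with rfl | hk
    · have hsub : Finset.univ.filter (fun m => G.Adj w m ∧ G.dist v m = 0) ⊆ {v} := by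
        intro m hm
        rw [Finset.mem_filter] at hm
        have hr : G.Reachable v m := hconn.preconnected v m
        have := (hr.dist_eq_zero_iff).mp hm.2.2
        exact Finset.mem_singleton.mpr this.symm
      have := Finset.card_le_card hsub
      rw [Finset.card_singleton] at this
      omega
    · have := Nbcard2 (k + 1) (by omega) (by omega) w hw
      have hs : k + 1 - 1 = k := by omega
      rw [hs] at this
      omega
  -- pick u in level k+3
  have hL3ne : (Finset.univ.filter (fun w => G.dist v w = k + 3)).Nonempty :=
    Finset.card_pos.mp (by omega)
  obtain ⟨u, hu⟩ := hL3ne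
  rw [Finset.mem_filter] at hu
  have hud : G.dist v u = k + 3 := hu.2
  set P : Finset V := Finset.univ.filter (fun m => G.Adj u m ∧ G.dist v m = k + 2) with hPdef
  have hPcard : P.card = 2 := by
    have := Nbcard2 (k + 3) (by omega) hje u hud
    rwa [hs1] at this
  have hPsub : P ⊆ Finset.univ.filter (fun w => G.dist v w = k + 2) := by
    intro m hm
    rw [hPdef, Finset.mem_filter] at hm
    exact Finset.mem_filter.mpr ⟨Finset.mem_univ _, hm.2.2⟩
  -- non-adjacency between levels k+3 and k+1
  have nadj : ∀ {a b : V}, G.dist v a = k + 3 → G.dist v b = k + 1 → a ≠ b ∧ ¬ G.Adj a b := by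
    intro a b ha hb
    constructor
    · intro h; rw [h, hb] at ha; omega
    · intro h; have := adj_dist h.symm; omega
  -- squeeze: common neighbor of levels k+3 and k+1 is at level k+2
  have squeeze : ∀ {a b x : V}, G.dist v a = k + 3 → G.dist v b = k + 1 →
      G.Adj a x → G.Adj b x → G.dist v x = k + 2 := by
    intro a b x ha hb hax hbx
    have h1 := adj_dist hax
    have h2 := adj_dist hax.symm
    have h3 := adj_dist hbx
    omega
  by_cases hcase : ∃ w ∈ Finset.univ.filter (fun w => G.dist v w = k + 1),
      (Finset.univ.filter (fun m => G.Adj w m ∧ G.dist v m = k + 2)).card ≤ 1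
  · -- Case A
    obtain ⟨w, hw, hwc⟩ := hcase
    rw [Finset.mem_filter] at hw
    have hwd : G.dist v w = k + 1 := hw.2
    have hne := succ_ne k w hwd (pred_le2 w hwd)
    have hcard1 : (Finset.univ.filter (fun m => G.Adj w m ∧ G.dist v m = k + 2)).card = 1 := by
      have := Finset.card_pos.mpr hne; omega
    obtain ⟨m, hm⟩ := Finset.card_eq_one.mp hcard1
    have hmmem : m ∈ Finset.univ.filter (fun x => G.Adj w x ∧ G.dist v x = k + 2) := by
      rw [hm]; exact Finset.mem_singleton_self m
    rw [Finset.mem_filter] at hmmem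
    obtain ⟨-, hwm, hmd⟩ := hmmem
    have hm2 := succ_ne (k + 1) m hmd (by
      have := Nbcard2 (k + 2) (by omega) (by omega) m hmd
      have hs : k + 2 - 1 = k + 1 := by omega
      rw [hs] at this; omega)
    obtain ⟨u', hu'⟩ := hm2
    rw [Finset.mem_filter] at hu'
    obtain ⟨-, hmu', hu'd⟩ := hu'
    have hu'd' : G.dist v u' = k + 3 := by omega
    refine ⟨u', w, m, (nadj hu'd' hwd).1, (nadj hu'd' hwd).2, ?_⟩
    ext x
    simp only [Set.mem_setOf_eq, Set.mem_singleton_iff]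
    constructor
    · rintro ⟨hux, hwx⟩
      have hxd : G.dist v x = k + 2 := squeeze hu'd' hwd hux hwx
      have : x ∈ Finset.univ.filter (fun y => G.Adj w y ∧ G.dist v y = k + 2) :=
        Finset.mem_filter.mpr ⟨Finset.mem_univ _, hwx, hxd⟩
      rw [hm, Finset.mem_singleton] at this
      exact this
    · rintro rfl
      exact ⟨hmu'.symm, hwm⟩
  · -- Case B
    push_neg at hcase
    -- there is w in level k+1 with |P ∩ succ(w)| = 1
    have hdc : ∑ w ∈ Finset.univ.filter (fun w => G.dist v w = k + 1),
        (P.filter (fun m => G.Adj w m)).card = 4 := by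
      have hswap : ∑ w ∈ Finset.univ.filter (fun w => G.dist v w = k + 1),
          (P.filter (fun m => G.Adj w m)).card
          = ∑ m ∈ P, ((Finset.univ.filter (fun w => G.dist v w = k + 1)).filter
              (fun w => G.Adj w m)).card := by
        simp only [Finset.card_filter]
        rw [Finset.sum_comm]
      rw [hswap]
      have heach : ∀ m ∈ P, ((Finset.univ.filter (fun w => G.dist v w = k + 1)).filter
          (fun w => G.Adj w m)).card = 2 := by
        intro m hm
        have hmd : G.dist v m = k + 2 := by
          have := Finset.mem_filter.mp (hPsub hm); exact this.2
        have := Nbcard2 (k + 2) (by omega) (by omega) m hmd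
        have hs : k + 2 - 1 = k + 1 := by omega
        rw [hs] at this
        rw [← this]
        congr 1
        ext w
        simp only [Finset.mem_filter, Finset.mem_univ, true_and]
        constructor
        · rintro ⟨h1, h2⟩; exact ⟨h2.symm, h1⟩
        · rintro ⟨h1, h2⟩; exact ⟨h2, h1.symm⟩
      rw [Finset.sum_congr rfl heach]
      simp [hPcard]
    have hex1 : ∃ w ∈ Finset.univ.filter (fun w => G.dist v w = k + 1),
        (P.filter (fun m => G.Adj w m)).card = 1 := by
      by_contra hno
      push_neg at hno
      have hall2 : ∀ w ∈ Finset.univ.filter (fun w => G.dist v w = k + 1),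
          (P.filter (fun m => G.Adj w m)).card = 2 := by
        intro w hw
        rw [Finset.mem_filter] at hw
        have hwd : G.dist v w = k + 1 := hw.2
        have hle : (P.filter (fun m => G.Adj w m)).card ≤ 2 := by
          have := Finset.card_le_card (Finset.filter_subset (fun m => G.Adj w m) P)
          omega
        have hne1 := hno w (Finset.mem_filter.mpr ⟨Finset.mem_univ _, hwd⟩)
        have hne0 : (P.filter (fun m => G.Adj w m)).card ≠ 0 := by
          intro h0
          have hemp : P.filter (fun m => G.Adj w m) = ∅ := Finset.card_eq_zero.mp h0
          -- succ(w) ⊆ lvl(k+2) \ P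
          have hsucc2 : 2 ≤ (Finset.univ.filter
              (fun m => G.Adj w m ∧ G.dist v m = k + 2)).card := hcase w
            (Finset.mem_filter.mpr ⟨Finset.mem_univ _, hwd⟩)
          have hsub2 : Finset.univ.filter (fun m => G.Adj w m ∧ G.dist v m = k + 2) ⊆
              (Finset.univ.filter (fun w => G.dist v w = k + 2)) \ P := by
            intro m hmm
            rw [Finset.mem_filter] at hmm
            rw [Finset.mem_sdiff]
            refine ⟨Finset.mem_filter.mpr ⟨Finset.mem_univ _, hmm.2.2⟩, fun hmP => ?_⟩
            have : m ∈ P.filter (fun m => G.Adj w m) :=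
              Finset.mem_filter.mpr ⟨hmP, hmm.2.1⟩
            rw [hemp] at this
            exact absurd this (Finset.notMem_empty m)
          have hsd : ((Finset.univ.filter (fun w => G.dist v w = k + 2)) \ P).card = 1 := by
            rw [Finset.card_sdiff_of_subset hPsub, hc2, hPcard]
          have := Finset.card_le_card hsub2
          omega
        omega
      rw [Finset.sum_congr rfl hall2] at hdc
      simp [hc1] at hdc
    obtain ⟨w, hw, hw1⟩ := hex1
    rw [Finset.mem_filter] at hw
    have hwd : G.dist v w = k + 1 := hw.2
    obtain ⟨m0, hm0⟩ := Finset.card_eq_one.mp hw1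
    have hm0mem : m0 ∈ P.filter (fun m => G.Adj w m) := by
      rw [hm0]; exact Finset.mem_singleton_self m0
    rw [Finset.mem_filter] at hm0mem
    obtain ⟨hm0P, hwm0⟩ := hm0mem
    rw [hPdef, Finset.mem_filter] at hm0P
    obtain ⟨-, hum0, hm0d⟩ := hm0P
    refine ⟨u, w, m0, (nadj hud hwd).1, (nadj hud hwd).2, ?_⟩
    ext x
    simp only [Set.mem_setOf_eq, Set.mem_singleton_iff]
    constructor
    · rintro ⟨hux, hwx⟩
      have hxd : G.dist v x = k + 2 := squeeze hud hwd hux hwx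
      have hxP : x ∈ P := by
        rw [hPdef, Finset.mem_filter]
        exact ⟨Finset.mem_univ _, hux, hxd⟩
      have : x ∈ P.filter (fun m => G.Adj w m) := Finset.mem_filter.mpr ⟨hxP, hwx⟩
      rw [hm0, Finset.mem_singleton] at this
      exact this
    · rintro rfl
      exact ⟨hum0, hwm0⟩

/-- Let `G` be connected with minimum degree at least `3`, and let `v` be a vertex.
If every vertex of `N_i(v)` for `2 ≤ i ≤ ε(v) - 1` has exactly two predecessors,
each `N_i(v)` is independent, and `|N_j(v)| = |N_{j-1}(v)| = |N_{j-2}(v)| = 3` for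
some `3 ≤ j ≤ ε(v) - 1`, then `q(G) ≥ 3`. -/
theorem stmt12 {V : Type*} [Fintype V] [DecidableEq V] (G : SimpleGraph V)
    (hconn : G.Connected)
    (hdeg : ∀ w : V, 3 ≤ (G.neighborSet w).ncard)
    (v : V)
    (hpred : ∀ i : ℕ, 2 ≤ i → i ≤ graphEccent G v - 1 → ∀ u : V, G.dist v u = i →
      {w : V | G.Adj u w ∧ G.dist v w = i - 1}.ncard = 2)
    (hind : ∀ (i : ℕ) (w₁ w₂ : V), G.dist v w₁ = i → G.dist v w₂ = i → ¬ G.Adj w₁ w₂)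
    (j : ℕ) (hj : 3 ≤ j) (hje : j ≤ graphEccent G v - 1)
    (h3 : {w : V | G.dist v w = j}.ncard = 3 ∧ {w : V | G.dist v w = j - 1}.ncard = 3 ∧
      {w : V | G.dist v w = j - 2}.ncard = 3) :
    3 ≤ qGraph G := by
  classical
  obtain ⟨u, w, m0, huw, hnadj, hcommon⟩ :=
    exists_unique_common G hconn hdeg v hpred hind j hj hje h3
  have hA0 : (G.adjMatrix ℝ) ∈ SOfGraph G := by
    refine ⟨G.isSymm_adjMatrix, fun i j hij => ?_⟩
    rw [SimpleGraph.adjMatrix_apply]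
    by_cases h : G.Adj i j <;> simp [h]
  have hne : ((fun A => (spectrum ℝ A).ncard) '' SOfGraph G).Nonempty :=
    ⟨_, ⟨_, hA0, rfl⟩⟩
  obtain ⟨A, hASO, hAeq⟩ := Nat.sInf_mem hne
  rw [qGraph, ← hAeq]
  by_contra hlt
  push_neg at hlt
  obtain ⟨hsymm, hAadj⟩ := hASO
  have hherm : A.IsHermitian := by
    ext i j
    rw [Matrix.conjTranspose_apply, star_trivial]
    exact hsymm.apply i j
  have hfin : (spectrum ℝ A).Finite := A.finite_spectrum
  have hcardle : hfin.toFinset.card ≤ 2 := by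
    rw [← Set.ncard_eq_toFinset_card _ hfin]
    omega
  obtain ⟨a, b, hab⟩ := pair_of_card_le_two hcardle
  have hev : ∀ i, hherm.eigenvalues i = a ∨ hherm.eigenvalues i = b := fun i =>
    hab _ (hfin.mem_toFinset.mpr (hherm.eigenvalues_mem_spectrum_real i))
  have hquad := quad_zero hherm a b hev
  have hAuw : A u w = 0 := by
    by_contra h
    exact hnadj ((hAadj u w huw).mp h)
  have hum0 : G.Adj u m0 ∧ G.Adj w m0 := by
    have : m0 ∈ ({m | G.Adj u m ∧ G.Adj w m} : Set V) := by
      rw [hcommon]; rfl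
    exact this
  have hune : u ≠ m0 := by rintro rfl; exact G.irrefl hum0.1
  have hwne : m0 ≠ w := by rintro rfl; exact G.irrefl hum0.2
  have h0 : ((A - a • 1) * (A - b • 1)) u w = 0 := by rw [hquad]; rfl
  rw [Matrix.mul_apply] at h0
  have hsum : ∑ m : V, (A - a • 1) u m * (A - b • 1) m w = A u m0 * A m0 w := by
    rw [Finset.sum_eq_single_of_mem m0 (Finset.mem_univ _)]
    · simp [Matrix.sub_apply, Matrix.smul_apply, Matrix.one_apply, hune, hwne]
    · intro m _ hm
      by_cases hmu : m = u
      · subst hmu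
        have hz2 : (A - b • 1) m w = 0 := by
          simp [Matrix.sub_apply, Matrix.smul_apply, Matrix.one_apply, huw, hAuw]
        rw [hz2, mul_zero]
      by_cases hmw : m = w
      · subst hmw
        have hz2 : (A - a • 1) u m = 0 := by
          simp [Matrix.sub_apply, Matrix.smul_apply, Matrix.one_apply, huw, hAuw]
        rw [hz2, zero_mul]
      · have hz2 : A u m = 0 ∨ A m w = 0 := by
          by_contra hc
          push_neg at hc
          have h1 : G.Adj u m := (hAadj u m (fun h => hmu h.symm)).mp hc.1
          have h2 : G.Adj m w := (hAadj m w hmw).mp hc.2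
          have : m ∈ ({x | G.Adj u x ∧ G.Adj w x} : Set V) := ⟨h1, h2.symm⟩
          rw [hcommon] at this
          exact hm this
        have hum : u ≠ m := fun h => hmu h.symm
        have he1 : (A - a • 1) u m = A u m := by
          simp [Matrix.sub_apply, Matrix.smul_apply, Matrix.one_apply, hum]
        have he2 : (A - b • 1) m w = A m w := by
          simp [Matrix.sub_apply, Matrix.smul_apply, Matrix.one_apply, hmw]
        rw [he1, he2]
        rcases hz2 with h | h
        · rw [h, zero_mul]
        · rw [h, mul_zero]
  rw [hsum] at h0
  have hAum0 : A u m0 ≠ 0 := (hAadj u m0 hune).mpr hum0.1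
  have hAm0w : A m0 w ≠ 0 := (hAadj m0 w hwne).mpr hum0.2.symm
  exact mul_ne_zero hAum0 hAm0w h0
end

section
/- Let G be a connected finite simple graph on n ≥ 3 vertices with q(G) = 2, and let v be a vertex of degree 2 such that every vertex in N_i(v) for 2 ≤ i ≤ ε(v) has exactly two predecessors and every set N_i(v) is an independent set. Suppose H is an induced subgraph of G isomorphic to a double-ended candle via an isomorphism under which one end of the candle corresponds to v and the other end corresponds to a vertex u ∈ N_j(v) that has no successors. Then H = G (that is, H contains every vertex of G). -/
open Matrix

section Aux
variable {V : Type*} [Fintype V] [DecidableEq V]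

lemma SOfGraph_nonempty (G : SimpleGraph V) : (SOfGraph G).Nonempty := by
  classical
  refine ⟨fun i j => if G.Adj i j then 1 else 0, ?_, ?_⟩
  · ext i j
    show (if G.Adj j i then (1:ℝ) else 0) = (if G.Adj i j then 1 else 0)
    simp [SimpleGraph.adj_comm]
  · intro i j _
    by_cases h : G.Adj i j <;> simp [h]

lemma exists_quadratic_matrix (G : SimpleGraph V) (hq : qGraph G = 2) :
    ∃ A ∈ SOfGraph G, ∀ x y : V, x ≠ y → ¬ G.Adj x y → ∑ w, A x w * A w y = 0 := by
  classical
  have hne : ((fun A => (spectrum ℝ A).ncard) '' SOfGraph G).Nonempty :=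
    (SOfGraph_nonempty G).image _
  have hmem := Nat.sInf_mem hne
  rw [show sInf ((fun A => (spectrum ℝ A).ncard) '' SOfGraph G) = qGraph G from rfl, hq] at hmem
  obtain ⟨A, hA, hcard⟩ := hmem
  obtain ⟨lam, mu, hlm, hspec⟩ := Set.ncard_eq_two.mp hcard
  -- A is hermitian
  have hherm : A.IsHermitian := by
    have := hA.1
    rw [Matrix.IsHermitian, conjTranspose]
    ext i j
    simpa [Matrix.map_apply, Matrix.transpose_apply] using congrFun (congrFun this i) j
  -- quadratic relation
  have hquad : (A - lam • 1) * (A - mu • 1) = 0 := by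
    have hst := hherm.spectral_theorem
    rw [Unitary.conjStarAlgAut_apply] at hst
    set U : Matrix V V ℝ := (hherm.eigenvectorUnitary : Matrix V V ℝ) with hU
    have hUU : U * star U = 1 := (Matrix.mem_unitaryGroup_iff).mp hherm.eigenvectorUnitary.2
    have hsU : star U * U = 1 := (Matrix.mem_unitaryGroup_iff').mp hherm.eigenvectorUnitary.2
    have hdiag : ∀ i, (hherm.eigenvalues i - lam) * (hherm.eigenvalues i - mu) = 0 := by
      intro i
      have : hherm.eigenvalues i ∈ spectrum ℝ A := hherm.eigenvalues_mem_spectrum_real i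
      rw [hspec] at this
      rw [Set.mem_insert_iff, Set.mem_singleton_iff] at this
      rcases this with h | h <;> simp [h]
    have h1 : A - lam • 1 = U * (diagonal (RCLike.ofReal ∘ hherm.eigenvalues) - lam • 1) * star U := by
      rw [Matrix.mul_sub, Matrix.sub_mul, ← hst]
      congr 1
      rw [Matrix.mul_smul, Matrix.smul_mul, Matrix.mul_one, hUU]
    have h2 : A - mu • 1 = U * (diagonal (RCLike.ofReal ∘ hherm.eigenvalues) - mu • 1) * star U := by
      rw [Matrix.mul_sub, Matrix.sub_mul, ← hst]
      congr 1
      rw [Matrix.mul_smul, Matrix.smul_mul, Matrix.mul_one, hUU]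
    have hmid : (diagonal (RCLike.ofReal ∘ hherm.eigenvalues) - lam • (1 : Matrix V V ℝ)) *
        (diagonal (RCLike.ofReal ∘ hherm.eigenvalues) - mu • (1 : Matrix V V ℝ)) = 0 := by
      rw [Matrix.smul_one_eq_diagonal, Matrix.smul_one_eq_diagonal,
        Matrix.diagonal_sub, Matrix.diagonal_sub, Matrix.diagonal_mul_diagonal]
      ext i k
      rcases eq_or_ne i k with rfl | hik
      · simp only [Matrix.diagonal_apply_eq, Matrix.zero_apply]
        simpa using hdiag i
      · simp [Matrix.diagonal_apply_ne _ hik]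
    rw [h1, h2]
    calc U * (diagonal (RCLike.ofReal ∘ hherm.eigenvalues) - lam • (1 : Matrix V V ℝ)) * star U *
          (U * (diagonal (RCLike.ofReal ∘ hherm.eigenvalues) - mu • (1 : Matrix V V ℝ)) * star U)
        = U * ((diagonal (RCLike.ofReal ∘ hherm.eigenvalues) - lam • (1 : Matrix V V ℝ)) *
            (star U * U) *
            (diagonal (RCLike.ofReal ∘ hherm.eigenvalues) - mu • (1 : Matrix V V ℝ))) * star U := by
          noncomm_ring
      _ = 0 := by rw [hsU, Matrix.mul_one, hmid, Matrix.mul_zero, Matrix.zero_mul]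
  refine ⟨A, hA, fun x y hxy hadj => ?_⟩
  have hxy0 : A x y = 0 := by
    by_contra h
    exact hadj ((hA.2 x y hxy).mp h)
  have := congrFun (congrFun hquad x) y
  simp only [Matrix.sub_mul, Matrix.mul_sub, Matrix.sub_apply, Matrix.smul_mul, Matrix.mul_smul,
    Matrix.smul_apply, Matrix.one_mul, Matrix.mul_one, Matrix.zero_apply] at this
  rw [Matrix.mul_apply] at this
  have hone : (1 : Matrix V V ℝ) x y = 0 := Matrix.one_apply_ne hxy
  rw [hxy0] at this
  simp [hone, smul_eq_mul] at this
  convert this using 2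



section Helpers
variable {V : Type*} [Fintype V] [DecidableEq V] {G : SimpleGraph V} {v : V} {A : Matrix V V ℝ}

lemma dist_le_ecc (z : V) : G.dist v z ≤ graphEccent G v :=
  Finset.le_sup (Finset.mem_univ z)

lemma adj_dist (hconn : G.Connected)
    (hind : ∀ (i : ℕ) (w₁ w₂ : V), G.dist v w₁ = i → G.dist v w₂ = i → ¬ G.Adj w₁ w₂)
    {x y : V} (h : G.Adj x y) :
    G.dist v x = G.dist v y + 1 ∨ G.dist v y = G.dist v x + 1 := by
  have h1 : G.dist v x ≤ G.dist v y + 1 := by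
    have := hconn.dist_triangle (u := v) (v := y) (w := x)
    have hd : G.dist y x = 1 := SimpleGraph.dist_eq_one_iff_adj.mpr h.symm
    omega
  have h2 : G.dist v y ≤ G.dist v x + 1 := by
    have := hconn.dist_triangle (u := v) (v := x) (w := y)
    have hd : G.dist x y = 1 := SimpleGraph.dist_eq_one_iff_adj.mpr h
    omega
  have h3 : G.dist v x ≠ G.dist v y := by
    intro heq
    exact hind (G.dist v y) x y heq rfl h
  omega

lemma sum_eq_pair {c d : V} (hcd : c ≠ d) (fn : V → ℝ)
    (h : ∀ y, y ≠ c → y ≠ d → fn y = 0) :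
    ∑ y, fn y = fn c + fn d := by
  classical
  have hsub : ({c, d} : Finset V) ⊆ Finset.univ := Finset.subset_univ _
  rw [← Finset.sum_subset hsub (fun y _ hy => h y
    (fun hc => hy (by simp [hc])) (fun hd' => hy (by simp [hd'])))]
  exact Finset.sum_pair hcd

lemma pair_algebra {a b a' b' α β : ℝ} (ha : a ≠ 0) (hb : b ≠ 0) (ha' : a' ≠ 0) (hb' : b' ≠ 0)
    (hα : α ≠ 0) (hβ : β ≠ 0)
    (h1 : a * α + b * β = 0) (h2 : a' * α + b' * β = 0) (h3 : a * a' + b * b' = 0) : False := by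
  have e1 : a * α = -(b * β) := by linarith
  have e2 : a' * α = -(b' * β) := by linarith
  have e3 : a * a' = -(b * b') := by linarith
  have e4 : (a * α) * (a' * α) = (b * β) * (b' * β) := by rw [e1, e2]; ring
  have e5 : (b * b') * (α * α + β * β) = 0 := by nlinarith [e4, e3]
  have hα2 : α * α > 0 := mul_self_pos.mpr hα
  have hβ2 : β * β > 0 := mul_self_pos.mpr hβ
  have : α * α + β * β > 0 := by linarith
  have hbb : b * b' ≠ 0 := mul_ne_zero hb hb'
  rcases mul_eq_zero.mp e5 with h | h
  · exact hbb h
  · linarith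

/-- The main "engine": two distinct vertices at level `l ≥ 2` whose predecessor sets are both
exactly `{c, d}`, with an anchor `w` at level `l-2` adjacent to both `c` and `d`, must have a
common successor. -/
lemma exists_common_succ
    (hconn : G.Connected)
    (hind : ∀ (i : ℕ) (w₁ w₂ : V), G.dist v w₁ = i → G.dist v w₂ = i → ¬ G.Adj w₁ w₂)
    (hKR : ∀ x y : V, x ≠ y → ¬G.Adj x y → ∑ w, A x w * A w y = 0)
    (hAadj : ∀ i j : V, i ≠ j → (A i j ≠ 0 ↔ G.Adj i j))
    (hsym : A.IsSymm)
    {l : ℕ} (hl : 2 ≤ l) {c d w z z' : V}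
    (hc : G.dist v c = l - 1) (hd : G.dist v d = l - 1) (hcd : c ≠ d)
    (hw : G.dist v w = l - 2) (hwc : G.Adj c w) (hwd : G.Adj d w)
    (hz : G.dist v z = l) (hz' : G.dist v z' = l) (hzz' : z ≠ z')
    (hzc : G.Adj z c) (hzd : G.Adj z d) (hz'c : G.Adj z' c) (hz'd : G.Adj z' d)
    (hzpred : ∀ y, G.Adj z y → G.dist v y = l - 1 → y = c ∨ y = d)
    (hz'pred : ∀ y, G.Adj z' y → G.dist v y = l - 1 → y = c ∨ y = d) :
    ∃ t, G.Adj z t ∧ G.Adj z' t ∧ G.dist v t = l + 1 := by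
  classical
  by_contra hno
  push_neg at hno
  -- anchor relation for z
  have hanchor : ∀ zz : V, G.dist v zz = l → G.Adj zz c → G.Adj zz d →
      (∀ y, G.Adj zz y → G.dist v y = l - 1 → y = c ∨ y = d) →
      A zz c * A c w + A zz d * A d w = 0 := by
    intro zz hzz hzzc hzzd hzzpred
    have hzw_ne : zz ≠ w := by intro h; rw [h, hw] at hzz; omega
    have hzw_nadj : ¬ G.Adj zz w := by
      intro hadj
      rcases adj_dist hconn hind hadj with h | h <;> (rw [hzz, hw] at h; omega)
    have h0 := hKR zz w hzw_ne hzw_nadj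
    rw [sum_eq_pair hcd (fun y => A zz y * A y w) ?_] at h0
    · exact h0
    · intro y hyc hyd
      show A zz y * A y w = 0
      rcases eq_or_ne y zz with rfl | hyzz
      · have hz0 : A y w = 0 := by
          by_contra hh
          exact hzw_nadj ((hAadj y w hzw_ne).mp hh)
        rw [hz0]; ring
      rcases eq_or_ne y w with rfl | hyw
      · have hz0 : A zz y = 0 := by
          by_contra hh
          exact hzw_nadj ((hAadj zz y hzw_ne).mp hh)
        rw [hz0]; ring
      by_cases hAzy : A zz y = 0
      · rw [hAzy]; ring
      by_cases hAyw : A y w = 0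
      · rw [hAyw]; ring
      exfalso
      have hadj1 : G.Adj zz y := (hAadj zz y (Ne.symm hyzz)).mp hAzy
      have hadj2 : G.Adj y w := (hAadj y w hyw).mp hAyw
      have hd1 := adj_dist hconn hind hadj1
      have hd2 := adj_dist hconn hind hadj2
      rw [hzz] at hd1
      rw [hw] at hd2
      have hyl : G.dist v y = l - 1 := by omega
      rcases hzzpred y hadj1 hyl with h | h
      · exact hyc h
      · exact hyd h
  have relz := hanchor z hz hzc hzd hzpred
  have relz' := hanchor z' hz' hz'c hz'd hz'pred
  -- the sum relation between z and z'
  have hnadj : ¬ G.Adj z z' := hind l z z' hz hz' 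
  have h0 := hKR z z' hzz' hnadj
  rw [sum_eq_pair hcd (fun y => A z y * A y z') ?_] at h0
  · -- contradiction by pair_algebra
    have e1 : A c z' = A z' c := hsym.apply z' c
    have e2 : A d z' = A z' d := hsym.apply z' d
    rw [e1, e2] at h0
    have hzcne : z ≠ c := by intro h; rw [h, hc] at hz; omega
    have hzdne : z ≠ d := by intro h; rw [h, hd] at hz; omega
    have hz'cne : z' ≠ c := by intro h; rw [h, hc] at hz'; omega
    have hz'dne : z' ≠ d := by intro h; rw [h, hd] at hz'; omega
    have hcwne : c ≠ w := by intro h; rw [h, hw] at hc; omega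
    have hdwne : d ≠ w := by intro h; rw [h, hw] at hd; omega
    exact pair_algebra ((hAadj z c hzcne).mpr hzc) ((hAadj z d hzdne).mpr hzd)
      ((hAadj z' c hz'cne).mpr hz'c) ((hAadj z' d hz'dne).mpr hz'd)
      ((hAadj c w hcwne).mpr hwc) ((hAadj d w hdwne).mpr hwd)
      relz relz' h0
  · intro y hyc hyd
    show A z y * A y z' = 0
    rcases eq_or_ne y z with rfl | hyz
    · have hz0 : A y z' = 0 := by
        by_contra hh
        exact hnadj ((hAadj y z' hzz').mp hh)
      rw [hz0]; ring
    rcases eq_or_ne y z' with rfl | hyz'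
    · have hz0 : A z y = 0 := by
        by_contra hh
        exact hnadj ((hAadj z y hzz').mp hh)
      rw [hz0]; ring
    by_cases hAzy : A z y = 0
    · rw [hAzy]; ring
    by_cases hAyz' : A y z' = 0
    · rw [hAyz']; ring
    exfalso
    have hadj1 : G.Adj z y := (hAadj z y (Ne.symm hyz)).mp hAzy
    have hadj2 : G.Adj y z' := (hAadj y z' hyz').mp hAyz'
    have hd1 := adj_dist hconn hind hadj1
    have hd2 := adj_dist hconn hind hadj2
    rw [hz] at hd1
    rw [hz'] at hd2
    have : G.dist v y = l - 1 ∨ G.dist v y = l + 1 := by omega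
    rcases this with hyl | hyl
    · rcases hzpred y hadj1 hyl with h | h
      · exact hyc h
      · exact hyd h
    · exact hno y hadj1 hadj2.symm hyl

end Helpers

section Core
variable {V : Type*} [Fintype V] [DecidableEq V] {G : SimpleGraph V} {v : V} {A : Matrix V V ℝ}

lemma pred_set_pair
    (hpred : ∀ i : ℕ, 2 ≤ i → i ≤ graphEccent G v → ∀ u : V, G.dist v u = i →
      {w : V | G.Adj u w ∧ G.dist v w = i - 1}.ncard = 2)
    {l : ℕ} (hl : 1 ≤ l) {t z z' : V} (ht : G.dist v t = l + 1)
    (hz : G.dist v z = l) (hz' : G.dist v z' = l) (hne : z ≠ z')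
    (h1 : G.Adj t z) (h2 : G.Adj t z') :
    ∀ y, G.Adj t y → G.dist v y = l → y = z ∨ y = z' := by
  have hcard := hpred (l+1) (by omega) (ht ▸ dist_le_ecc t) t ht
  have hsub : ({z, z'} : Set V) ⊆ {w | G.Adj t w ∧ G.dist v w = (l+1) - 1} := by
    rintro y (rfl | rfl)
    · exact ⟨h1, by omega⟩
    · exact ⟨h2, by omega⟩
  have heq : ({z, z'} : Set V) = {w | G.Adj t w ∧ G.dist v w = (l+1) - 1} :=
    Set.eq_of_subset_of_ncard_le hsub (by rw [hcard, Set.ncard_pair hne]) (Set.toFinite _)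
  intro y hadj hyl
  have hymem : y ∈ {w | G.Adj t w ∧ G.dist v w = (l+1) - 1} := ⟨hadj, by omega⟩
  rw [← heq] at hymem
  simpa using hymem

end Core

/-- A "triangle configuration" at level `l`: three vertices whose predecessor pairs
pairwise intersect in exactly one vertex. -/
def TriConfig {V : Type*} (G : SimpleGraph V) (v : V) (l : ℕ) : Prop :=
  ∃ z₁ z₂ z₃ p₁ p₂ p₃ : V,
    p₁ ≠ p₂ ∧ p₁ ≠ p₃ ∧ p₂ ≠ p₃ ∧
    G.dist v z₁ = l ∧ G.dist v z₂ = l ∧ G.dist v z₃ = l ∧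
    G.dist v p₁ = l - 1 ∧ G.dist v p₂ = l - 1 ∧ G.dist v p₃ = l - 1 ∧
    G.Adj z₁ p₂ ∧ G.Adj z₁ p₃ ∧ G.Adj z₂ p₁ ∧ G.Adj z₂ p₃ ∧ G.Adj z₃ p₁ ∧ G.Adj z₃ p₂ ∧
    (∀ y, G.Adj z₁ y → G.dist v y = l - 1 → y = p₂ ∨ y = p₃) ∧
    (∀ y, G.Adj z₂ y → G.dist v y = l - 1 → y = p₁ ∨ y = p₃) ∧
    (∀ y, G.Adj z₃ y → G.dist v y = l - 1 → y = p₁ ∨ y = p₂)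

section Core2
variable {V : Type*} [Fintype V] [DecidableEq V] {G : SimpleGraph V} {v : V} {A : Matrix V V ℝ}

lemma tri_step
    (hconn : G.Connected)
    (hind : ∀ (i : ℕ) (w₁ w₂ : V), G.dist v w₁ = i → G.dist v w₂ = i → ¬ G.Adj w₁ w₂)
    (hKR : ∀ x y : V, x ≠ y → ¬G.Adj x y → ∑ w, A x w * A w y = 0)
    (hAadj : ∀ i j : V, i ≠ j → (A i j ≠ 0 ↔ G.Adj i j))
    (hpred : ∀ i : ℕ, 2 ≤ i → i ≤ graphEccent G v → ∀ u : V, G.dist v u = i →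
      {w : V | G.Adj u w ∧ G.dist v w = i - 1}.ncard = 2)
    {l : ℕ} (hl : 2 ≤ l) (hcfg : TriConfig G v l) : TriConfig G v (l+1) := by
  classical
  obtain ⟨z₁, z₂, z₃, p₁, p₂, p₃, hp12, hp13, hp23, hz1, hz2, hz3, hq1, hq2, hq3,
    ha12, ha13, ha21, ha23, ha31, ha32, hch1, hch2, hch3⟩ := hcfg
  -- the three z's are pairwise distinct
  have hz12 : z₁ ≠ z₂ := by
    intro h
    rcases hch1 p₁ (h ▸ ha21) hq1 with hh | hh
    · exact hp12 hh
    · exact hp13 hh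
  have hz13 : z₁ ≠ z₃ := by
    intro h
    rcases hch1 p₁ (h ▸ ha31) hq1 with hh | hh
    · exact hp12 hh
    · exact hp13 hh
  have hz23 : z₂ ≠ z₃ := by
    intro h
    rcases hch2 p₂ (h ▸ ha32) hq2 with hh | hh
    · exact hp12 hh.symm
    · exact hp23 hh
  -- common successor finder
  have find : ∀ za zb q : V, G.dist v za = l → G.dist v zb = l → za ≠ zb →
      G.Adj za q → G.Adj zb q → G.dist v q = l - 1 →
      (∀ y, G.Adj za y → G.Adj zb y → G.dist v y = l - 1 → y = q) →
      ∃ t, G.Adj t za ∧ G.Adj t zb ∧ G.dist v t = l + 1 ∧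
        (∀ y, G.Adj t y → G.dist v y = l → y = za ∨ y = zb) := by
    intro za zb q hza hzb hne haq hbq hq hcomm
    have hnadj : ¬ G.Adj za zb := hind l za zb hza hzb
    have hex : ∃ t, G.Adj za t ∧ G.Adj zb t ∧ G.dist v t = l + 1 := by
      by_contra hno
      push_neg at hno
      have h0 := hKR za zb hne hnadj
      have hqa_ne : za ≠ q := by intro h; rw [h, hq] at hza; omega
      have hqb_ne : q ≠ zb := by intro h; rw [← h, hq] at hzb; omega
      rw [Finset.sum_eq_single_of_mem q (Finset.mem_univ q) ?_] at h0
      · exact (mul_ne_zero ((hAadj za q hqa_ne).mpr haq)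
          ((hAadj q zb hqb_ne).mpr hbq.symm)) h0
      · intro y _ hyq
        show A za y * A y zb = 0
        rcases eq_or_ne y za with rfl | hyza
        · have hz0 : A y zb = 0 := by
            by_contra hh
            exact hnadj ((hAadj y zb hne).mp hh)
          rw [hz0]; ring
        rcases eq_or_ne y zb with rfl | hyzb
        · have hz0 : A za y = 0 := by
            by_contra hh
            exact hnadj ((hAadj za y hne).mp hh)
          rw [hz0]; ring
        by_cases hA1 : A za y = 0
        · rw [hA1]; ring
        by_cases hA2 : A y zb = 0
        · rw [hA2]; ring
        exfalso
        have hadj1 : G.Adj za y := (hAadj za y (Ne.symm hyza)).mp hA1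
        have hadj2 : G.Adj y zb := (hAadj y zb hyzb).mp hA2
        have hd1 := adj_dist hconn hind hadj1
        have hd2 := adj_dist hconn hind hadj2
        rw [hza] at hd1
        rw [hzb] at hd2
        have : G.dist v y = l - 1 ∨ G.dist v y = l + 1 := by omega
        rcases this with hyl | hyl
        · exact hyq (hcomm y hadj1 hadj2.symm hyl)
        · exact hno y hadj1 hadj2.symm hyl
    obtain ⟨t, hta, htb, htl⟩ := hex
    exact ⟨t, hta.symm, htb.symm, htl,
      pred_set_pair hpred (by omega) htl hza hzb hne hta.symm htb.symm⟩
  -- apply to the three pairs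
  have hf12 : ∀ y, G.Adj z₁ y → G.Adj z₂ y → G.dist v y = l - 1 → y = p₃ := by
    intro y hy1 hy2 hyl
    rcases hch1 y hy1 hyl with rfl | rfl
    · rcases hch2 y hy2 hyl with hh | hh
      · exact absurd hh.symm hp12
      · exact hh
    · rfl
  have hf13 : ∀ y, G.Adj z₁ y → G.Adj z₃ y → G.dist v y = l - 1 → y = p₂ := by
    intro y hy1 hy3 hyl
    rcases hch1 y hy1 hyl with rfl | rfl
    · rfl
    · rcases hch3 y hy3 hyl with hh | hh
      · exact absurd hh.symm hp13
      · exact absurd hh.symm hp23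
  have hf23 : ∀ y, G.Adj z₂ y → G.Adj z₃ y → G.dist v y = l - 1 → y = p₁ := by
    intro y hy2 hy3 hyl
    rcases hch2 y hy2 hyl with rfl | rfl
    · rfl
    · rcases hch3 y hy3 hyl with hh | hh
      · exact hh
      · exact absurd hh.symm hp23
  obtain ⟨t12, ht12a, ht12b, ht12l, ht12ch⟩ :=
    find z₁ z₂ p₃ hz1 hz2 hz12 ha13 ha23 hq3 hf12
  obtain ⟨t13, ht13a, ht13b, ht13l, ht13ch⟩ :=
    find z₁ z₃ p₂ hz1 hz3 hz13 ha12 ha32 hq2 hf13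
  obtain ⟨t23, ht23a, ht23b, ht23l, ht23ch⟩ :=
    find z₂ z₃ p₁ hz2 hz3 hz23 ha21 ha31 hq1 hf23
  refine ⟨t23, t13, t12, z₁, z₂, z₃, hz12, hz13, hz23, ht23l, ht13l, ht12l,
    ?_, ?_, ?_, ht23a, ht23b, ht13a, ht13b, ht12a, ht12b, ?_, ?_, ?_⟩
  · simpa using hz1
  · simpa using hz2
  · simpa using hz3
  · intro y hy hyl
    exact ht23ch y hy (by simpa using hyl)
  · intro y hy hyl
    exact ht13ch y hy (by simpa using hyl)
  · intro y hy hyl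
    exact ht12ch y hy (by simpa using hyl)

lemma tri_false
    (hconn : G.Connected)
    (hind : ∀ (i : ℕ) (w₁ w₂ : V), G.dist v w₁ = i → G.dist v w₂ = i → ¬ G.Adj w₁ w₂)
    (hKR : ∀ x y : V, x ≠ y → ¬G.Adj x y → ∑ w, A x w * A w y = 0)
    (hAadj : ∀ i j : V, i ≠ j → (A i j ≠ 0 ↔ G.Adj i j))
    (hpred : ∀ i : ℕ, 2 ≤ i → i ≤ graphEccent G v → ∀ u : V, G.dist v u = i →
      {w : V | G.Adj u w ∧ G.dist v w = i - 1}.ncard = 2)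
    {l : ℕ} (hl : 2 ≤ l) (hcfg : TriConfig G v l) : False := by
  have key : ∀ n l', 2 ≤ l' → graphEccent G v + 1 ≤ l' + n → TriConfig G v l' → False := by
    intro n
    induction n with
    | zero =>
      intro l' _ hb hc
      obtain ⟨z₁, -, -, -, -, -, -, -, -, hz1, -⟩ := hc
      have := dist_le_ecc (G := G) (v := v) z₁
      omega
    | succ n ih =>
      intro l' hl' hb hc
      by_cases hcase : graphEccent G v + 1 ≤ l'
      · obtain ⟨z₁, -, -, -, -, -, -, -, -, hz1, -⟩ := hc
        have := dist_le_ecc (G := G) (v := v) z₁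
        omega
      · exact ih (l'+1) (by omega) (by omega)
          (tri_step hconn hind hKR hAadj hpred hl' hc)
  exact key (graphEccent G v + 1) l hl (by omega) hcfg

end Core2

lemma exists_pred {V : Type*} [Fintype V] [DecidableEq V] {G : SimpleGraph V} {v : V}
    (hconn : G.Connected) {z : V} (h1 : 1 ≤ G.dist v z) :
    ∃ w : V, G.Adj z w ∧ G.dist v w = G.dist v z - 1 := by
  obtain ⟨p, hp⟩ := (hconn v z).exists_walk_length_eq_dist
  have hq : p.reverse.length = G.dist v z := by rw [SimpleGraph.Walk.length_reverse]; exact hp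
  set q := p.reverse with hqdef
  clear_value q
  cases q with
  | nil => simp [SimpleGraph.dist_self] at h1
  | @cons _ w _ h q' =>
    refine ⟨w, h, ?_⟩
    have hlen : q'.length = G.dist v z - 1 := by
      simp only [SimpleGraph.Walk.length_cons] at hq; omega
    have hle : G.dist v w ≤ G.dist v z - 1 := by
      rw [← hlen]
      have := SimpleGraph.dist_le q'.reverse
      simpa [SimpleGraph.Walk.length_reverse] using this
    have hge : G.dist v z ≤ G.dist v w + 1 := by
      have := hconn.dist_triangle (u := v) (v := w) (w := z)
      have hd : G.dist w z = 1 := SimpleGraph.dist_eq_one_iff_adj.mpr h.symm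
      omega
    omega

end Aux

/-- Lemma (candles, part (a)). Let `G` be connected on `n ≥ 3` vertices with
`q(G) = 2`, and let `v` be a vertex of degree `2` such that every vertex in
`N_i(v)` for `2 ≤ i ≤ ε(v)` has exactly two predecessors, and every `N_i(v)` is
independent. If `G` contains an induced subgraph (on a vertex set `s`) isomorphic
to a double-ended candle with one end mapped to `v` and the other end mapped to a
vertex `u ∈ N_j(v)` with no successors, then this subgraph is all of `G`. -/
theorem stmt13 {V : Type*} [Fintype V] [DecidableEq V] (G : SimpleGraph V)
    (hconn : G.Connected) (hn : 3 ≤ Fintype.card V) (hq : qGraph G = 2)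
    (v : V) (hdeg : (G.neighborSet v).ncard = 2)
    (hpred : ∀ i : ℕ, 2 ≤ i → i ≤ graphEccent G v → ∀ u : V, G.dist v u = i →
      {w : V | G.Adj u w ∧ G.dist v w = i - 1}.ncard = 2)
    (hind : ∀ (i : ℕ) (w₁ w₂ : V), G.dist v w₁ = i → G.dist v w₂ = i → ¬ G.Adj w₁ w₂)
    (m : ℕ) (hm : 2 ≤ m) (s : Set V)
    (f : doubleCandle m ≃g G.induce s)
    (u : V) (j : ℕ) (hu : G.dist v u = j)
    (hend0 : ((f ⟨0, by omega⟩ : s) : V) = v)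
    (hendk : ((f ⟨2 * m - 1, by omega⟩ : s) : V) = u)
    (hnosucc : ¬ ∃ w : V, G.Adj u w ∧ G.dist v w = j + 1) :
    s = Set.univ := by
  classical
  obtain ⟨A, hASet, hKR⟩ := exists_quadratic_matrix G hq
  obtain ⟨hsym, hAadj⟩ := hASet
  have h2m : 0 < 2 * m := by omega
  set g : Fin (2 * m) → V := fun a => ((f a : s) : V) with hgdef
  have hginj : Function.Injective g := by
    intro a b hab
    exact f.toEquiv.injective (Subtype.coe_injective hab)
  have hgadj : ∀ a b : Fin (2 * m), G.Adj (g a) (g b) ↔ (doubleCandle m).Adj a b :=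
    fun a b => f.map_rel_iff
  set C : ℕ → V := fun k => if h : k < 2 * m then g ⟨k, h⟩ else v with hCfun
  have hCdef : ∀ k (h : k < 2 * m), C k = g ⟨k, h⟩ := fun k h => dif_pos h
  have hC0 : C 0 = v := by rw [hCdef 0 h2m]; exact hend0
  have hCu : C (2 * m - 1) = u := by rw [hCdef (2 * m - 1) (by omega)]; exact hendk
  have hCmem : ∀ k (h : k < 2 * m), C k ∈ s := by
    intro k h
    rw [hCdef k h]
    exact (f ⟨k, h⟩).2
  have hCne : ∀ k k' (hk : k < 2 * m) (hk' : k' < 2 * m), k ≠ k' → C k ≠ C k' := by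
    intro k k' hk hk' hne heq
    rw [hCdef k hk, hCdef k' hk'] at heq
    have := hginj heq
    rw [Fin.mk.injEq] at this
    exact hne this
  have hCadj : ∀ k k' (hk : k < 2 * m) (hk' : k' < 2 * m),
      (k + 1) / 2 + 1 = (k' + 1) / 2 → G.Adj (C k) (C k') := by
    intro k k' hk hk' hlev
    rw [hCdef k hk, hCdef k' hk', hgadj]
    rw [doubleCandle, SimpleGraph.fromRel_adj]
    refine ⟨?_, Or.inl hlev⟩
    intro heq
    rw [Fin.mk.injEq] at heq
    omega
  -- distance upper bound along the candle
  have hdistle : ∀ k, ∀ _ : k < 2 * m, G.dist v (C k) ≤ (k + 1) / 2 := by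
    intro k
    induction k using Nat.strong_induction_on with
    | _ k ihk =>
      intro hk
      rcases Nat.eq_zero_or_pos k with rfl | hkpos
      · rw [hC0, SimpleGraph.dist_self]
      rcases Nat.lt_or_ge k 3 with h3 | h3
      · have hadj := hCadj 0 k h2m hk (by omega)
        have hd1 : G.dist v (C k) = 1 := by
          rw [← hC0]
          exact SimpleGraph.dist_eq_one_iff_adj.mpr hadj
        omega
      · have hadj := hCadj (k - 2) k (by omega) hk (by omega)
        have hle := ihk (k - 2) (by omega) (by omega)
        have htri := hconn.dist_triangle (u := v) (v := C (k - 2)) (w := C k)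
        have hd1 : G.dist (C (k - 2)) (C k) = 1 := SimpleGraph.dist_eq_one_iff_adj.mpr hadj
        omega
  -- main level characterization for 1 ≤ l ≤ m - 1
  have main : ∀ l, 1 ≤ l → l ≤ m - 1 → ∀ x : V,
      G.dist v x = l ↔ (x = C (2 * l - 1) ∨ x = C (2 * l)) := by
    intro l
    induction l using Nat.strong_induction_on with
    | _ l ih =>
      intro hl1 hlm
      have hb1 : 2 * l - 1 < 2 * m := by omega
      have hb2 : 2 * l < 2 * m := by omega
      -- the two candle vertices at level l are at distance exactly l
      have hcand : ∀ k, (k = 2 * l - 1 ∨ k = 2 * l) → G.dist v (C k) = l := by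
        intro k hk
        have hkb : k < 2 * m := by omega
        have hup : G.dist v (C k) ≤ l := by
          have := hdistle k hkb
          rcases hk with rfl | rfl <;> omega
        by_contra hnel
        have hlt : G.dist v (C k) < l := by omega
        rcases Nat.eq_zero_or_pos (G.dist v (C k)) with ht0 | htpos
        · have hveq : v = C k := (hconn.dist_eq_zero_iff).mp ht0
          exact hCne 0 k h2m hkb (by omega) (by rw [hC0]; exact hveq)
        · have hch := (ih (G.dist v (C k)) hlt htpos (by omega) (C k)).mp rfl
          rcases hch with heq | heq
          · exact hCne k (2 * (G.dist v (C k)) - 1) hkb (by omega) (by omega) heq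
          · exact hCne k (2 * (G.dist v (C k))) hkb (by omega) (by omega) heq
      intro x
      constructor
      · intro hx
        by_contra hxor
        push_neg at hxor
        obtain ⟨hx1, hx2⟩ := hxor
        rcases Nat.lt_or_ge l 2 with hl2 | hl2
        · -- l = 1
          have hl1' : l = 1 := by omega
          have e1 : 2 * l - 1 = 1 := by omega
          have e2 : 2 * l = 2 := by omega
          rw [e1] at hx1
          rw [e2] at hx2
          have hadjvx : G.Adj v x := by
            rw [← SimpleGraph.dist_eq_one_iff_adj]
            omega
          have hc1 : G.Adj v (C 1) := by
            rw [← hC0]; exact hCadj 0 1 h2m (by omega) (by omega)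
          have hc2 : G.Adj v (C 2) := by
            rw [← hC0]; exact hCadj 0 2 h2m (by omega) (by omega)
          have hne12 : C 1 ≠ C 2 := hCne 1 2 (by omega) (by omega) (by omega)
          have hsub : ({C 1, C 2} : Set V) ⊆ G.neighborSet v := by
            rintro y (rfl | rfl)
            · exact hc1
            · exact hc2
          have heq : ({C 1, C 2} : Set V) = G.neighborSet v :=
            Set.eq_of_subset_of_ncard_le hsub
              (by rw [hdeg, Set.ncard_pair hne12]) (Set.toFinite _)
          have hxmem : x ∈ G.neighborSet v := hadjvx
          rw [← heq] at hxmem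
          rcases hxmem with rfl | rfl
          · exact hx1 rfl
          · exact hx2 rfl
        · -- l ≥ 2
          have hprev := ih (l - 1) (by omega) (by omega) (by omega)
          have hcp : G.dist v (C (2 * (l - 1) - 1)) = l - 1 :=
            (hprev _).mpr (Or.inl rfl)
          have hdp : G.dist v (C (2 * (l - 1))) = l - 1 :=
            (hprev _).mpr (Or.inr rfl)
          have hcpdp : C (2 * (l - 1) - 1) ≠ C (2 * (l - 1)) :=
            hCne _ _ (by omega) (by omega) (by omega)
          -- predecessor characterization at level l
          have predchar : ∀ z, G.dist v z = l →
              G.Adj z (C (2 * (l - 1) - 1)) ∧ G.Adj z (C (2 * (l - 1))) ∧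
              ∀ y, G.Adj z y → G.dist v y = l - 1 →
                y = C (2 * (l - 1) - 1) ∨ y = C (2 * (l - 1)) := by
            intro z hz
            have hcard := hpred l hl2 (hz ▸ dist_le_ecc z) z hz
            have hsub : {w | G.Adj z w ∧ G.dist v w = l - 1} ⊆
                ({C (2 * (l - 1) - 1), C (2 * (l - 1))} : Set V) := by
              rintro y ⟨hy1, hy2⟩
              rcases (hprev y).mp hy2 with rfl | rfl
              · exact Set.mem_insert _ _
              · exact Set.mem_insert_of_mem _ rfl
            have heq : {w | G.Adj z w ∧ G.dist v w = l - 1} =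
                ({C (2 * (l - 1) - 1), C (2 * (l - 1))} : Set V) := by
              apply Set.eq_of_subset_of_ncard_le hsub ?_ (Set.toFinite _)
              rw [hcard]
              exact le_of_eq (Set.ncard_pair hcpdp)
            have hmem1 : C (2 * (l - 1) - 1) ∈ {w | G.Adj z w ∧ G.dist v w = l - 1} := by
              rw [heq]; exact Set.mem_insert _ _
            have hmem2 : C (2 * (l - 1)) ∈ {w | G.Adj z w ∧ G.dist v w = l - 1} := by
              rw [heq]; exact Set.mem_insert_of_mem _ rfl
            refine ⟨hmem1.1, hmem2.1, fun y hy1 hy2 => ?_⟩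
            have : y ∈ {w | G.Adj z w ∧ G.dist v w = l - 1} := ⟨hy1, hy2⟩
            rw [heq] at this
            simpa using this
          have hcl : G.dist v (C (2 * l - 1)) = l := hcand _ (Or.inl rfl)
          have hdl : G.dist v (C (2 * l)) = l := hcand _ (Or.inr rfl)
          obtain ⟨pcx1, pcx2, pcx3⟩ := predchar x hx
          obtain ⟨pcc1, pcc2, pcc3⟩ := predchar _ hcl
          obtain ⟨pcd1, pcd2, pcd3⟩ := predchar _ hdl
          -- anchor
          have hanchor : ∃ w, G.dist v w = l - 2 ∧
              G.Adj (C (2 * (l - 1) - 1)) w ∧ G.Adj (C (2 * (l - 1))) w := by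
            rcases Nat.lt_or_ge l 3 with h3 | h3
            · refine ⟨v, by rw [SimpleGraph.dist_self]; omega, ?_, ?_⟩
              · rw [← hC0]
                exact (hCadj 0 (2 * (l - 1) - 1) h2m (by omega) (by omega)).symm
              · rw [← hC0]
                exact (hCadj 0 (2 * (l - 1)) h2m (by omega) (by omega)).symm
            · have hprev2 := ih (l - 2) (by omega) (by omega) (by omega)
              refine ⟨C (2 * (l - 2)), (hprev2 _).mpr (Or.inr rfl), ?_, ?_⟩
              · exact (hCadj (2 * (l - 2)) (2 * (l - 1) - 1) (by omega) (by omega)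
                  (by omega)).symm
              · exact (hCadj (2 * (l - 2)) (2 * (l - 1)) (by omega) (by omega)
                  (by omega)).symm
          obtain ⟨w, hwid, hwcp, hwdp⟩ := hanchor
          have hxcl : x ≠ C (2 * l - 1) := hx1
          have hxdl : x ≠ C (2 * l) := hx2
          have hcldl : C (2 * l - 1) ≠ C (2 * l) := hCne _ _ hb1 hb2 (by omega)
          -- three common successors
          obtain ⟨t1, ht1a, ht1b, ht1l⟩ :=
            exists_common_succ hconn hind hKR hAadj hsym hl2 hcp hdp hcpdp hwid hwcp hwdp
              hcl hdl hcldl pcc1 pcc2 pcd1 pcd2 pcc3 pcd3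
          obtain ⟨t2, ht2a, ht2b, ht2l⟩ :=
            exists_common_succ hconn hind hKR hAadj hsym hl2 hcp hdp hcpdp hwid hwcp hwdp
              hx hdl hxdl pcx1 pcx2 pcd1 pcd2 pcx3 pcd3
          obtain ⟨t3, ht3a, ht3b, ht3l⟩ :=
            exists_common_succ hconn hind hKR hAadj hsym hl2 hcp hdp hcpdp hwid hwcp hwdp
              hx hcl hxcl pcx1 pcx2 pcc1 pcc2 pcx3 pcc3
          have hch1 := pred_set_pair hpred (by omega : 1 ≤ l) ht1l hcl hdl hcldl
            ht1a.symm ht1b.symm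
          have hch2 := pred_set_pair hpred (by omega : 1 ≤ l) ht2l hx hdl hxdl
            ht2a.symm ht2b.symm
          have hch3 := pred_set_pair hpred (by omega : 1 ≤ l) ht3l hx hcl hxcl
            ht3a.symm ht3b.symm
          refine tri_false hconn hind hKR hAadj hpred (by omega : 2 ≤ l + 1)
            ⟨t1, t2, t3, x, C (2 * l - 1), C (2 * l), hxcl, hxdl, hcldl,
              ht1l, ht2l, ht3l,
              by rw [Nat.add_sub_cancel]; exact hx,
              by rw [Nat.add_sub_cancel]; exact hcl,
              by rw [Nat.add_sub_cancel]; exact hdl,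
              ht1a.symm, ht1b.symm, ht2a.symm, ht2b.symm, ht3a.symm, ht3b.symm,
              fun y hy hyl => hch1 y hy (by rwa [Nat.add_sub_cancel] at hyl),
              fun y hy hyl => hch2 y hy (by rwa [Nat.add_sub_cancel] at hyl),
              fun y hy hyl => hch3 y hy (by rwa [Nat.add_sub_cancel] at hyl)⟩
      · intro hx
        rcases hx with rfl | rfl
        · exact hcand _ (Or.inl rfl)
        · exact hcand _ (Or.inr rfl)
  -- u is at distance m
  have humem : G.dist v u = m := by
    rw [← hCu]
    have hup : G.dist v (C (2 * m - 1)) ≤ m := by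
      have := hdistle (2 * m - 1) (by omega)
      omega
    by_contra hnel
    have hlt : G.dist v (C (2 * m - 1)) < m := by omega
    rcases Nat.eq_zero_or_pos (G.dist v (C (2 * m - 1))) with ht0 | htpos
    · have hveq : v = C (2 * m - 1) := (hconn.dist_eq_zero_iff).mp ht0
      exact hCne 0 (2 * m - 1) h2m (by omega) (by omega) (by rw [hC0]; exact hveq)
    · have hch := (main (G.dist v (C (2 * m - 1))) htpos (by omega) (C (2 * m - 1))).mp rfl
      rcases hch with heq | heq
      · exact hCne (2 * m - 1) (2 * (G.dist v (C (2 * m - 1))) - 1) (by omega) (by omega)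
          (by omega) heq
      · exact hCne (2 * m - 1) (2 * (G.dist v (C (2 * m - 1)))) (by omega) (by omega)
          (by omega) heq
  have hjm : j = m := by omega
  -- level m contains only u
  have hm_char : ∀ x, G.dist v x = m → x = u := by
    intro x hx
    by_contra hxu
    have hprev := main (m - 1) (by omega) (by omega)
    have hcp : G.dist v (C (2 * (m - 1) - 1)) = m - 1 := (hprev _).mpr (Or.inl rfl)
    have hdp : G.dist v (C (2 * (m - 1))) = m - 1 := (hprev _).mpr (Or.inr rfl)
    have hcpdp : C (2 * (m - 1) - 1) ≠ C (2 * (m - 1)) :=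
      hCne _ _ (by omega) (by omega) (by omega)
    have predchar : ∀ z, G.dist v z = m →
        G.Adj z (C (2 * (m - 1) - 1)) ∧ G.Adj z (C (2 * (m - 1))) ∧
        ∀ y, G.Adj z y → G.dist v y = m - 1 →
          y = C (2 * (m - 1) - 1) ∨ y = C (2 * (m - 1)) := by
      intro z hz
      have hcard := hpred m hm (hz ▸ dist_le_ecc z) z hz
      have hsub : {w | G.Adj z w ∧ G.dist v w = m - 1} ⊆
          ({C (2 * (m - 1) - 1), C (2 * (m - 1))} : Set V) := by
        rintro y ⟨hy1, hy2⟩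
        rcases (hprev y).mp hy2 with rfl | rfl
        · exact Set.mem_insert _ _
        · exact Set.mem_insert_of_mem _ rfl
      have heq : {w | G.Adj z w ∧ G.dist v w = m - 1} =
          ({C (2 * (m - 1) - 1), C (2 * (m - 1))} : Set V) := by
        apply Set.eq_of_subset_of_ncard_le hsub ?_ (Set.toFinite _)
        rw [hcard]
        exact le_of_eq (Set.ncard_pair hcpdp)
      have hmem1 : C (2 * (m - 1) - 1) ∈ {w | G.Adj z w ∧ G.dist v w = m - 1} := by
        rw [heq]; exact Set.mem_insert _ _
      have hmem2 : C (2 * (m - 1)) ∈ {w | G.Adj z w ∧ G.dist v w = m - 1} := by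
        rw [heq]; exact Set.mem_insert_of_mem _ rfl
      refine ⟨hmem1.1, hmem2.1, fun y hy1 hy2 => ?_⟩
      have : y ∈ {w | G.Adj z w ∧ G.dist v w = m - 1} := ⟨hy1, hy2⟩
      rw [heq] at this
      simpa using this
    obtain ⟨pcx1, pcx2, pcx3⟩ := predchar x hx
    obtain ⟨pcu1, pcu2, pcu3⟩ := predchar u humem
    have hanchor : ∃ w, G.dist v w = m - 2 ∧
        G.Adj (C (2 * (m - 1) - 1)) w ∧ G.Adj (C (2 * (m - 1))) w := by
      rcases Nat.lt_or_ge m 3 with h3 | h3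
      · refine ⟨v, by rw [SimpleGraph.dist_self]; omega, ?_, ?_⟩
        · rw [← hC0]
          exact (hCadj 0 (2 * (m - 1) - 1) h2m (by omega) (by omega)).symm
        · rw [← hC0]
          exact (hCadj 0 (2 * (m - 1)) h2m (by omega) (by omega)).symm
      · have hprev2 := main (m - 2) (by omega) (by omega)
        refine ⟨C (2 * (m - 2)), (hprev2 _).mpr (Or.inr rfl), ?_, ?_⟩
        · exact (hCadj (2 * (m - 2)) (2 * (m - 1) - 1) (by omega) (by omega)
            (by omega)).symm
        · exact (hCadj (2 * (m - 2)) (2 * (m - 1)) (by omega) (by omega)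
            (by omega)).symm
    obtain ⟨w, hwid, hwcp, hwdp⟩ := hanchor
    obtain ⟨t, hta, htb, htl⟩ :=
      exists_common_succ hconn hind hKR hAadj hsym hm hcp hdp hcpdp hwid hwcp hwdp
        hx humem hxu pcx1 pcx2 pcu1 pcu2 pcx3 pcu3
    exact hnosucc ⟨t, htb, by omega⟩
  -- all vertices are within distance m
  have hdistall : ∀ x : V, G.dist v x ≤ m := by
    have key : ∀ k, ∀ x : V, G.dist v x = k → k ≤ m := by
      intro k
      induction k using Nat.strong_induction_on with
      | _ k ihk =>
        intro x hx
        by_contra hk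
        obtain ⟨wp, hadjp, hwp⟩ := exists_pred hconn (by omega : 1 ≤ G.dist v x)
        rw [hx] at hwp
        rcases Nat.lt_or_ge k (m + 2) with hk2 | hk2
        · -- k = m + 1
          have hkm1 : k = m + 1 := by omega
          have hwpm : G.dist v wp = m := by omega
          have := hm_char wp hwpm
          subst this
          exact hnosucc ⟨x, hadjp.symm, by omega⟩
        · have := ihk (k - 1) (by omega) wp hwp
          omega
    intro x
    exact key _ x rfl
  -- conclude
  ext x
  simp only [Set.mem_univ, iff_true]
  have hxle := hdistall x
  rcases Nat.eq_zero_or_pos (G.dist v x) with ht0 | htpos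
  · have hveq : v = x := (hconn.dist_eq_zero_iff).mp ht0
    rw [← hveq, ← hC0]
    exact hCmem 0 h2m
  rcases Nat.lt_or_ge (G.dist v x) m with hlt | hge
  · rcases (main (G.dist v x) htpos (by omega) x).mp rfl with heq | heq
    · rw [heq]; exact hCmem _ (by omega)
    · rw [heq]; exact hCmem _ (by omega)
  · have hxm : G.dist v x = m := by omega
    rw [hm_char x hxm, ← hCu]
    exact hCmem _ (by omega)
end
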